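/- arXiv:2311.17803 — 3 statements merged into one kernel-verified Lean document; each statement's English description precedes it below -/
import Mathlib

section
/- Let Sk(v) be an indecomposable admissible component of the root groupoid. If the C-linear span of pi_S has nonempty intersection with Delta_is, then the C-linear span of pi_S equals the C-linear span of Sigma_v. -/
open scoped ComplexOrder

attribute [local instance] Classical.propDecidable

namespace KMS

noncomputable section

variable (X : Type*) [Fintype X] (H : Type*) [AddCommGroup H] [Module ℂ H]

/-- A root datum: maps `a : X → h`, `b : X → h*`, parity `p`, with `a`, `b`
linearly independent families (the "injectivity" of the induced maps from the span of `X`). -/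
structure RootDatum where
  a : X → H
  b : X → Module.Dual ℂ H
  p : X → ZMod 2
  lin_indep_a : LinearIndependent ℂ a
  lin_indep_b : LinearIndependent ℂ b

variable {X H}

/-- The Cartan matrix entry `a^v_{xy} = ⟨a_v(x), b_v(y)⟩`. -/
def cartan (v : RootDatum X H) (x y : X) : ℂ := v.b y (v.a x)

/-- `x` is reflectable at `v`. -/
def Reflectable (v : RootDatum X H) (x : X) : Prop :=
  (cartan v x x = 0 ∧ v.p x = 1) ∨
  (cartan v x x ≠ 0 ∧ v.p x = 0 ∧
    ∀ y, y ≠ x → ∃ n : ℕ, 2 * cartan v x y / cartan v x x = -(n : ℂ)) ∨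
  (cartan v x x ≠ 0 ∧ v.p x = 1 ∧
    ∀ y, y ≠ x → ∃ n : ℕ, cartan v x y / cartan v x x = -(n : ℂ))

/-- The anisotropic reflexion `r_x : v → v'`. -/
def IsAnisoReflexion (x : X) (v v' : RootDatum X H) : Prop :=
  Reflectable v x ∧ cartan v x x ≠ 0 ∧ v'.p = v.p ∧
  (∀ y, v'.a y = v.a y - (2 * cartan v y x / cartan v x x) • v.a x) ∧
  (∀ y, v'.b y = v.b y - (2 * cartan v x y / cartan v x x) • v.b x)

/-- The isotropic reflexion `r_x : v → v'`. -/
def IsIsoReflexion (x : X) (v v' : RootDatum X H) : Prop :=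
  Reflectable v x ∧ cartan v x x = 0 ∧
  v'.a x = -v.a x ∧ v'.b x = -v.b x ∧ v'.p x = v.p x ∧
  ∀ y, y ≠ x →
    (cartan v x y = 0 → v'.a y = v.a y ∧ v'.b y = v.b y ∧ v'.p y = v.p y) ∧
    (cartan v x y ≠ 0 →
      v'.a y = v.a y + (cartan v y x / cartan v x y) • v.a x ∧
      v'.b y = v.b y + v.b x ∧ v'.p y = v.p y + 1)

/-- A reflexion is either anisotropic or isotropic. -/
def IsReflexion (x : X) (v v' : RootDatum X H) : Prop :=
  IsAnisoReflexion x v v' ∨ IsIsoReflexion x v v'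

/-- A path of reflexions from `v` to `u`, recorded by the ordered list of its marks. -/
inductive IsPath : RootDatum X H → List X → RootDatum X H → Prop
  | nil (v : RootDatum X H) : IsPath v [] v
  | cons {v v' u : RootDatum X H} {x : X} {ms : List X} :
      IsReflexion x v v' → IsPath v' ms u → IsPath v (x :: ms) u

/-- A path of isotropic reflexions from `v` to `u`. -/
inductive IsIsoPath : RootDatum X H → List X → RootDatum X H → Prop
  | nil (v : RootDatum X H) : IsIsoPath v [] v
  | cons {v v' u : RootDatum X H} {x : X} {ms : List X} :
      IsIsoReflexion x v v' → IsIsoPath v' ms u → IsIsoPath v (x :: ms) u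

/-- The skeleton `Sk(v)`. -/
def Skeleton (v : RootDatum X H) : Set (RootDatum X H) := {u | ∃ ms : List X, IsPath v ms u}

/-- The spine `Sp(v)`. -/
def Spine (v : RootDatum X H) : Set (RootDatum X H) := {u | ∃ ms : List X, IsIsoPath v ms u}

/-- Admissibility of the component of `v`. -/
def Admissible (v : RootDatum X H) : Prop :=
  ∀ u ∈ Skeleton v, ∀ x, Reflectable u x → ∀ y, cartan u x y = 0 → cartan u y x = 0

/-- Full reflectability of the component of `v`. -/
def FullyReflectable (v : RootDatum X H) : Prop :=
  ∀ u ∈ Skeleton v, ∀ x, Reflectable u x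

/-- Anisotropic real roots. -/
def DeltaAn (v : RootDatum X H) : Set (Module.Dual ℂ H) :=
  {α | ∃ u x, u ∈ Skeleton v ∧ Reflectable u x ∧ cartan u x x ≠ 0 ∧ u.b x = α}

/-- Isotropic real roots. -/
def DeltaIs (v : RootDatum X H) : Set (Module.Dual ℂ H) :=
  {α | ∃ u x, u ∈ Skeleton v ∧ Reflectable u x ∧ cartan u x x = 0 ∧ u.b x = α}

/-- The coroot `α^∨ = (2 / a^u_{xx}) a_u(x)` of an anisotropic real root
(independent of the choice of presentation). -/
def coroot (v : RootDatum X H) (α : Module.Dual ℂ H) : H :=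
  if h : ∃ u x, u ∈ Skeleton v ∧ Reflectable u x ∧ cartan u x x ≠ 0 ∧ u.b x = α then
    (2 / cartan h.choose h.choose_spec.choose h.choose_spec.choose) •
      h.choose.a h.choose_spec.choose
  else 0

/-- The parity `p(α)` of an anisotropic real root. -/
def rootParity (v : RootDatum X H) (α : Module.Dual ℂ H) : ZMod 2 :=
  if h : ∃ u x, u ∈ Skeleton v ∧ Reflectable u x ∧ cartan u x x ≠ 0 ∧ u.b x = α then
    h.choose.p h.choose_spec.choose
  else 0

/-- Principal roots: anisotropic simple roots at vertices of the spine. -/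
def SigmaPr (v : RootDatum X H) : Set (Module.Dual ℂ H) :=
  {α | ∃ u x, u ∈ Spine v ∧ Reflectable u x ∧ cartan u x x ≠ 0 ∧ u.b x = α}

/-- The set `π`: even principal roots together with doubles of odd principal roots. -/
def piSet (v : RootDatum X H) : Set (Module.Dual ℂ H) :=
  {α | α ∈ SigmaPr v ∧ rootParity v α = 0} ∪
  {β | ∃ α ∈ SigmaPr v, rootParity v α = 1 ∧ β = (2 : ℂ) • α}

/-- The coroot of an element of `π` (with `(2α)^∨ = α^∨ / 2` for odd principal `α`). -/
def piCoroot (v : RootDatum X H) (β : Module.Dual ℂ H) : H :=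
  if β ∈ SigmaPr v then coroot v β else (2 : ℂ)⁻¹ • coroot v ((2 : ℂ)⁻¹ • β)

/-- The Weyl group: the subgroup of `GL(h^*)` generated by the reflections
`s_α : λ ↦ λ - ⟨α^∨, λ⟩ α` for `α ∈ Δ_an`. -/
def WeylGroup (v : RootDatum X H) :
    Subgroup (Module.Dual ℂ H ≃ₗ[ℂ] Module.Dual ℂ H) :=
  Subgroup.closure
    {w | ∃ α ∈ DeltaAn v, ∀ lam : Module.Dual ℂ H, w lam = lam - lam (coroot v α) • α}

/-- `Q^+_u`: nonnegative integral combinations of the simple roots at `u`. -/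
def QPlus (u : RootDatum X H) : Set (Module.Dual ℂ H) :=
  {μ | ∃ k : X → ℕ, μ = ∑ x, (k x : ℂ) • u.b x}

/-- `Q_u`: integral combinations of the simple roots at `u`. -/
def QLattice (u : RootDatum X H) : Set (Module.Dual ℂ H) :=
  {μ | ∃ k : X → ℤ, μ = ∑ x, (k x : ℂ) • u.b x}

/-- The convex cone of finite nonnegative real combinations of elements of `S`. -/
def coneR {M : Type*} [AddCommGroup M] [Module ℝ M] (S : Set M) : Set M :=
  {μ | ∃ (T : Finset M) (c : M → ℝ), ↑T ⊆ S ∧ (∀ m, 0 ≤ c m) ∧ μ = ∑ m ∈ T, c m • m}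

/-- The totally positive cone `Q^{++}_ℝ`. -/
def QppR (v : RootDatum X H) : Set (Module.Dual ℂ H) :=
  ⋂ u ∈ Skeleton v, coneR (Set.range u.b)

/-- Indecomposability of a square matrix. -/
def IsIndecMatrix {Y : Type*} [Fintype Y] (A : Y → Y → ℂ) : Prop :=
  Fintype.card Y = 1 ∨
  ∃ (s : ℕ) (e : Fin s ≃ Y), ∀ j : Fin s,
    A (e j) (e ⟨(j.1 + 1) % s, Nat.mod_lt _ j.pos⟩) ≠ 0

/-- Indecomposability of the component of `v`. -/
def IndecComp (v : RootDatum X H) : Prop :=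
  ∀ u ∈ Spine v, IsIndecMatrix (cartan u)

/-- The Cartan matrix at `v` as a matrix. -/
def cartanMatrix (v : RootDatum X H) : Matrix X X ℂ := Matrix.of fun x y => cartan v x y

/-- A Kac-Moody component: fully reflectable, admissible and `dim h = |X| + corank A^v`. -/
def IsKacMoodyComp (v : RootDatum X H) : Prop :=
  FullyReflectable v ∧ Admissible v ∧
  Module.finrank ℂ H = Fintype.card X + (Fintype.card X - (cartanMatrix v).rank)

/-- Type (Aff): the real span of `Q^{++}_ℝ` is one-dimensional. -/
def TypeAff (v : RootDatum X H) : Prop :=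
  Module.finrank ℝ (Submodule.span ℝ (QppR v)) = 1

/-- The set `π_S` of `S`-principal elements. -/
def piS (v : RootDatum X H) : Set (Module.Dual ℂ H) :=
  {α | ∃ u x, u ∈ Spine v ∧
    ((u.p x = 0 ∧ α = u.b x) ∨ (u.p x = 1 ∧ cartan u x x ≠ 0 ∧ α = (2 : ℂ) • u.b x))}

/-- `D`-equivalence of Cartan data. -/
def DEquivTo (u v : RootDatum X H) : Prop :=
  u.p = v.p ∧ ∃ D : X → ℂ, (∀ x, D x ≠ 0) ∧ ∀ x y, cartan u x y = D x * cartan v x y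

/-- `Sk^D(v)`. -/
def SkD (v : RootDatum X H) : Set (RootDatum X H) := {u | u ∈ Skeleton v ∧ DEquivTo u v}

/-- `Sp^D(v)`. -/
def SpD (v : RootDatum X H) : Set (RootDatum X H) := {u | u ∈ Spine v ∧ DEquivTo u v}

/-- `StarRel v u₁ u₂ u₃` says `u₁ * u₂ = u₃`, i.e. `σ^{u₁}(u₂) = u₃`: some path from `v`
ends at `u₂` and its namesake path from `u₁` ends at `u₃`. -/
def StarRel (v u₁ u₂ u₃ : RootDatum X H) : Prop :=
  ∃ ms : List X, IsPath v ms u₂ ∧ IsPath u₁ ms u₃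

/-- `u` is the vertex `w·v` for `w` in the Weyl group. -/
def VertexOf (v : RootDatum X H) (w : Module.Dual ℂ H ≃ₗ[ℂ] Module.Dual ℂ H)
    (u : RootDatum X H) : Prop :=
  u ∈ Skeleton v ∧ ∀ x, u.b x = w (v.b x)

end

/-! ### Auxiliary development for STATEMENT 0 -/

noncomputable section Aux

variable {X : Type*} [Fintype X] {H : Type*} [AddCommGroup H] [Module ℂ H]

set_option linter.unusedSectionVars false

/-- Prepend: if a reflexion leads from `v` to `v'`, skeleta nest. -/
lemma isPath_trans {v w u : RootDatum X H} {ms ns : List X}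
    (h1 : IsPath v ms w) (h2 : IsPath w ns u) : IsPath v (ms ++ ns) u := by
  induction h1 with
  | nil v => simpa using h2
  | cons hr hp ih => exact IsPath.cons hr (ih h2)

lemma isIsoPath_trans {v w u : RootDatum X H} {ms ns : List X}
    (h1 : IsIsoPath v ms w) (h2 : IsIsoPath w ns u) : IsIsoPath v (ms ++ ns) u := by
  induction h1 with
  | nil v => simpa using h2
  | cons hr hp ih => exact IsIsoPath.cons hr (ih h2)

lemma isIsoPath_isPath {v u : RootDatum X H} {ms : List X}
    (h : IsIsoPath v ms u) : IsPath v ms u := by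
  induction h with
  | nil v => exact IsPath.nil v
  | cons hr hp ih => exact IsPath.cons (Or.inr hr) ih

lemma self_mem_spine (v : RootDatum X H) : v ∈ Spine v := ⟨[], IsIsoPath.nil v⟩

lemma spine_subset_skeleton (v : RootDatum X H) : Spine v ⊆ Skeleton v :=
  fun _ ⟨ms, h⟩ => ⟨ms, isIsoPath_isPath h⟩

lemma spine_step {v u u' : RootDatum X H} {x : X} (hu : u ∈ Spine v)
    (h : IsIsoReflexion x u u') : u' ∈ Spine v := by
  obtain ⟨ms, hp⟩ := hu
  exact ⟨ms ++ [x], isIsoPath_trans hp (IsIsoPath.cons h (IsIsoPath.nil u'))⟩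

/-- Linear independence is preserved by the unimodular transformation
`f y ↦ f y + d y • f x` with `d x = -2`. -/
lemma linearIndependent_shift {W : Type*} [AddCommGroup W] [Module ℂ W]
    {f : X → W} (hf : LinearIndependent ℂ f) (x : X) (d : X → ℂ) (hdx : d x = -2) :
    LinearIndependent ℂ (fun y => f y + d y • f x) := by
  rw [Fintype.linearIndependent_iff] at hf ⊢
  intro g hg
  have key : ∑ y, (g y + (if y = x then ∑ t, g t * d t else 0)) • f y = 0 := by
    rw [show ∑ y, (g y + (if y = x then ∑ t, g t * d t else 0)) • f y
        = ∑ y, g y • f y + ∑ y, (if y = x then ∑ t, g t * d t else 0) • f y by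
      rw [← Finset.sum_add_distrib]; exact Finset.sum_congr rfl (by intros; rw [add_smul])]
    simp only [ite_smul, zero_smul]
    rw [Finset.sum_ite_eq' Finset.univ x (fun y => (∑ t, g t * d t) • f y)]
    simp only [Finset.mem_univ, if_pos]
    have : ∑ y, g y • (f y + d y • f x) = ∑ y, g y • f y + (∑ t, g t * d t) • f x := by
      rw [Finset.sum_smul, ← Finset.sum_add_distrib]
      exact Finset.sum_congr rfl (by intros y _; rw [smul_add, smul_smul])
    rw [← this, hg]
  have hz := hf _ key
  have hne : ∀ y, y ≠ x → g y = 0 := by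
    intro y hy
    have := hz y
    simpa [hy] using this
  intro i
  by_cases hi : i = x
  · subst hi
    have hsum : ∑ t, g t * d t = g i * d i :=
      Finset.sum_eq_single i (fun t _ ht => by rw [hne t ht, zero_mul]) (by simp)
    have := hz i
    rw [if_pos rfl, hsum, hdx] at this
    have : g i + g i * (-2) = 0 := this
    linear_combination -this
  · exact hne i hi

/-- coefficient for the `a`-side of the isotropic reflexion at `x`. -/
def acoef (u : RootDatum X H) (x y : X) : ℂ :=
  if y = x then -2 else cartan u y x / cartan u x y

/-- coefficient for the `b`-side of the isotropic reflexion at `x`. -/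
def bcoef (u : RootDatum X H) (x y : X) : ℂ :=
  if y = x then -2 else if cartan u x y = 0 then 0 else 1

/-- The explicit isotropic reflexion of a root datum at `x`. -/
def isoReflect (u : RootDatum X H) (x : X) : RootDatum X H where
  a y := u.a y + acoef u x y • u.a x
  b y := u.b y + bcoef u x y • u.b x
  p y := if y = x then u.p x else u.p y + if cartan u x y = 0 then 0 else 1
  lin_indep_a := linearIndependent_shift u.lin_indep_a x _ (by simp [acoef])
  lin_indep_b := linearIndependent_shift u.lin_indep_b x _ (by simp [bcoef])

lemma isoReflect_a (u : RootDatum X H) (x y : X) :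
    (isoReflect u x).a y = u.a y + acoef u x y • u.a x := rfl

lemma isoReflect_b (u : RootDatum X H) (x y : X) :
    (isoReflect u x).b y = u.b y + bcoef u x y • u.b x := rfl

lemma isoReflect_p (u : RootDatum X H) (x y : X) :
    (isoReflect u x).p y = if y = x then u.p x else u.p y + if cartan u x y = 0 then 0 else 1 := rfl

/-- Generic cartan formula for any datum of "shifted" shape. -/
lemma cartan_shift (u u' : RootDatum X H) (x : X) (α β : X → ℂ)
    (ha : ∀ y, u'.a y = u.a y + α y • u.a x) (hb : ∀ y, u'.b y = u.b y + β y • u.b x)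
    (y h : X) :
    cartan u' y h = cartan u y h + β h * cartan u y x + α y * cartan u x h
      + α y * β h * cartan u x x := by
  simp only [cartan, ha, hb, map_add, map_smul, smul_eq_mul, LinearMap.add_apply, LinearMap.smul_apply]
  ring

lemma cartan_isoReflect (u : RootDatum X H) (x y h : X) :
    cartan (isoReflect u x) y h = cartan u y h + bcoef u x h * cartan u y x
      + acoef u x y * cartan u x h + acoef u x y * bcoef u x h * cartan u x x :=
  cartan_shift u _ x _ _ (isoReflect_a u x) (isoReflect_b u x) y h

lemma neg_of_shift {M : Type*} [AddCommGroup M] [Module ℂ M] (w : M) :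
    w + (-2 : ℂ) • w = -w := by
  nth_rewrite 1 [← one_smul ℂ w]
  rw [← add_smul]
  norm_num [neg_smul, one_smul]

/-- `isoReflect` really is an isotropic reflexion. -/
lemma isoReflect_isIsoReflexion (u : RootDatum X H) (x : X)
    (hp : u.p x = 1) (hc : cartan u x x = 0) :
    IsIsoReflexion x u (isoReflect u x) := by
  refine ⟨Or.inl ⟨hc, hp⟩, hc, ?_, ?_, ?_, ?_⟩
  · rw [isoReflect_a, acoef, if_pos rfl]; exact neg_of_shift _
  · rw [isoReflect_b, bcoef, if_pos rfl]; exact neg_of_shift _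
  · rw [isoReflect_p, if_pos rfl]
  · intro y hy
    constructor
    · intro h0
      refine ⟨?_, ?_, ?_⟩
      · rw [isoReflect_a, acoef, if_neg hy, h0, div_zero, zero_smul, add_zero]
      · rw [isoReflect_b, bcoef, if_neg hy, if_pos h0, zero_smul, add_zero]
      · rw [isoReflect_p, if_neg hy, if_pos h0, add_zero]
    · intro h0
      refine ⟨?_, ?_, ?_⟩
      · rw [isoReflect_a, acoef, if_neg hy]
      · rw [isoReflect_b, bcoef, if_neg hy, if_neg h0, one_smul]
      · rw [isoReflect_p, if_neg hy, if_neg h0]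

end Aux
noncomputable section Aux2

variable {X : Type*} [Fintype X] {H : Type*} [AddCommGroup H] [Module ℂ H]

set_option linter.unusedSectionVars false

/-- Good simple roots at spine vertices lie in the span of `π_S`. -/
lemma good_mem_span {v u : RootDatum X H} (hu : u ∈ Spine v) {y : X}
    (h : u.p y = 0 ∨ (u.p y = 1 ∧ cartan u y y ≠ 0)) :
    u.b y ∈ Submodule.span ℂ (piS v) := by
  rcases h with hp0 | hodd
  · exact Submodule.subset_span ⟨u, y, hu, Or.inl ⟨hp0, rfl⟩⟩
  · have h2' : (2 : ℂ) • u.b y ∈ Submodule.span ℂ (piS v) :=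
      Submodule.subset_span ⟨u, y, hu, Or.inr ⟨hodd.1, hodd.2, rfl⟩⟩
    have := Submodule.smul_mem (Submodule.span ℂ (piS v)) ((2 : ℂ)⁻¹) h2'
    rwa [smul_smul, inv_mul_cancel₀ (by norm_num : (2:ℂ) ≠ 0), one_smul] at this

/-- ZMod 2 exhaustion. -/
lemma zmod2_cases (t : ZMod 2) : t = 0 ∨ t = 1 := by revert t; decide

lemma zmod2_one_add_one : (1 : ZMod 2) + 1 = 0 := by decide

/-- Symmetrized adjacency at a root datum. -/
def RDAdj (w : RootDatum X H) (y h : X) : Prop := cartan w y h ≠ 0 ∨ cartan w h y ≠ 0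

/-- Reachability in `n` steps. -/
inductive ReachN (w : RootDatum X H) (x : X) : ℕ → X → Prop
  | zero : ReachN w x 0 x
  | succ {n : ℕ} {k z : X} : ReachN w x n k → RDAdj w k z → ReachN w x (n + 1) z

/-- at an isotropic (hence reflectable) vertex `z`, adjacency gives `cartan w z k ≠ 0`. -/
lemma cartan_ne_of_adj {v w : RootDatum X H} (hadm : Admissible v) (hw : w ∈ Skeleton v)
    {z k : X} (hz : w.p z = 1 ∧ cartan w z z = 0) (hadj : RDAdj w k z) :
    cartan w z k ≠ 0 := by
  intro h0
  have hrefl : Reflectable w z := Or.inl ⟨hz.2, hz.1⟩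
  have := hadm w hw z hrefl k h0
  rcases hadj with h | h
  · exact h this
  · exact h h0

lemma not_adj_iff {v w : RootDatum X H} (hadm : Admissible v) (hw : w ∈ Skeleton v)
    {z k : X} (hz : w.p z = 1 ∧ cartan w z z = 0) (hnadj : ¬ RDAdj w k z) :
    cartan w z k = 0 ∧ cartan w k z = 0 := by
  rw [RDAdj] at hnadj
  push_neg at hnadj
  exact ⟨hnadj.2, hnadj.1⟩

/-- Facts about `isoReflect w z` at a vertex `k` adjacent to `z` (`cartan w z k ≠ 0`). -/
lemma isoReflect_nbr_b {w : RootDatum X H} {z k : X} (hk : k ≠ z)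
    (hc : cartan w z k ≠ 0) : (isoReflect w z).b k = w.b k + w.b z := by
  rw [isoReflect_b, bcoef, if_neg hk, if_neg hc, one_smul]

lemma isoReflect_nbr_p {w : RootDatum X H} {z k : X} (hk : k ≠ z)
    (hc : cartan w z k ≠ 0) : (isoReflect w z).p k = w.p k + 1 := by
  rw [isoReflect_p, if_neg hk, if_neg hc]

lemma isoReflect_nbr_cartan_diag {w : RootDatum X H} {z k : X} (hk : k ≠ z)
    (hzz : cartan w z z = 0) (hc : cartan w z k ≠ 0) :
    cartan (isoReflect w z) k k = cartan w k k + 2 * cartan w k z := by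
  rw [cartan_isoReflect, bcoef, acoef, if_neg hk, if_neg hk, if_neg hc, hzz]
  field_simp
  ring

/-- Vertices not adjacent to `z` are untouched. -/
lemma isoReflect_far_b {w : RootDatum X H} {z y : X} (hy : y ≠ z)
    (h1 : cartan w z y = 0) : (isoReflect w z).b y = w.b y := by
  rw [isoReflect_b, bcoef, if_neg hy, if_pos h1, zero_smul, add_zero]

lemma isoReflect_far_p {w : RootDatum X H} {z y : X} (hy : y ≠ z)
    (h1 : cartan w z y = 0) : (isoReflect w z).p y = w.p y := by
  rw [isoReflect_p, if_neg hy, if_pos h1, add_zero]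

/-- cartan values `c_{y h}` and `c_{h y}` are preserved when `y` is not adjacent to `z`. -/
lemma isoReflect_far_cartan₁ {w : RootDatum X H} {z y : X} (hy : y ≠ z)
    (h1 : cartan w z y = 0) (h2 : cartan w y z = 0) (h : X) :
    cartan (isoReflect w z) y h = cartan w y h := by
  rw [cartan_isoReflect, acoef, if_neg hy, h2, zero_div]
  ring

lemma isoReflect_far_cartan₂ {w : RootDatum X H} {z y : X} (hy : y ≠ z)
    (h1 : cartan w z y = 0) (h2 : cartan w y z = 0) (h : X) :
    cartan (isoReflect w z) h y = cartan w h y := by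
  rw [cartan_isoReflect, bcoef, if_neg hy, if_pos h1, h1]
  ring

/-- An isotropic vertex adjacent to an isotropic vertex whose root lies in `V`
has its root in `V` as well ("hot adjacency"). -/
lemma hot_adj {v w : RootDatum X H} (hadm : Admissible v) (hw : w ∈ Spine v)
    {x z : X} (hx : w.p x = 1 ∧ cartan w x x = 0) (hbx : w.b x ∈ Submodule.span ℂ (piS v))
    (hz : w.p z = 1 ∧ cartan w z z = 0) (hadj : RDAdj w x z) :
    w.b z ∈ Submodule.span ℂ (piS v) := by
  have hxz : cartan w x z ≠ 0 := by
    rcases hadj with h | h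
    · exact h
    · intro h0
      exact h (hadm w (spine_subset_skeleton v hw) x (Or.inl ⟨hx.2, hx.1⟩) z h0)
  have hzx : z ≠ x := by rintro rfl; exact hxz hx.2
  have hw' : isoReflect w x ∈ Spine v :=
    spine_step hw (isoReflect_isIsoReflexion w x hx.1 hx.2)
  have hb' : (isoReflect w x).b z = w.b z + w.b x := isoReflect_nbr_b hzx hxz
  have hp' : (isoReflect w x).p z = 0 := by
    rw [isoReflect_nbr_p hzx hxz, hz.1, zmod2_one_add_one]
  have hmem : (isoReflect w x).b z ∈ Submodule.span ℂ (piS v) :=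
    good_mem_span hw' (Or.inl hp')
  rw [hb'] at hmem
  have := Submodule.sub_mem _ hmem hbx
  simpa using this

/-- Crossing from a good neighbour `k` into an isotropic vertex `z`. -/
lemma good_cross {v w : RootDatum X H} (hadm : Admissible v) (hw : w ∈ Spine v)
    {z k : X} (hz : w.p z = 1 ∧ cartan w z z = 0) (hadj : RDAdj w k z)
    (hgood : ¬ (w.p k = 1 ∧ cartan w k k = 0))
    (hns : ¬ (w.p k = 0 ∧ cartan w k k + 2 * cartan w k z = 0)) :
    w.b z ∈ Submodule.span ℂ (piS v) := by
  have hzk : cartan w z k ≠ 0 := cartan_ne_of_adj hadm (spine_subset_skeleton v hw) hz hadj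
  have hkz : k ≠ z := by rintro rfl; exact hzk hz.2
  have hw' : isoReflect w z ∈ Spine v :=
    spine_step hw (isoReflect_isIsoReflexion w z hz.1 hz.2)
  have hb' : (isoReflect w z).b k = w.b k + w.b z := isoReflect_nbr_b hkz hzk
  have hp' : (isoReflect w z).p k = w.p k + 1 := isoReflect_nbr_p hkz hzk
  have hcd : cartan (isoReflect w z) k k = cartan w k k + 2 * cartan w k z :=
    isoReflect_nbr_cartan_diag hkz hz.2 hzk
  have hbk : w.b k ∈ Submodule.span ℂ (piS v) := by
    rcases zmod2_cases (w.p k) with h0 | h1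
    · exact good_mem_span hw (Or.inl h0)
    · refine good_mem_span hw (Or.inr ⟨h1, ?_⟩)
      intro hc; exact hgood ⟨h1, hc⟩
  have hmem : (isoReflect w z).b k ∈ Submodule.span ℂ (piS v) := by
    rcases zmod2_cases (w.p k) with h0 | h1
    · -- k even: at the reflected vertex it is odd with nonzero self-pairing
      refine good_mem_span hw' (Or.inr ⟨?_, ?_⟩)
      · rw [hp', h0, zero_add]
      · rw [hcd]; intro hcc; exact hns ⟨h0, hcc⟩
    · -- k odd good: at the reflected vertex it is even
      refine good_mem_span hw' (Or.inl ?_)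
      rw [hp', h1, zmod2_one_add_one]
  rw [hb'] at hmem
  have := Submodule.sub_mem _ hmem hbk
  simpa using this

end Aux2
noncomputable section Aux3

variable {X : Type*} [Fintype X] {H : Type*} [AddCommGroup H] [Module ℂ H]

set_option linter.unusedSectionVars false
set_option linter.unusedVariables false

/-- Transfer of reachability to the reflected datum, given minimality w.r.t. `z`. -/
lemma reach_transfer {v w : RootDatum X H} (hadm : Admissible v) (hw : w ∈ Spine v)
    {x z : X} (hz : w.p z = 1 ∧ cartan w z z = 0) {d : ℕ}
    (hminz : ∀ m ≤ d, ¬ ReachN w x m z) :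
    ∀ {n : ℕ} {y : X}, ReachN w x n y → n ≤ d → ReachN (isoReflect w z) x n y := by
  intro n y hr
  induction hr with
  | zero => intro _; exact ReachN.zero
  | @succ n k y hk hadj ih =>
    intro hn
    have hkz : k ≠ z := by
      rintro rfl
      exact hminz n (le_of_lt (Nat.lt_of_succ_le hn)) hk
    have hknadj : ¬ RDAdj w k z := by
      intro hadjz
      exact hminz (n + 1) hn (ReachN.succ hk hadjz)
    obtain ⟨hc1, hc2⟩ := not_adj_iff hadm (spine_subset_skeleton v hw) hz hknadj
    have ih' := ih (le_of_lt (Nat.lt_of_succ_le hn))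
    refine ReachN.succ ih' ?_
    rcases hadj with h | h
    · exact Or.inl (by rwa [isoReflect_far_cartan₁ hkz hc1 hc2])
    · exact Or.inr (by rwa [isoReflect_far_cartan₂ hkz hc1 hc2])

/-- Main propagation: if `x` is a "hot" isotropic vertex at a spine datum `w`
(i.e. `b x ∈ span π_S`), then the root of every isotropic vertex reachable from `x`
lies in `span π_S`. -/
lemma main_prop {v : RootDatum X H} (hadm : Admissible v) :
    ∀ d : ℕ, ∀ w : RootDatum X H, w ∈ Spine v → ∀ x z : X,
      (w.p x = 1 ∧ cartan w x x = 0) → w.b x ∈ Submodule.span ℂ (piS v) →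
      (w.p z = 1 ∧ cartan w z z = 0) →
      ReachN w x d z → (∀ d' < d, ¬ ReachN w x d' z) →
      w.b z ∈ Submodule.span ℂ (piS v) := by
  intro d
  induction d using Nat.strong_induction_on with
  | _ d IH =>
  intro w hw x z hx hbx hz hreach hmin
  match d, hreach with
  | 0, ReachN.zero => exact hbx
  | (n+1), ReachN.succ (k := k) hk hadj =>
    -- `k` is the penultimate vertex
    by_cases hkiso : w.p k = 1 ∧ cartan w k k = 0
    · -- k isotropic: get b k ∈ V by IH (with minimality for k), then hot adjacency
      have hminek : ∀ m < n, ¬ ReachN w x m k := by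
        intro m hm hrk
        exact hmin (m + 1) (Nat.succ_lt_succ hm) (ReachN.succ hrk hadj)
      have hbk : w.b k ∈ Submodule.span ℂ (piS v) :=
        IH n (Nat.lt_succ_self n) w hw x k hx hbx hkiso hk hminek
      exact hot_adj hadm hw hkiso hbk hz hadj
    · -- k good
      have hbk : w.b k ∈ Submodule.span ℂ (piS v) := by
        rcases zmod2_cases (w.p k) with h0 | h1
        · exact good_mem_span hw (Or.inl h0)
        · exact good_mem_span hw (Or.inr ⟨h1, fun hc => hkiso ⟨h1, hc⟩⟩)
      by_cases hstuck : w.p k = 0 ∧ cartan w k k + 2 * cartan w k z = 0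
      · -- the stuck case: reflect at z, k becomes isotropic, recurse at the new datum
        have hzk : cartan w z k ≠ 0 :=
          cartan_ne_of_adj hadm (spine_subset_skeleton v hw) hz hadj
        have hkz : k ≠ z := by rintro rfl; exact hzk hz.2
        have hxz : x ≠ z := by
          rintro rfl
          exact hmin 0 (Nat.succ_pos n) ReachN.zero
        have hxnadj : ¬ RDAdj w x z := by
          intro hadjx
          have hn1 : 0 < n := by
            rcases Nat.eq_zero_or_pos n with h | h
            · subst h
              -- then k = x, but k is good and x isotropic
              cases hk
              exact absurd hx hkiso
            · exact h
          exact hmin 1 (Nat.succ_lt_succ hn1) (ReachN.succ ReachN.zero hadjx)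
        obtain ⟨hczx, hcxz⟩ :=
          not_adj_iff hadm (spine_subset_skeleton v hw) hz hxnadj
        set w' := isoReflect w z with hw'def
        have hw' : w' ∈ Spine v := spine_step hw (isoReflect_isIsoReflexion w z hz.1 hz.2)
        -- x is still hot at w'
        have hx' : w'.p x = 1 ∧ cartan w' x x = 0 := by
          constructor
          · rw [hw'def, isoReflect_far_p hxz hczx]; exact hx.1
          · rw [hw'def, isoReflect_far_cartan₁ hxz hczx hcxz]; exact hx.2
        have hbx' : w'.b x ∈ Submodule.span ℂ (piS v) := by
          rw [hw'def, isoReflect_far_b hxz hczx]; exact hbx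
        -- k is isotropic at w'
        have hk' : w'.p k = 1 ∧ cartan w' k k = 0 := by
          constructor
          · rw [hw'def, isoReflect_nbr_p hkz hzk, hstuck.1, zero_add]
          · rw [hw'def, isoReflect_nbr_cartan_diag hkz hz.2 hzk, hstuck.2]
        -- transfer reachability
        have hminz : ∀ m ≤ n, ¬ ReachN w x m z := fun m hm =>
          hmin m (Nat.lt_succ_of_le hm)
        have hreach' : ReachN w' x n k :=
          reach_transfer hadm hw hz hminz hk (le_refl n)
        -- minimal distance at w'
        have hne : ∃ m, ReachN w' x m k := ⟨n, hreach'⟩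
        classical
        let dm := Nat.find hne
        have hdm : ReachN w' x dm k := Nat.find_spec hne
        have hdmmin : ∀ m < dm, ¬ ReachN w' x m k := fun m hm => Nat.find_min hne hm
        have hdmle : dm ≤ n := Nat.find_le hreach'
        have hbk' : w'.b k ∈ Submodule.span ℂ (piS v) :=
          IH dm (Nat.lt_succ_of_le hdmle) w' hw' x k hx' hbx' hk' hdm hdmmin
        have hb'k : w'.b k = w.b k + w.b z := isoReflect_nbr_b hkz hzk
        rw [hb'k] at hbk'
        have := Submodule.sub_mem _ hbk' hbk
        simpa using this
      · exact good_cross hadm hw hz hadj hkiso hstuck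

end Aux3
noncomputable section Aux4

variable {X : Type*} [Fintype X] {H : Type*} [AddCommGroup H] [Module ℂ H]

set_option linter.unusedSectionVars false
set_option linter.unusedVariables false

/-- From the Hamiltonian-cycle form of indecomposability, any two elements
are connected. -/
lemma reach_of_indec {w : RootDatum X H} (hind : IsIndecMatrix (cartan w)) (x z : X) :
    ∃ n, ReachN w x n z := by
  rcases hind with hcard | ⟨s, e, he⟩
  · obtain ⟨a, ha⟩ := Fintype.card_eq_one_iff.mp hcard
    have : x = z := (ha x).trans (ha z).symm
    subst this
    exact ⟨0, ReachN.zero⟩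
  · have hs : 0 < s := by
      rcases Nat.eq_zero_or_pos s with h | h
      · subst h; exact (e.symm x).elim0
      · exact h
    set i₀ : Fin s := e.symm x with hi₀
    have key : ∀ n : ℕ, ReachN w x n (e ⟨(i₀.1 + n) % s, Nat.mod_lt _ hs⟩) := by
      intro n
      induction n with
      | zero =>
        have : (⟨(i₀.1 + 0) % s, Nat.mod_lt _ hs⟩ : Fin s) = i₀ := by
          apply Fin.ext
          simp [Nat.mod_eq_of_lt i₀.2]
        rw [this, hi₀, Equiv.apply_symm_apply]
        exact ReachN.zero
      | succ n ih =>
        refine ReachN.succ ih (Or.inl ?_)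
        have hmod : ((i₀.1 + n) % s + 1) % s = (i₀.1 + (n + 1)) % s := by
          rw [Nat.mod_add_mod, ← Nat.add_assoc]
        have := he ⟨(i₀.1 + n) % s, Nat.mod_lt _ hs⟩
        convert this using 3
        exact Fin.ext hmod.symm
    set j : Fin s := e.symm z with hj
    refine ⟨s - i₀.1 + j.1, ?_⟩
    have harith : (i₀.1 + (s - i₀.1 + j.1)) % s = j.1 := by
      have h1 : i₀.1 + (s - i₀.1 + j.1) = s + j.1 := by
        have := i₀.2
        omega
      rw [h1, Nat.add_mod_left, Nat.mod_eq_of_lt j.2]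
    have := key (s - i₀.1 + j.1)
    have heq : (⟨(i₀.1 + (s - i₀.1 + j.1)) % s, Nat.mod_lt _ hs⟩ : Fin s) = j :=
      Fin.ext harith
    rw [heq, hj, Equiv.apply_symm_apply] at this
    exact this

/-- One (abstract) isotropic reflexion step preserves the span of the simple roots. -/
lemma span_step {u u' : RootDatum X H} {t : X} (h : IsIsoReflexion t u u') :
    Submodule.span ℂ (Set.range u'.b) = Submodule.span ℂ (Set.range u.b) := by
  obtain ⟨hrefl, hcxx, hax, hbx, hpx, hy⟩ := h
  apply le_antisymm
  · rw [Submodule.span_le]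
    rintro _ ⟨y, rfl⟩
    by_cases hyx : y = t
    · subst hyx
      rw [hbx]
      exact Submodule.neg_mem _ (Submodule.subset_span ⟨y, rfl⟩)
    · by_cases hc : cartan u t y = 0
      · rw [((hy y hyx).1 hc).2.1]
        exact Submodule.subset_span ⟨y, rfl⟩
      · rw [((hy y hyx).2 hc).2.1]
        exact Submodule.add_mem _ (Submodule.subset_span ⟨y, rfl⟩)
          (Submodule.subset_span ⟨t, rfl⟩)
  · rw [Submodule.span_le]
    rintro _ ⟨y, rfl⟩
    by_cases hyx : y = t
    · subst hyx
      have : u.b y = -u'.b y := by rw [hbx, neg_neg]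
      rw [this]
      exact Submodule.neg_mem _ (Submodule.subset_span ⟨y, rfl⟩)
    · by_cases hc : cartan u t y = 0
      · rw [← ((hy y hyx).1 hc).2.1]
        exact Submodule.subset_span ⟨y, rfl⟩
      · have h1 : u.b y = u'.b y + u'.b t := by
          rw [((hy y hyx).2 hc).2.1, hbx]
          abel
        rw [h1]
        exact Submodule.add_mem _ (Submodule.subset_span ⟨y, rfl⟩)
          (Submodule.subset_span ⟨t, rfl⟩)

/-- The span of the simple roots is constant along the spine. -/
lemma span_spine {v u : RootDatum X H} (hu : u ∈ Spine v) :
    Submodule.span ℂ (Set.range u.b) = Submodule.span ℂ (Set.range v.b) := by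
  obtain ⟨ms, hp⟩ := hu
  induction hp with
  | nil w => rfl
  | cons hr hp ih => rw [ih, span_step hr]

end Aux4
noncomputable section Aux5

variable {X : Type*} [Fintype X] {H : Type*} [AddCommGroup H] [Module ℂ H]

set_option linter.unusedSectionVars false
set_option linter.unusedVariables false

lemma reflectable_iso_p {u : RootDatum X H} {t : X} (hr : Reflectable u t)
    (hc : cartan u t t = 0) : u.p t = 1 := by
  rcases hr with ⟨_, h⟩ | ⟨h, _⟩ | ⟨h, _⟩
  · exact h
  · exact absurd hc h
  · exact absurd hc h

/-- Unified formulas for an abstract isotropic reflexion. -/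
lemma isoReflexion_b_eq {u u' : RootDatum X H} {t : X} (h : IsIsoReflexion t u u') (y : X) :
    u'.b y = u.b y + bcoef u t y • u.b t := by
  obtain ⟨hrefl, hcxx, hax, hbx, hpx, hy⟩ := h
  by_cases hyt : y = t
  · subst hyt
    rw [hbx, bcoef, if_pos rfl, neg_of_shift]
  · by_cases hc : cartan u t y = 0
    · rw [((hy y hyt).1 hc).2.1, bcoef, if_neg hyt, if_pos hc, zero_smul, add_zero]
    · rw [((hy y hyt).2 hc).2.1, bcoef, if_neg hyt, if_neg hc, one_smul]

lemma isoReflexion_a_eq {u u' : RootDatum X H} {t : X} (h : IsIsoReflexion t u u') (y : X) :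
    u'.a y = u.a y + acoef u t y • u.a t := by
  obtain ⟨hrefl, hcxx, hax, hbx, hpx, hy⟩ := h
  by_cases hyt : y = t
  · subst hyt
    rw [hax, acoef, if_pos rfl, neg_of_shift]
  · by_cases hc : cartan u t y = 0
    · rw [((hy y hyt).1 hc).1, acoef, if_neg hyt, hc, div_zero, zero_smul, add_zero]
    · rw [((hy y hyt).2 hc).1, acoef, if_neg hyt]

lemma isoReflexion_p_eq {u u' : RootDatum X H} {t : X} (h : IsIsoReflexion t u u') (y : X) :
    u'.p y = if y = t then u.p t else u.p y + if cartan u t y = 0 then 0 else 1 := by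
  obtain ⟨hrefl, hcxx, hax, hbx, hpx, hy⟩ := h
  by_cases hyt : y = t
  · subst hyt; rw [if_pos rfl, hpx]
  · by_cases hc : cartan u t y = 0
    · rw [if_neg hyt, if_pos hc, ((hy y hyt).1 hc).2.2, add_zero]
    · rw [if_neg hyt, if_neg hc, ((hy y hyt).2 hc).2.2]

lemma isoReflexion_cartan_eq {u u' : RootDatum X H} {t : X} (h : IsIsoReflexion t u u')
    (y z : X) :
    cartan u' y z = cartan u y z + bcoef u t z * cartan u y t
      + acoef u t y * cartan u t z + acoef u t y * bcoef u t z * cartan u t t :=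
  cartan_shift u u' t _ _ (isoReflexion_a_eq h) (isoReflexion_b_eq h) y z

/-- The reflection `λ ↦ λ - ((2 / c_xx) λ(a x)) • b x` as a linear map. -/
def reflMapL (u : RootDatum X H) (x : X) :
    Module.Dual ℂ H →ₗ[ℂ] Module.Dual ℂ H :=
  LinearMap.id - (((2 / cartan u x x) • (Module.Dual.eval ℂ H (u.a x))).smulRight (u.b x))

lemma reflMapL_apply (u : RootDatum X H) (x : X) (lam : Module.Dual ℂ H) :
    reflMapL u x lam = lam - ((2 / cartan u x x) * lam (u.a x)) • u.b x := by
  simp [reflMapL, LinearMap.smulRight_apply, LinearMap.smul_apply]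

lemma reflMapL_invol {u : RootDatum X H} {x : X} (hc : cartan u x x ≠ 0)
    (lam : Module.Dual ℂ H) : reflMapL u x (reflMapL u x lam) = lam := by
  rw [reflMapL_apply, reflMapL_apply]
  have hbax : (u.b x) (u.a x) = cartan u x x := rfl
  rw [LinearMap.sub_apply, LinearMap.smul_apply, hbax, smul_eq_mul]
  have hμ : (2 / cartan u x x) * (lam (u.a x) - 2 / cartan u x x * lam (u.a x) * cartan u x x)
      = -((2 / cartan u x x) * lam (u.a x)) := by
    field_simp
    ring
  rw [hμ, neg_smul, sub_neg_eq_add, sub_add_cancel]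

/-- The reflection as a linear equivalence (it is an involution). -/
def reflEquiv (u : RootDatum X H) (x : X) (hc : cartan u x x ≠ 0) :
    Module.Dual ℂ H ≃ₗ[ℂ] Module.Dual ℂ H :=
  LinearEquiv.ofLinear (reflMapL u x) (reflMapL u x)
    (by
      apply LinearMap.ext; intro lam
      simp only [LinearMap.comp_apply, LinearMap.id_apply]
      exact reflMapL_invol hc lam)
    (by
      apply LinearMap.ext; intro lam
      simp only [LinearMap.comp_apply, LinearMap.id_apply]
      exact reflMapL_invol hc lam)

lemma reflEquiv_apply (u : RootDatum X H) (x : X) (hc : cartan u x x ≠ 0)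
    (lam : Module.Dual ℂ H) : reflEquiv u x hc lam = reflMapL u x lam := rfl

lemma reflEquiv_symm_apply (u : RootDatum X H) (x : X) (hc : cartan u x x ≠ 0)
    (lam : Module.Dual ℂ H) : (reflEquiv u x hc).symm lam = reflMapL u x lam := rfl

/-- The relation: `u` is obtained from a spine vertex `u₀` by a linear automorphism `W`
of the dual space which preserves `span π_S`, the Cartan matrix and the parities. -/
def SpineRel (v u : RootDatum X H) : Prop :=
  ∃ u₀, u₀ ∈ Spine v ∧ ∃ W : Module.Dual ℂ H ≃ₗ[ℂ] Module.Dual ℂ H,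
    (∀ y, u.b y = W (u₀.b y)) ∧ (∀ y z, cartan u y z = cartan u₀ y z) ∧
    (∀ y, u.p y = u₀.p y) ∧
    (∀ s ∈ Submodule.span ℂ (piS v), W s ∈ Submodule.span ℂ (piS v)) ∧
    (∀ s ∈ Submodule.span ℂ (piS v), W.symm s ∈ Submodule.span ℂ (piS v))

lemma spineRel_self (v : RootDatum X H) : SpineRel v v :=
  ⟨v, self_mem_spine v, LinearEquiv.refl ℂ _, fun _ => rfl, fun _ _ => rfl, fun _ => rfl,
    fun s hs => hs, fun s hs => hs⟩

/-- One reflexion step preserves `SpineRel`. -/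
lemma spineRel_step {v u₁ u₂ : RootDatum X H} {t : X} (hrel : SpineRel v u₁)
    (hr : IsReflexion t u₁ u₂) : SpineRel v u₂ := by
  obtain ⟨u₀, hu₀, W, hb, hc, hp, hWs, hWs'⟩ := hrel
  rcases hr with haniso | hiso
  · -- anisotropic step
    obtain ⟨hrefl, hcxx, hp2, ha2, hb2⟩ := haniso
    have hcxx0 : cartan u₀ t t ≠ 0 := by rw [← hc]; exact hcxx
    refine ⟨u₀, hu₀, W.trans (reflEquiv u₁ t hcxx), ?_, ?_, ?_, ?_, ?_⟩
    · intro y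
      rw [LinearEquiv.trans_apply, ← hb, reflEquiv_apply, reflMapL_apply, hb2]
      have : (u₁.b y) (u₁.a t) = cartan u₁ t y := rfl
      rw [this]
      congr 1
      ring
    · intro y z
      rw [← hc]
      have e1 : u₂.b z (u₂.a y) = cartan u₂ y z := rfl
      rw [← e1, hb2, ha2]
      simp only [LinearMap.sub_apply, LinearMap.smul_apply, map_sub, map_smul, smul_eq_mul]
      have e2 : (u₁.b z) (u₁.a y) = cartan u₁ y z := rfl
      have e3 : (u₁.b z) (u₁.a t) = cartan u₁ t z := rfl
      have e4 : (u₁.b t) (u₁.a y) = cartan u₁ y t := rfl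
      have e5 : (u₁.b t) (u₁.a t) = cartan u₁ t t := rfl
      rw [e2, e3, e4, e5]
      field_simp
      ring
    · intro y; rw [hp2]; exact hp y
    · intro s hs
      rw [LinearEquiv.trans_apply, reflEquiv_apply, reflMapL_apply]
      have hbt : u₁.b t ∈ Submodule.span ℂ (piS v) := by
        rw [hb t]
        apply hWs
        rcases zmod2_cases (u₀.p t) with h0 | h1
        · exact good_mem_span hu₀ (Or.inl h0)
        · exact good_mem_span hu₀ (Or.inr ⟨h1, hcxx0⟩)
      exact Submodule.sub_mem _ (hWs s hs) (Submodule.smul_mem _ _ hbt)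
    · intro s hs
      have hsym : (W.trans (reflEquiv u₁ t hcxx)).symm s
          = W.symm ((reflEquiv u₁ t hcxx).symm s) := rfl
      rw [hsym, reflEquiv_symm_apply, reflMapL_apply]
      apply hWs'
      have hbt : u₁.b t ∈ Submodule.span ℂ (piS v) := by
        rw [hb t]
        apply hWs
        rcases zmod2_cases (u₀.p t) with h0 | h1
        · exact good_mem_span hu₀ (Or.inl h0)
        · exact good_mem_span hu₀ (Or.inr ⟨h1, hcxx0⟩)
      exact Submodule.sub_mem _ hs (Submodule.smul_mem _ _ hbt)
  · -- isotropic step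
    have hcxx : cartan u₁ t t = 0 := hiso.2.1
    have hpt : u₁.p t = 1 := reflectable_iso_p hiso.1 hcxx
    have hcxx0 : cartan u₀ t t = 0 := by rw [← hc]; exact hcxx
    have hpt0 : u₀.p t = 1 := by rw [← hp]; exact hpt
    have hbceq : ∀ y, bcoef u₁ t y = bcoef u₀ t y := by
      intro y; rw [bcoef, bcoef, hc]
    have haceq : ∀ y, acoef u₁ t y = acoef u₀ t y := by
      intro y; rw [acoef, acoef, hc, hc]
    refine ⟨isoReflect u₀ t, spine_step hu₀ (isoReflect_isIsoReflexion u₀ t hpt0 hcxx0),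
      W, ?_, ?_, ?_, hWs, hWs'⟩
    · intro y
      rw [isoReflexion_b_eq hiso y, isoReflect_b, hb, hb, hbceq, map_add, map_smul]
    · intro y z
      rw [isoReflexion_cartan_eq hiso, cartan_isoReflect, hc, hc, hc, hc, hbceq, haceq]
    · intro y
      rw [isoReflexion_p_eq hiso y, isoReflect_p, hc, hp, hp]

/-- Every skeleton vertex is `SpineRel`-related to the base. -/
lemma spineRel_of_skeleton {v u : RootDatum X H} (hu : u ∈ Skeleton v) : SpineRel v u := by
  obtain ⟨ms, hpath⟩ := hu
  have : ∀ {w u' : RootDatum X H} {ns : List X}, IsPath w ns u' →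
      SpineRel v w → SpineRel v u' := by
    intro w u' ns h
    induction h with
    | nil _ => exact id
    | cons hr hp ih => exact fun hrel => ih (spineRel_step hrel hr)
  exact this hpath (spineRel_self v)

end Aux5
/-- For an indecomposable admissible component, if the ℂ-span of `π_S`
meets `Δ_is`, then the ℂ-span of `π_S` equals the ℂ-span of `Σ_v`. -/
theorem stmt0 {X : Type*} [Fintype X] {H : Type*} [AddCommGroup H] [Module ℂ H]
    [FiniteDimensional ℂ H] (v : RootDatum X H)
    (hadm : Admissible v) (hind : IndecComp v)
    (hmeet : ((Submodule.span ℂ (piS v) : Set (Module.Dual ℂ H)) ∩ DeltaIs v).Nonempty) :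
    Submodule.span ℂ (piS v) = Submodule.span ℂ (Set.range v.b) := by
  classical
  obtain ⟨β, hβV, hβIs⟩ := hmeet
  obtain ⟨u, x, huSk, hrefl, hcxx, hbxeq⟩ := hβIs
  have hpux : u.p x = 1 := reflectable_iso_p hrefl hcxx
  obtain ⟨u₀, hu₀, W, hb, hc, hp, hWs, hWs'⟩ := spineRel_of_skeleton huSk
  -- the seed: an isotropic vertex of the spine datum `u₀` whose root lies in `span π_S`
  have hseed : u₀.b x ∈ Submodule.span ℂ (piS v) := by
    have h1 : W.symm β ∈ Submodule.span ℂ (piS v) := hWs' β hβV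
    have h2 : W.symm β = u₀.b x := by
      rw [← hbxeq, hb x, LinearEquiv.symm_apply_apply]
    rwa [h2] at h1
  have hhot : u₀.p x = 1 ∧ cartan u₀ x x = 0 := by
    constructor
    · rw [← hp]; exact hpux
    · rw [← hc]; exact hcxx
  -- propagation: every simple root of `u₀` lies in `span π_S`
  have hall : ∀ y, u₀.b y ∈ Submodule.span ℂ (piS v) := by
    intro y
    by_cases hyiso : u₀.p y = 1 ∧ cartan u₀ y y = 0
    · obtain ⟨n, hr⟩ := reach_of_indec (hind u₀ hu₀) x y
      have hne : ∃ m, ReachN u₀ x m y := ⟨n, hr⟩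
      exact main_prop hadm (Nat.find hne) u₀ hu₀ x y hhot hseed hyiso
        (Nat.find_spec hne) (fun m hm => Nat.find_min hne hm)
    · rcases zmod2_cases (u₀.p y) with h0 | h1
      · exact good_mem_span hu₀ (Or.inl h0)
      · exact good_mem_span hu₀ (Or.inr ⟨h1, fun hcy => hyiso ⟨h1, hcy⟩⟩)
  apply le_antisymm
  · -- span π_S ≤ span Σ_v
    rw [Submodule.span_le]
    rintro α ⟨u', x', hu', hcase⟩
    have hsub : u'.b x' ∈ Submodule.span ℂ (Set.range v.b) := by
      rw [← span_spine hu']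
      exact Submodule.subset_span ⟨x', rfl⟩
    rcases hcase with ⟨_, rfl⟩ | ⟨_, _, rfl⟩
    · exact hsub
    · exact Submodule.smul_mem _ _ hsub
  · -- span Σ_v ≤ span π_S
    rw [Submodule.span_le]
    rintro _ ⟨y, rfl⟩
    have h1 : v.b y ∈ Submodule.span ℂ (Set.range u₀.b) := by
      rw [span_spine hu₀]
      exact Submodule.subset_span ⟨y, rfl⟩
    have h2 : Submodule.span ℂ (Set.range u₀.b) ≤ Submodule.span ℂ (piS v) := by
      rw [Submodule.span_le]
      rintro _ ⟨y', rfl⟩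
      exact hall y'
    exact h2 h1
end KMS
end

section
/- Let B be an indecomposable generalized Cartan matrix of type (IND) indexed by a finite set pi. Then, in V = R^pi, the set {z_mu : mu in Q^{++}_R, mu != 0} coincides with the closure (in the metric topology of V) of the set {z_alpha : alpha in Delta^{im,+}}. -/
namespace KMS10
open Topology Filter

noncomputable section

variable {π : Type*} [Fintype π] [DecidableEq π]

/-- The standard basis vector `e_α` of `V = ℝ^π` (with the Euclidean norm). -/
def eVec (α : π) : EuclideanSpace ℝ π := EuclideanSpace.single α 1

/-- The Weyl group of the generalized Cartan matrix `B`: the subgroup of `GL(V)`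
generated by the reflections `s_α : e_β ↦ e_β - b_{αβ} e_α`. -/
def gcmWeyl (B : π → π → ℤ) : Subgroup (EuclideanSpace ℝ π ≃ₗ[ℝ] EuclideanSpace ℝ π) :=
  Subgroup.closure {w | ∃ α : π, ∀ β : π, w (eVec β) = eVec β - (B α β : ℝ) • eVec α}

/-- The cone `C(π)` of nonnegative real combinations of the `e_α`. -/
def gcmCone : Set (EuclideanSpace ℝ π) :=
  {μ | ∃ c : π → ℝ, (∀ α, 0 ≤ c α) ∧ μ = ∑ α, c α • eVec α}

/-- The semilattice `Q^+` of nonnegative integral combinations of the `e_α`. -/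
def gcmQplus : Set (EuclideanSpace ℝ π) := {μ | ∀ α, ∃ n : ℕ, μ α = n}

/-- The totally positive cone `Q^{++}_ℝ = ⋂_{w ∈ W} w C(π)`. -/
def gcmQpp (B : π → π → ℤ) : Set (EuclideanSpace ℝ π) :=
  ⋂ w ∈ gcmWeyl B, ⇑w '' gcmCone

/-- The support of `μ` is connected in the Dynkin graph of `B`. -/
def SuppConnected (B : π → π → ℤ) (μ : EuclideanSpace ℝ π) : Prop :=
  ∀ a, μ a ≠ 0 → ∀ b, μ b ≠ 0 →
    Relation.ReflTransGen (fun x y => μ x ≠ 0 ∧ μ y ≠ 0 ∧ x ≠ y ∧ B x y ≠ 0) a b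

/-- The fundamental domain `K` for the positive imaginary roots. -/
def gcmK (B : π → π → ℤ) : Set (EuclideanSpace ℝ π) :=
  {μ ∈ gcmQplus | μ ≠ 0 ∧ SuppConnected B μ ∧ ∀ α, (∑ β, (B α β : ℝ) * μ β) ≤ 0}

/-- The set of positive imaginary roots `Δ^{im,+} = ⋃_{w ∈ W} w K`. -/
def gcmImPlus (B : π → π → ℤ) : Set (EuclideanSpace ℝ π) :=
  ⋃ w ∈ gcmWeyl B, ⇑w '' gcmK B

/-! ### Infrastructure -/

local notation "V" => EuclideanSpace ℝ π

@[simp] lemma eVec_apply (α k : π) : eVec α k = if k = α then (1:ℝ) else 0 := by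
  simp [eVec, EuclideanSpace.single_apply]

@[simp] lemma eVec_apply_self (α : π) : eVec α α = (1:ℝ) := by simp

lemma eVec_apply_ne {α k : π} (h : k ≠ α) : eVec α k = (0:ℝ) := by simp [h]

/-- The linear functional `v ↦ (B v)_i = ∑_β B i β v β`. -/
def phiB (B : π → π → ℤ) (i : π) : V →ₗ[ℝ] ℝ where
  toFun v := ∑ β, (B i β : ℝ) * v β
  map_add' x y := by
    simp only [PiLp.add_apply, mul_add]
    rw [Finset.sum_add_distrib]
  map_smul' c x := by
    simp only [PiLp.smul_apply, smul_eq_mul, RingHom.id_apply, Finset.mul_sum]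
    congr 1; ext β; ring

lemma phiB_apply (B : π → π → ℤ) (i : π) (v : V) :
    phiB B i v = ∑ β, (B i β : ℝ) * v β := rfl

@[simp] lemma phiB_eVec (B : π → π → ℤ) (i β : π) : phiB B i (eVec β) = (B i β : ℝ) := by
  simp [phiB_apply, eVec, EuclideanSpace.single_apply]

section aux

variable (B : π → π → ℤ) (h2 : ∀ α, B α α = 2)

/-- The simple reflection `s_i` as a linear equivalence. -/
def sigma (i : π) : V ≃ₗ[ℝ] V where
  toFun v := v - phiB B i v • eVec i
  invFun v := v - phiB B i v • eVec i
  map_add' x y := by simp only [map_add]; module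
  map_smul' c x := by simp only [map_smul, RingHom.id_apply, smul_eq_mul]; module
  left_inv := by
    intro v
    simp only [map_sub, map_smul, phiB_eVec, h2 i, smul_eq_mul]
    module
  right_inv := by
    intro v
    simp only [map_sub, map_smul, phiB_eVec, h2 i, smul_eq_mul]
    module

lemma sigma_apply (i : π) (v : V) : sigma B h2 i v = v - phiB B i v • eVec i := rfl

@[simp] lemma sigma_eVec (i β : π) :
    sigma B h2 i (eVec β) = eVec β - (B i β : ℝ) • eVec i := by
  simp [sigma_apply]

@[simp] lemma mul_apply' (f g : V ≃ₗ[ℝ] V) (x : V) : (f * g) x = f (g x) := rfl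

@[simp] lemma one_apply' (x : V) : (1 : V ≃ₗ[ℝ] V) x = x := rfl

lemma sigma_invol (i : π) : sigma B h2 i * sigma B h2 i = 1 := by
  apply LinearEquiv.toLinearMap_injective
  apply LinearMap.ext
  intro v
  exact (sigma B h2 i).left_inv v

lemma sigma_inv (i : π) : (sigma B h2 i)⁻¹ = sigma B h2 i := by
  rw [inv_eq_iff_mul_eq_one]; exact sigma_invol B h2 i

/-- products of simple reflections along a word -/
def wordProd (L : List π) : V ≃ₗ[ℝ] V := (L.map (sigma B h2)).prod

@[simp] lemma wordProd_nil : wordProd B h2 [] = 1 := rfl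

@[simp] lemma wordProd_cons (i : π) (L : List π) :
    wordProd B h2 (i :: L) = sigma B h2 i * wordProd B h2 L := by
  simp [wordProd]

lemma wordProd_append (L₁ L₂ : List π) :
    wordProd B h2 (L₁ ++ L₂) = wordProd B h2 L₁ * wordProd B h2 L₂ := by
  simp [wordProd]

@[simp] lemma wordProd_singleton (i : π) : wordProd B h2 [i] = sigma B h2 i := by
  simp [wordProd]

lemma wordProd_inv (L : List π) : (wordProd B h2 L)⁻¹ = wordProd B h2 L.reverse := by
  induction L with
  | nil => simp
  | cons i L ih =>
      rw [wordProd_cons, mul_inv_rev, ih, sigma_inv, List.reverse_cons, wordProd_append]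
      simp

/-- The membership predicate we use: being a product of simple reflections. -/
def HasWord (w : V ≃ₗ[ℝ] V) : Prop := ∃ L : List π, w = wordProd B h2 L

lemma hasWord_one : HasWord B h2 1 := ⟨[], rfl⟩

lemma hasWord_sigma (i : π) : HasWord B h2 (sigma B h2 i) := ⟨[i], by simp⟩

lemma HasWord.mul {w w' : V ≃ₗ[ℝ] V} (h : HasWord B h2 w) (h' : HasWord B h2 w') :
    HasWord B h2 (w * w') := by
  obtain ⟨L, rfl⟩ := h; obtain ⟨L', rfl⟩ := h'
  exact ⟨L ++ L', (wordProd_append B h2 L L').symm⟩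

lemma HasWord.inv {w : V ≃ₗ[ℝ] V} (h : HasWord B h2 w) : HasWord B h2 w⁻¹ := by
  obtain ⟨L, rfl⟩ := h; exact ⟨L.reverse, wordProd_inv B h2 L⟩

/-- Generators of `gcmWeyl` are exactly the `sigma`s. -/
lemma gen_eq_sigma {w : V ≃ₗ[ℝ] V} (i : π)
    (hw : ∀ β : π, w (eVec β) = eVec β - (B i β : ℝ) • eVec i) : w = sigma B h2 i := by
  apply LinearEquiv.toLinearMap_injective
  apply Module.Basis.ext (EuclideanSpace.basisFun π ℝ).toBasis
  intro β
  have hb : ((EuclideanSpace.basisFun π ℝ).toBasis : Module.Basis π ℝ V) β = eVec β := by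
    apply PiLp.ext; intro k
    simp [eVec, EuclideanSpace.single_apply, EuclideanSpace.basisFun_apply]
  simp only [LinearEquiv.coe_coe, hb]
  rw [hw β]
  simp [sigma_apply]

lemma sigma_mem (i : π) : sigma B h2 i ∈ gcmWeyl B := by
  apply Subgroup.subset_closure
  exact ⟨i, fun β => by simp [sigma_apply]⟩

lemma mem_weyl_iff_hasWord {w : V ≃ₗ[ℝ] V} : w ∈ gcmWeyl B ↔ HasWord B h2 w := by
  constructor
  · intro hw
    induction hw using Subgroup.closure_induction with
    | mem x hx =>
        obtain ⟨i, hi⟩ := hx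
        exact (gen_eq_sigma B h2 i hi) ▸ hasWord_sigma B h2 i
    | one => exact hasWord_one B h2
    | mul x y _ _ hx hy => exact hx.mul B h2 hy
    | inv x _ hx => exact hx.inv B h2
  · rintro ⟨L, rfl⟩
    induction L with
    | nil => exact Subgroup.one_mem _
    | cons i L ih =>
        rw [wordProd_cons]
        exact Subgroup.mul_mem _ (sigma_mem B h2 i) ih

/-! ### Length function -/

/-- length: minimal word length representing `w`. -/
def len (w : V ≃ₗ[ℝ] V) : ℕ := sInf {n | ∃ L : List π, L.length = n ∧ w = wordProd B h2 L}

lemma len_le {w : V ≃ₗ[ℝ] V} (L : List π) (hL : w = wordProd B h2 L) :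
    len B h2 w ≤ L.length := Nat.sInf_le ⟨L, rfl, hL⟩

lemma exists_min_word {w : V ≃ₗ[ℝ] V} (hw : HasWord B h2 w) :
    ∃ L : List π, L.length = len B h2 w ∧ w = wordProd B h2 L := by
  obtain ⟨L, hL⟩ := hw
  have hne : {n | ∃ L : List π, L.length = n ∧ w = wordProd B h2 L}.Nonempty :=
    ⟨L.length, L, rfl, hL⟩
  exact Nat.sInf_mem hne

@[simp] lemma len_one : len B h2 (1 : V ≃ₗ[ℝ] V) = 0 :=
  Nat.le_zero.mp (len_le B h2 [] rfl)

lemma eq_one_of_len_zero {w : V ≃ₗ[ℝ] V} (hw : HasWord B h2 w) (h : len B h2 w = 0) :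
    w = 1 := by
  obtain ⟨L, hL, hw'⟩ := exists_min_word B h2 hw
  rw [h] at hL
  rw [List.length_eq_zero_iff] at hL
  simp [hL] at hw'
  exact hw'

lemma len_mul_le {w w' : V ≃ₗ[ℝ] V} (hw : HasWord B h2 w) (hw' : HasWord B h2 w') :
    len B h2 (w * w') ≤ len B h2 w + len B h2 w' := by
  obtain ⟨L, hL, rfl⟩ := exists_min_word B h2 hw
  obtain ⟨L', hL', rfl⟩ := exists_min_word B h2 hw'
  calc len B h2 (wordProd B h2 L * wordProd B h2 L')
      ≤ (L ++ L').length := len_le B h2 _ (wordProd_append B h2 L L').symm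
    _ = len B h2 (wordProd B h2 L) + len B h2 (wordProd B h2 L') := by
        simp [hL, hL']

lemma len_sigma_le (i : π) : len B h2 (sigma B h2 i) ≤ 1 := by
  simpa using len_le B h2 [i] (by simp)

lemma sigma_ne_one (i : π) : sigma B h2 i ≠ 1 := by
  intro h
  have h0 : sigma B h2 i (eVec i) = eVec i := by rw [h]; rfl
  rw [sigma_apply] at h0
  have := congrArg (fun v : V => v i) h0
  simp only [PiLp.sub_apply, PiLp.smul_apply, phiB_eVec, h2 i, eVec_apply_self,
    smul_eq_mul] at this
  push_cast at this
  norm_num at this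

lemma len_sigma (i : π) : len B h2 (sigma B h2 i) = 1 := by
  refine le_antisymm (len_sigma_le B h2 i) ?_
  by_contra h
  push_neg at h
  have h0 : len B h2 (sigma B h2 i) = 0 := Nat.lt_one_iff.mp h
  exact sigma_ne_one B h2 i (eq_one_of_len_zero B h2 (hasWord_sigma B h2 i) h0)

/-- determinant of a reflection is -1 -/
lemma det_sigma (i : π) :
    LinearMap.det ((sigma B h2 i : V ≃ₗ[ℝ] V) : V →ₗ[ℝ] V) = -1 := by
  classical
  let b : Module.Basis π ℝ V := (EuclideanSpace.basisFun π ℝ).toBasis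
  rw [← LinearMap.det_toMatrix b]
  have hb : ∀ β : π, b β = eVec β := by
    intro β
    apply PiLp.ext; intro k
    simp [b, eVec, EuclideanSpace.single_apply, EuclideanSpace.basisFun_apply]
  have hM : (LinearMap.toMatrix b b) ((sigma B h2 i : V ≃ₗ[ℝ] V) : V →ₗ[ℝ] V)
      = 1 + Matrix.replicateCol (Fin 1) (fun k => -(eVec i k : ℝ)) * Matrix.replicateRow (Fin 1) (fun l => (B i l : ℝ)) := by
    ext k l
    rw [LinearMap.toMatrix_apply]
    have hrepr : ∀ v : V, (b.repr v) k = v k := by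
      intro v
      simp [b, OrthonormalBasis.coe_toBasis_repr_apply, EuclideanSpace.basisFun_repr]
    rw [hrepr]
    simp only [LinearEquiv.coe_coe, hb]
    rw [sigma_apply]
    simp only [map_sub, phiB_eVec]
    by_cases hkl : k = l <;> by_cases hki : k = i <;>
      simp [Matrix.mul_apply, Matrix.one_apply, hkl, hki, PiLp.sub_apply, PiLp.smul_apply,
        eVec_apply] <;> subst_vars <;> simp_all <;> ring_nf <;> simp [h2] <;> ring
  rw [hM]
  refine (Matrix.det_one_add_replicateCol_mul_replicateRow (ι := Fin 1) _ _).trans ?_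
  simp [dotProduct, h2 i]
  norm_num

lemma det_mul' (w w' : V ≃ₗ[ℝ] V) :
    LinearMap.det ((w * w' : V ≃ₗ[ℝ] V) : V →ₗ[ℝ] V)
      = LinearMap.det ((w : V ≃ₗ[ℝ] V) : V →ₗ[ℝ] V) *
        LinearMap.det ((w' : V ≃ₗ[ℝ] V) : V →ₗ[ℝ] V) := by
  have : ((w * w' : V ≃ₗ[ℝ] V) : V →ₗ[ℝ] V)
      = ((w : V ≃ₗ[ℝ] V) : V →ₗ[ℝ] V) ∘ₗ ((w' : V ≃ₗ[ℝ] V) : V →ₗ[ℝ] V) := rfl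
  rw [this, LinearMap.det_comp]

lemma det_wordProd (L : List π) :
    LinearMap.det ((wordProd B h2 L : V ≃ₗ[ℝ] V) : V →ₗ[ℝ] V) = (-1 : ℝ) ^ L.length := by
  induction L with
  | nil =>
      simp only [wordProd_nil, List.length_nil, pow_zero]
      have : ((1 : V ≃ₗ[ℝ] V) : V →ₗ[ℝ] V) = LinearMap.id := rfl
      rw [this, LinearMap.det_id]
  | cons i L ih =>
      rw [wordProd_cons, det_mul', det_sigma B h2 i, ih]
      rw [List.length_cons, pow_succ]
      ring

lemma det_eq_parity {w : V ≃ₗ[ℝ] V} (hw : HasWord B h2 w) :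
    LinearMap.det ((w : V ≃ₗ[ℝ] V) : V →ₗ[ℝ] V) = (-1 : ℝ) ^ len B h2 w := by
  obtain ⟨L, hL, rfl⟩ := exists_min_word B h2 hw
  rw [det_wordProd, hL]

lemma len_mul_sigma_ne {w : V ≃ₗ[ℝ] V} (hw : HasWord B h2 w) (i : π) :
    len B h2 (w * sigma B h2 i) ≠ len B h2 w := by
  intro h
  have h1 := det_eq_parity B h2 (hw.mul B h2 (hasWord_sigma B h2 i))
  rw [det_mul', det_sigma B h2 i, det_eq_parity B h2 hw, h] at h1
  have h2' : (-1 : ℝ) ^ len B h2 w ≠ 0 := by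
    apply pow_ne_zero; norm_num
  have h3 : (-1 : ℝ) ^ len B h2 w * -1 = (-1 : ℝ) ^ len B h2 w * 1 := by
    rw [mul_one]; linarith [h1]
  have := mul_left_cancel₀ h2' h3
  norm_num at this

lemma len_mul_sigma_le {w : V ≃ₗ[ℝ] V} (hw : HasWord B h2 w) (i : π) :
    len B h2 (w * sigma B h2 i) ≤ len B h2 w + 1 := by
  have := len_mul_le B h2 hw (hasWord_sigma B h2 i)
  rwa [len_sigma] at this

lemma len_le_mul_sigma {w : V ≃ₗ[ℝ] V} (hw : HasWord B h2 w) (i : π) :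
    len B h2 w ≤ len B h2 (w * sigma B h2 i) + 1 := by
  have hww : w = (w * sigma B h2 i) * sigma B h2 i := by
    rw [mul_assoc, sigma_invol, mul_one]
  calc len B h2 w = len B h2 ((w * sigma B h2 i) * sigma B h2 i) := by rw [← hww]
    _ ≤ len B h2 (w * sigma B h2 i) + 1 :=
        len_mul_sigma_le B h2 (hw.mul B h2 (hasWord_sigma B h2 i)) i

/-- the fundamental dichotomy: multiplying by a reflection changes length by exactly one. -/
lemma len_dichotomy {w : V ≃ₗ[ℝ] V} (hw : HasWord B h2 w) (i : π) :
    len B h2 (w * sigma B h2 i) = len B h2 w + 1 ∨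
    len B h2 w = len B h2 (w * sigma B h2 i) + 1 := by
  have h1 := len_mul_sigma_le B h2 hw i
  have h2' := len_le_mul_sigma B h2 hw i
  have h3 := len_mul_sigma_ne B h2 hw i
  omega

/-! ### rank 2 computations -/

lemma sigma_step_i {i j : π} (hij : j ≠ i) (x : V) (p q : ℝ) :
    sigma B h2 i (x + p • eVec i + q • eVec j)
      = x + (-(B i j : ℝ) * q - p - phiB B i x) • eVec i + q • eVec j := by
  rw [sigma_apply]
  have hphi : phiB B i (x + p • eVec i + q • eVec j)
      = phiB B i x + p * 2 + q * (B i j : ℝ) := by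
    simp only [map_add, map_smul, phiB_eVec, smul_eq_mul, h2 i]
    push_cast
    ring
  rw [hphi]
  module

lemma sigma_step_j {i j : π} (hij : j ≠ i) (x : V) (p q : ℝ) :
    sigma B h2 j (x + p • eVec i + q • eVec j)
      = x + p • eVec i + (-(B j i : ℝ) * p - q - phiB B j x) • eVec j := by
  rw [sigma_apply]
  have hphi : phiB B j (x + p • eVec i + q • eVec j)
      = phiB B j x + p * (B j i : ℝ) + q * 2 := by
    simp only [map_add, map_smul, phiB_eVec, smul_eq_mul, h2 j]
    push_cast
    ring
  rw [hphi]
  module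

lemma sigma_pq_i {i j : π} (hij : j ≠ i) (p q : ℝ) :
    sigma B h2 i (p • eVec i + q • eVec j)
      = (-(B i j : ℝ) * q - p) • eVec i + q • eVec j := by
  have := sigma_step_i B h2 hij 0 p q
  simp only [zero_add, map_zero, sub_zero] at this
  simpa using this

lemma sigma_pq_j {i j : π} (hij : j ≠ i) (p q : ℝ) :
    sigma B h2 j (p • eVec i + q • eVec j)
      = p • eVec i + (-(B j i : ℝ) * p - q) • eVec j := by
  have := sigma_step_j B h2 hij 0 p q
  simp only [zero_add, map_zero, sub_zero] at this
  simpa using this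

/-- coefficient recursion for alternating words in a rank-2 subsystem -/
def pqSeq (a b : ℝ) : ℕ → ℝ × ℝ
  | 0 => (1, 0)
  | k+1 => if (k+1) % 2 = 1 then ((pqSeq a b k).1, b * (pqSeq a b k).1 - (pqSeq a b k).2)
           else (a * (pqSeq a b k).2 - (pqSeq a b k).1, (pqSeq a b k).2)

lemma pqSeq_nonneg (a b : ℝ) (ha : 1 ≤ a) (hb : 1 ≤ b) (h4 : 4 ≤ a * b) : ∀ k,
    (0 ≤ (pqSeq a b k).1 ∧ 0 ≤ (pqSeq a b k).2) ∧
    (k % 2 = 1 → b * (pqSeq a b k).1 ≤ 2 * (pqSeq a b k).2) ∧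
    (k % 2 = 0 → a * (pqSeq a b k).2 ≤ 2 * (pqSeq a b k).1) := by
  intro k
  induction k with
  | zero => simp [pqSeq]
  | succ k ih =>
      obtain ⟨⟨hp, hq⟩, hodd, heven⟩ := ih
      rcases Nat.even_or_odd k with hk | hk
      · -- k even, k+1 odd : apply the j/τ step
        have hk0 : k % 2 = 0 := Nat.even_iff.mp hk
        have hk1 : (k+1) % 2 = 1 := by omega
        have hiq := heven hk0
        constructor
        · constructor
          · simp [pqSeq, hk1]; exact hp
          · simp only [pqSeq, hk1, if_pos]
            nlinarith
        · constructor
          · intro _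
            simp only [pqSeq, hk1, if_pos]
            nlinarith
          · intro hc; omega
      · -- k odd, k+1 even : apply the i/s step
        have hk0 : k % 2 = 1 := Nat.odd_iff.mp hk
        have hk1 : ¬ ((k+1) % 2 = 1) := by omega
        have hiq := hodd hk0
        constructor
        · constructor
          · simp only [pqSeq, hk1, if_neg, not_false_iff]
            nlinarith
          · simp [pqSeq, hk1]; exact hq
        · constructor
          · intro hc; omega
          · intro _
            simp only [pqSeq, hk1, if_neg, not_false_iff]
            nlinarith

section GroupAux

variable {G : Type*} [Group G]

/-- alternating products `h, h g? ...`: `altPow g h k = h * g * h * ⋯` (k factors, starting `h`),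
multiplied on the right. -/
def altPow (g h : G) : ℕ → G
  | 0 => 1
  | k+1 => altPow g h k * (if (k+1) % 2 = 1 then h else g)

lemma altPow_succ (g h : G) (k : ℕ) :
    altPow g h (k+1) = altPow g h k * (if (k+1) % 2 = 1 then h else g) := rfl

lemma altPow_even (g h : G) (t : ℕ) : altPow g h (2*t) = (h*g)^t := by
  induction t with
  | zero => simp [altPow]
  | succ t ih =>
      have h1 : 2*(t+1) = (2*t+1)+1 := by ring
      rw [h1, altPow_succ, altPow_succ, ih, if_pos (by omega : (2*t+1) % 2 = 1),
        if_neg (by omega : ¬ ((2*t+1+1) % 2 = 1)), pow_succ, mul_assoc]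

lemma altPow_odd (g h : G) (t : ℕ) : altPow g h (2*t+1) = (h*g)^t * h := by
  rw [altPow_succ, altPow_even, if_pos (by omega : (2*t+1) % 2 = 1)]

lemma g_pow_aux (g h : G) (s : ℕ) :
    g * (h*g)^s * h = (g*h)^(s+1) := by
  induction s with
  | zero => rw [pow_zero, pow_one, mul_one]
  | succ s ih =>
      calc g * (h*g)^(s+1) * h = g * ((h*g) * (h*g)^s) * h := by rw [pow_succ']
        _ = (g*h) * (g * (h*g)^s * h) := by simp only [mul_assoc]
        _ = (g*h) * (g*h)^(s+1) := by rw [ih]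
        _ = (g*h)^(s+1+1) := by rw [← pow_succ']

lemma claimY {g h : G} (hg : g*g = 1) (hh : h*h = 1) (m : ℕ) (hm : 1 ≤ m)
    (hrel : (g*h)^m = 1) : altPow g h m = g * altPow g h (m-1) := by
  have hginv : g⁻¹ = g := by
    rw [← mul_one g⁻¹, ← hg, ← mul_assoc, inv_mul_cancel, one_mul]
  have hhinv : h⁻¹ = h := by
    rw [← mul_one h⁻¹, ← hh, ← mul_assoc, inv_mul_cancel, one_mul]
  set X := g * h with hX
  have hXinv : X⁻¹ = h * g := by rw [hX, mul_inv_rev, hginv, hhinv]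
  rcases Nat.even_or_odd m with hme | hmo
  · obtain ⟨t, rfl⟩ := hme
    have ht1 : 1 ≤ t := by omega
    have hmm : t + t = 2*t := by ring
    rw [hmm] at hrel ⊢
    rw [altPow_even]
    have h1 : altPow g h (2*t-1) = (h*g)^(t-1) * h := by
      have : 2*t - 1 = 2*(t-1)+1 := by omega
      rw [this, altPow_odd]
    have h1' : (t-1)+1 = t := by omega
    rw [h1, ← mul_assoc, g_pow_aux g h (t-1), h1']
    -- goal : (h*g)^t = (g*h)^t, given ((g*h))^(2t) = 1
    have hX2 : X^t * X^t = 1 := by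
      rw [← pow_add, hmm]; exact hrel
    have hXt : (X^t)⁻¹ = X^t := inv_eq_of_mul_eq_one_right hX2
    calc (h*g)^t = (X⁻¹)^t := by rw [hXinv]
      _ = (X^t)⁻¹ := by rw [inv_pow]
      _ = X^t := hXt
  · obtain ⟨t, rfl⟩ := hmo
    have h0 : 2*t+1-1 = 2*t := by omega
    rw [h0, altPow_odd, altPow_even]
    -- goal : (h*g)^t * h = g * (h*g)^t
    have hconj : ∀ s : ℕ, g * X^s * g = (X⁻¹)^s := by
      intro s
      have h1 : g * X * g⁻¹ = X⁻¹ := by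
        rw [hginv, hX, hXinv]
        calc g * (g * h) * g = g * g * (h * g) := by group
          _ = h * g := by rw [hg, one_mul]
      calc g * X^s * g = g * X^s * g⁻¹ := by rw [hginv]
        _ = (g * X * g⁻¹)^s := by rw [conj_pow]
        _ = (X⁻¹)^s := by rw [h1]
    have hXt1 : (X^t)⁻¹ = X^(t+1) := by
      have hXX : X^(t+1) * X^t = 1 := by
        rw [← pow_add]
        have : t+1+t = 2*t+1 := by omega
        rw [this]; exact hrel
      exact inv_eq_of_mul_eq_one_left hXX
    calc (h*g)^t * h = (X⁻¹)^t * h := by rw [hXinv]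
      _ = (X^t)⁻¹ * h := by rw [inv_pow]
      _ = X^(t+1) * h := by rw [hXt1]
      _ = X^t * g * (h * h) := by rw [pow_succ, hX]; group
      _ = X^t * g := by rw [hh, mul_one]
      _ = (g * g) * (X^t * g) := by rw [hg, one_mul]
      _ = g * (g * X^t * g) := by group
      _ = g * ((X⁻¹)^t) := by rw [hconj t]
      _ = g * (h*g)^t := by rw [hXinv]

end GroupAux

/-! ### alternating words -/

def cLet (i j : π) (k : ℕ) : π := if k % 2 = 1 then j else i

def altList (i j : π) (k : ℕ) : List π := (List.range k).map (fun t => cLet i j (t+1))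

lemma altList_zero (i j : π) : altList i j 0 = [] := by simp [altList]

lemma altList_succ (i j : π) (k : ℕ) :
    altList i j (k+1) = altList i j k ++ [cLet i j (k+1)] := by
  simp [altList, List.range_succ]

lemma altList_length (i j : π) (k : ℕ) : (altList i j k).length = k := by simp [altList]

lemma wordProd_altList (i j : π) (k : ℕ) :
    wordProd B h2 (altList i j k) = altPow (sigma B h2 i) (sigma B h2 j) k := by
  induction k with
  | zero => simp [altList_zero, altPow]
  | succ k ih =>
      rw [altList_succ, wordProd_append, ih, altPow_succ]
      congr 1
      by_cases hp : (k+1) % 2 = 1 <;> simp [cLet, hp, wordProd]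

lemma rec_pq {i j : π} (hij : j ≠ i) (k : ℕ) :
    (wordProd B h2 (altList i j k))⁻¹ (eVec i)
      = (pqSeq (-(B i j : ℝ)) (-(B j i : ℝ)) k).1 • eVec i
        + (pqSeq (-(B i j : ℝ)) (-(B j i : ℝ)) k).2 • eVec j := by
  induction k with
  | zero => simp [altList_zero, pqSeq]
  | succ k ih =>
      rw [altList_succ, wordProd_append, mul_inv_rev]
      have hc : (wordProd B h2 [cLet i j (k+1)])⁻¹ = sigma B h2 (cLet i j (k+1)) := by
        simp only [wordProd, List.map_cons, List.map_nil, List.prod_cons, List.prod_nil,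
          mul_one]
        exact sigma_inv B h2 _
      rw [hc, mul_apply', ih]
      by_cases hp : (k+1) % 2 = 1
      · have : cLet i j (k+1) = j := by simp [cLet, hp]
        rw [this, sigma_pq_j B h2 hij]
        simp only [pqSeq, hp, if_pos]
      · have : cLet i j (k+1) = i := by simp [cLet, hp]
        rw [this, sigma_pq_i B h2 hij]
        simp only [pqSeq, hp, if_neg, not_false_iff]

/-! ### dihedral relations -/

set_option maxRecDepth 10000 in
lemma rel_dihedral3 {i j : π} (hij : j ≠ i) (hB : B i j = -1) (hB' : B j i = -1) :
    (sigma B h2 i * sigma B h2 j) ^ 3 = 1 := by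
  have e1 : (B i j : ℝ) = -1 := by rw [hB]; push_cast; ring
  have e2 : (B j i : ℝ) = -1 := by rw [hB']; push_cast; ring
  have key : ∀ (x : V) (p q : ℝ),
      ((sigma B h2 i * sigma B h2 j) ^ 3) (x + p • eVec i + q • eVec j)
        = x + p • eVec i + q • eVec j := by
    intro x p q
    have hunfold : ((sigma B h2 i * sigma B h2 j) ^ 3) (x + p • eVec i + q • eVec j)
        = sigma B h2 i (sigma B h2 j (sigma B h2 i (sigma B h2 j (sigma B h2 i
            (sigma B h2 j (x + p • eVec i + q • eVec j)))))) := by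
      simp only [pow_succ, pow_zero, one_mul, mul_apply']
    rw [hunfold]
    rw [sigma_step_j B h2 hij, sigma_step_i B h2 hij, sigma_step_j B h2 hij,
      sigma_step_i B h2 hij, sigma_step_j B h2 hij, sigma_step_i B h2 hij]
    rw [e1, e2]
    match_scalars <;> ring
  apply LinearEquiv.toLinearMap_injective
  apply LinearMap.ext
  intro v
  have hsplit : v = (v - v i • eVec i - v j • eVec j) + v i • eVec i + v j • eVec j := by
    module
  simp only [LinearEquiv.coe_coe, Module.End.one_apply]
  calc ((sigma B h2 i * sigma B h2 j) ^ 3) v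
      = ((sigma B h2 i * sigma B h2 j) ^ 3)
          ((v - v i • eVec i - v j • eVec j) + v i • eVec i + v j • eVec j) := by
        rw [← hsplit]
    _ = (v - v i • eVec i - v j • eVec j) + v i • eVec i + v j • eVec j := key _ _ _
    _ = v := by module


set_option maxRecDepth 10000 in
lemma rel_dihedral2 {i j : π} (hij : j ≠ i) (hB : B i j = 0) (hB' : B j i = 0) :
    (sigma B h2 i * sigma B h2 j) ^ 2 = 1 := by
  have e1 : (B i j : ℝ) = 0 := by rw [hB]; push_cast; ring
  have e2 : (B j i : ℝ) = 0 := by rw [hB']; push_cast; ring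
  have key : ∀ (x : V) (p q : ℝ),
      ((sigma B h2 i * sigma B h2 j) ^ 2) (x + p • eVec i + q • eVec j)
        = x + p • eVec i + q • eVec j := by
    intro x p q
    have hunfold : ((sigma B h2 i * sigma B h2 j) ^ 2) (x + p • eVec i + q • eVec j)
        = sigma B h2 i (sigma B h2 j (sigma B h2 i (sigma B h2 j (x + p • eVec i + q • eVec j)))) := by
      simp only [pow_succ, pow_zero, one_mul, mul_apply']
    rw [hunfold]
    rw [sigma_step_j B h2 hij, sigma_step_i B h2 hij, sigma_step_j B h2 hij, sigma_step_i B h2 hij]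
    rw [e1, e2]
    match_scalars <;> ring
  apply LinearEquiv.toLinearMap_injective
  apply LinearMap.ext
  intro v
  have hsplit : v = (v - v i • eVec i - v j • eVec j) + v i • eVec i + v j • eVec j := by
    module
  simp only [LinearEquiv.coe_coe, Module.End.one_apply]
  calc ((sigma B h2 i * sigma B h2 j) ^ 2) v
      = ((sigma B h2 i * sigma B h2 j) ^ 2)
          ((v - v i • eVec i - v j • eVec j) + v i • eVec i + v j • eVec j) := by
        rw [← hsplit]
    _ = (v - v i • eVec i - v j • eVec j) + v i • eVec i + v j • eVec j := key _ _ _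
    _ = v := by module

set_option maxRecDepth 10000 in
lemma rel_dihedral4a {i j : π} (hij : j ≠ i) (hB : B i j = -1) (hB' : B j i = -2) :
    (sigma B h2 i * sigma B h2 j) ^ 4 = 1 := by
  have e1 : (B i j : ℝ) = -1 := by rw [hB]; push_cast; ring
  have e2 : (B j i : ℝ) = -2 := by rw [hB']; push_cast; ring
  have key : ∀ (x : V) (p q : ℝ),
      ((sigma B h2 i * sigma B h2 j) ^ 4) (x + p • eVec i + q • eVec j)
        = x + p • eVec i + q • eVec j := by
    intro x p q
    have hunfold : ((sigma B h2 i * sigma B h2 j) ^ 4) (x + p • eVec i + q • eVec j)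
        = sigma B h2 i (sigma B h2 j (sigma B h2 i (sigma B h2 j (sigma B h2 i (sigma B h2 j (sigma B h2 i (sigma B h2 j (x + p • eVec i + q • eVec j)))))))) := by
      simp only [pow_succ, pow_zero, one_mul, mul_apply']
    rw [hunfold]
    rw [sigma_step_j B h2 hij, sigma_step_i B h2 hij, sigma_step_j B h2 hij, sigma_step_i B h2 hij, sigma_step_j B h2 hij, sigma_step_i B h2 hij, sigma_step_j B h2 hij, sigma_step_i B h2 hij]
    rw [e1, e2]
    match_scalars <;> ring
  apply LinearEquiv.toLinearMap_injective
  apply LinearMap.ext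
  intro v
  have hsplit : v = (v - v i • eVec i - v j • eVec j) + v i • eVec i + v j • eVec j := by
    module
  simp only [LinearEquiv.coe_coe, Module.End.one_apply]
  calc ((sigma B h2 i * sigma B h2 j) ^ 4) v
      = ((sigma B h2 i * sigma B h2 j) ^ 4)
          ((v - v i • eVec i - v j • eVec j) + v i • eVec i + v j • eVec j) := by
        rw [← hsplit]
    _ = (v - v i • eVec i - v j • eVec j) + v i • eVec i + v j • eVec j := key _ _ _
    _ = v := by module

set_option maxRecDepth 10000 in
lemma rel_dihedral4b {i j : π} (hij : j ≠ i) (hB : B i j = -2) (hB' : B j i = -1) :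
    (sigma B h2 i * sigma B h2 j) ^ 4 = 1 := by
  have e1 : (B i j : ℝ) = -2 := by rw [hB]; push_cast; ring
  have e2 : (B j i : ℝ) = -1 := by rw [hB']; push_cast; ring
  have key : ∀ (x : V) (p q : ℝ),
      ((sigma B h2 i * sigma B h2 j) ^ 4) (x + p • eVec i + q • eVec j)
        = x + p • eVec i + q • eVec j := by
    intro x p q
    have hunfold : ((sigma B h2 i * sigma B h2 j) ^ 4) (x + p • eVec i + q • eVec j)
        = sigma B h2 i (sigma B h2 j (sigma B h2 i (sigma B h2 j (sigma B h2 i (sigma B h2 j (sigma B h2 i (sigma B h2 j (x + p • eVec i + q • eVec j)))))))) := by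
      simp only [pow_succ, pow_zero, one_mul, mul_apply']
    rw [hunfold]
    rw [sigma_step_j B h2 hij, sigma_step_i B h2 hij, sigma_step_j B h2 hij, sigma_step_i B h2 hij, sigma_step_j B h2 hij, sigma_step_i B h2 hij, sigma_step_j B h2 hij, sigma_step_i B h2 hij]
    rw [e1, e2]
    match_scalars <;> ring
  apply LinearEquiv.toLinearMap_injective
  apply LinearMap.ext
  intro v
  have hsplit : v = (v - v i • eVec i - v j • eVec j) + v i • eVec i + v j • eVec j := by
    module
  simp only [LinearEquiv.coe_coe, Module.End.one_apply]
  calc ((sigma B h2 i * sigma B h2 j) ^ 4) v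
      = ((sigma B h2 i * sigma B h2 j) ^ 4)
          ((v - v i • eVec i - v j • eVec j) + v i • eVec i + v j • eVec j) := by
        rw [← hsplit]
    _ = (v - v i • eVec i - v j • eVec j) + v i • eVec i + v j • eVec j := key _ _ _
    _ = v := by module

set_option maxRecDepth 10000 in
set_option maxHeartbeats 2000000 in
lemma rel_dihedral6a {i j : π} (hij : j ≠ i) (hB : B i j = -1) (hB' : B j i = -3) :
    (sigma B h2 i * sigma B h2 j) ^ 6 = 1 := by
  have e1 : (B i j : ℝ) = -1 := by rw [hB]; push_cast; ring
  have e2 : (B j i : ℝ) = -3 := by rw [hB']; push_cast; ring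
  have key : ∀ (x : V) (p q : ℝ),
      ((sigma B h2 i * sigma B h2 j) ^ 6) (x + p • eVec i + q • eVec j)
        = x + p • eVec i + q • eVec j := by
    intro x p q
    have hunfold : ((sigma B h2 i * sigma B h2 j) ^ 6) (x + p • eVec i + q • eVec j)
        = sigma B h2 i (sigma B h2 j (sigma B h2 i (sigma B h2 j (sigma B h2 i (sigma B h2 j (sigma B h2 i (sigma B h2 j (sigma B h2 i (sigma B h2 j (sigma B h2 i (sigma B h2 j (x + p • eVec i + q • eVec j)))))))))))) := by
      simp only [pow_succ, pow_zero, one_mul, mul_apply']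
    rw [hunfold]
    rw [sigma_step_j B h2 hij, sigma_step_i B h2 hij, sigma_step_j B h2 hij, sigma_step_i B h2 hij, sigma_step_j B h2 hij, sigma_step_i B h2 hij, sigma_step_j B h2 hij, sigma_step_i B h2 hij, sigma_step_j B h2 hij, sigma_step_i B h2 hij, sigma_step_j B h2 hij, sigma_step_i B h2 hij]
    rw [e1, e2]
    match_scalars <;> ring
  apply LinearEquiv.toLinearMap_injective
  apply LinearMap.ext
  intro v
  have hsplit : v = (v - v i • eVec i - v j • eVec j) + v i • eVec i + v j • eVec j := by
    module
  simp only [LinearEquiv.coe_coe, Module.End.one_apply]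
  calc ((sigma B h2 i * sigma B h2 j) ^ 6) v
      = ((sigma B h2 i * sigma B h2 j) ^ 6)
          ((v - v i • eVec i - v j • eVec j) + v i • eVec i + v j • eVec j) := by
        rw [← hsplit]
    _ = (v - v i • eVec i - v j • eVec j) + v i • eVec i + v j • eVec j := key _ _ _
    _ = v := by module

set_option maxRecDepth 10000 in
set_option maxHeartbeats 2000000 in
lemma rel_dihedral6b {i j : π} (hij : j ≠ i) (hB : B i j = -3) (hB' : B j i = -1) :
    (sigma B h2 i * sigma B h2 j) ^ 6 = 1 := by
  have e1 : (B i j : ℝ) = -3 := by rw [hB]; push_cast; ring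
  have e2 : (B j i : ℝ) = -1 := by rw [hB']; push_cast; ring
  have key : ∀ (x : V) (p q : ℝ),
      ((sigma B h2 i * sigma B h2 j) ^ 6) (x + p • eVec i + q • eVec j)
        = x + p • eVec i + q • eVec j := by
    intro x p q
    have hunfold : ((sigma B h2 i * sigma B h2 j) ^ 6) (x + p • eVec i + q • eVec j)
        = sigma B h2 i (sigma B h2 j (sigma B h2 i (sigma B h2 j (sigma B h2 i (sigma B h2 j (sigma B h2 i (sigma B h2 j (sigma B h2 i (sigma B h2 j (sigma B h2 i (sigma B h2 j (x + p • eVec i + q • eVec j)))))))))))) := by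
      simp only [pow_succ, pow_zero, one_mul, mul_apply']
    rw [hunfold]
    rw [sigma_step_j B h2 hij, sigma_step_i B h2 hij, sigma_step_j B h2 hij, sigma_step_i B h2 hij, sigma_step_j B h2 hij, sigma_step_i B h2 hij, sigma_step_j B h2 hij, sigma_step_i B h2 hij, sigma_step_j B h2 hij, sigma_step_i B h2 hij, sigma_step_j B h2 hij, sigma_step_i B h2 hij]
    rw [e1, e2]
    match_scalars <;> ring
  apply LinearEquiv.toLinearMap_injective
  apply LinearMap.ext
  intro v
  have hsplit : v = (v - v i • eVec i - v j • eVec j) + v i • eVec i + v j • eVec j := by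
    module
  simp only [LinearEquiv.coe_coe, Module.End.one_apply]
  calc ((sigma B h2 i * sigma B h2 j) ^ 6) v
      = ((sigma B h2 i * sigma B h2 j) ^ 6)
          ((v - v i • eVec i - v j • eVec j) + v i • eVec i + v j • eVec j) := by
        rw [← hsplit]
    _ = (v - v i • eVec i - v j • eVec j) + v i • eVec i + v j • eVec j := key _ _ _
    _ = v := by module

lemma len_wordProd_inv_le (L : List π) : len B h2 (wordProd B h2 L)⁻¹ ≤ L.length := by
  rw [wordProd_inv]
  simpa using len_le B h2 L.reverse rfl

lemma eVec_nonneg (i k : π) : 0 ≤ eVec i k := by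
  rw [eVec_apply]; split <;> norm_num

lemma dihedral_finite_package {i j : π} (hij : j ≠ i)
    (hBij0 : B i j ≤ 0) (hBji0 : B j i ≤ 0) (hz : B i j = 0 ↔ B j i = 0)
    (hab4 : B i j * B j i < 4) :
    ∃ m : ℕ, 1 ≤ m ∧ (sigma B h2 i * sigma B h2 j) ^ m = 1 ∧
      (∀ s, 1 ≤ s → s + 1 ≤ m →
        0 ≤ (pqSeq (-(B i j : ℝ)) (-(B j i : ℝ)) s).1 ∧
        0 ≤ (pqSeq (-(B i j : ℝ)) (-(B j i : ℝ)) s).2) := by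
  have hz1 : B i j = 0 → B j i = 0 := hz.mp
  have hz2 : B j i = 0 → B i j = 0 := hz.mpr
  have hbd1 : -3 ≤ B i j := by
    by_contra hcc
    push_neg at hcc
    rcases eq_or_ne (B j i) 0 with h | h
    · have := hz2 h; omega
    · have h1 : B j i ≤ -1 := by omega
      nlinarith
  have hbd2 : -3 ≤ B j i := by
    by_contra hcc
    push_neg at hcc
    rcases eq_or_ne (B i j) 0 with h | h
    · have := hz1 h; omega
    · have h1 : B i j ≤ -1 := by omega
      nlinarith
  have hcases : (B i j = 0 ∧ B j i = 0) ∨ (B i j = -1 ∧ B j i = -1) ∨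
      (B i j = -1 ∧ B j i = -2) ∨ (B i j = -2 ∧ B j i = -1) ∨
      (B i j = -1 ∧ B j i = -3) ∨ (B i j = -3 ∧ B j i = -1) := by
    interval_cases h1 : B i j <;> interval_cases h2 : B j i <;> omega
  rcases hcases with ⟨hc1, hc2⟩ | ⟨hc1, hc2⟩ | ⟨hc1, hc2⟩ | ⟨hc1, hc2⟩ | ⟨hc1, hc2⟩ | ⟨hc1, hc2⟩
  · refine ⟨2, by norm_num, rel_dihedral2 B h2 hij hc1 hc2, ?_⟩
    intro s hs1 hs2
    have hs3 : s ≤ 1 := by omega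
    interval_cases s
    · rw [hc1, hc2]; norm_num [pqSeq]
  · refine ⟨3, by norm_num, rel_dihedral3 B h2 hij hc1 hc2, ?_⟩
    intro s hs1 hs2
    have hs3 : s ≤ 2 := by omega
    interval_cases s <;> rw [hc1, hc2] <;> norm_num [pqSeq]
  · refine ⟨4, by norm_num, rel_dihedral4a B h2 hij hc1 hc2, ?_⟩
    intro s hs1 hs2
    have hs3 : s ≤ 3 := by omega
    interval_cases s <;> rw [hc1, hc2] <;> norm_num [pqSeq]
  · refine ⟨4, by norm_num, rel_dihedral4b B h2 hij hc1 hc2, ?_⟩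
    intro s hs1 hs2
    have hs3 : s ≤ 3 := by omega
    interval_cases s <;> rw [hc1, hc2] <;> norm_num [pqSeq]
  · refine ⟨6, by norm_num, rel_dihedral6a B h2 hij hc1 hc2, ?_⟩
    intro s hs1 hs2
    have hs3 : s ≤ 5 := by omega
    interval_cases s <;> rw [hc1, hc2] <;> norm_num [pqSeq]
  · refine ⟨6, by norm_num, rel_dihedral6b B h2 hij hc1 hc2, ?_⟩
    intro s hs1 hs2
    have hs3 : s ≤ 5 := by omega
    interval_cases s <;> rw [hc1, hc2] <;> norm_num [pqSeq]

set_option maxHeartbeats 1000000 in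
/-- Kac Lemma 3.11 style positivity: if `len (w s_i) > len w` then `w e_i ≥ 0`. -/
theorem thmR (hoff : ∀ α β, α ≠ β → B α β ≤ 0) (hzero : ∀ α β, B α β = 0 ↔ B β α = 0) :
    ∀ n : ℕ, ∀ w : V ≃ₗ[ℝ] V, HasWord B h2 w → len B h2 w ≤ n →
      ∀ i : π, len B h2 w < len B h2 (w * sigma B h2 i) →
      ∀ k, 0 ≤ w (eVec i) k := by
  intro n
  induction n with
  | zero =>
      intro w hw hlen i _ k
      have hw1 : w = 1 := eq_one_of_len_zero B h2 hw (Nat.le_zero.mp hlen)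
      rw [hw1, one_apply']
      exact eVec_nonneg i k
  | succ n IH =>
      intro w hw hlen i hasc k
      by_cases h0 : len B h2 w = 0
      · have hw1 : w = 1 := eq_one_of_len_zero B h2 hw h0
        rw [hw1, one_apply']
        exact eVec_nonneg i k
      -- peel the last letter of a minimal word
      obtain ⟨L, hLlen, hLw⟩ := exists_min_word B h2 hw
      have hLne : L ≠ [] := by
        intro h; rw [h] at hLlen; simp at hLlen; omega
      set j := L.getLast hLne with hj
      have hsplit : w = wordProd B h2 L.dropLast * sigma B h2 j := by
        conv_lhs => rw [hLw, ← List.dropLast_append_getLast hLne]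
        rw [wordProd_append, wordProd_singleton]
      have hwsigj : w * sigma B h2 j = wordProd B h2 L.dropLast := by
        rw [hsplit, mul_assoc, sigma_invol, mul_one]
      have hlenw' : len B h2 (w * sigma B h2 j) + 1 = len B h2 w := by
        have hub : len B h2 (w * sigma B h2 j) ≤ len B h2 w - 1 := by
          rw [hwsigj]
          have h1 := len_le B h2 L.dropLast rfl
          have h2' : L.dropLast.length = len B h2 w - 1 := by
            rw [List.length_dropLast, hLlen]
          omega
        have := len_le_mul_sigma B h2 hw j
        omega
      have hji : j ≠ i := by
        intro h
        rw [h] at hlenw'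
        omega
      -- the alternating descent
      classical
      set a : ℝ := -(B i j : ℝ) with ha
      set b : ℝ := -(B j i : ℝ) with hb
      set pred : ℕ → Prop := fun s =>
        len B h2 (w * wordProd B h2 (altList i j s)) <
        len B h2 (w * wordProd B h2 (altList i j s) * sigma B h2 (cLet i j (s+1))) with hpred
      have hvsucc : ∀ s : ℕ, w * wordProd B h2 (altList i j (s+1))
          = w * wordProd B h2 (altList i j s) * sigma B h2 (cLet i j (s+1)) := by
        intro s
        rw [altList_succ, wordProd_append, wordProd_singleton, ← mul_assoc]
      have hvword : ∀ s : ℕ, HasWord B h2 (w * wordProd B h2 (altList i j s)) := by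
        intro s
        exact hw.mul B h2 ⟨altList i j s, rfl⟩
      have hPex : ∃ s, pred s := by
        by_contra hnP
        push_neg at hnP
        have hstep : ∀ s : ℕ, len B h2 (w * wordProd B h2 (altList i j (s+1))) + 1
            = len B h2 (w * wordProd B h2 (altList i j s)) := by
          intro s
          have hd := len_dichotomy B h2 (hvword s) (cLet i j (s+1))
          have hn := hnP s
          rw [hpred] at hn
          simp only [not_lt] at hn
          rw [hvsucc s]
          omega
        have hdesc : ∀ s : ℕ, len B h2 (w * wordProd B h2 (altList i j s)) + s
            = len B h2 w := by
          intro s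
          induction s with
          | zero => simp [altList_zero]
          | succ s ihs =>
              have := hstep s
              omega
        have := hdesc (len B h2 w + 1)
        omega
      set ks := Nat.find hPex with hks
      have hkP : pred ks := Nat.find_spec hPex
      have hkmin : ∀ s, s < ks → ¬ pred s := fun s hs => Nat.find_min hPex hs
      have hlenvk : ∀ s, s ≤ ks → len B h2 (w * wordProd B h2 (altList i j s)) + s
          = len B h2 w := by
        intro s hs
        induction s with
        | zero => simp [altList_zero]
        | succ s ihs =>
            have hps : ¬ pred s := hkmin s (by omega)
            have hd := len_dichotomy B h2 (hvword s) (cLet i j (s+1))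
            rw [hpred] at hps
            simp only [not_lt] at hps
            have hihs := ihs (by omega)
            rw [hvsucc s]
            omega
      have hk1 : 1 ≤ ks := by
        rcases Nat.eq_zero_or_pos ks with h | h
        · exfalso
          have hp0 := hkP
          rw [h] at hp0
          rw [hpred] at hp0
          simp only [altList_zero, wordProd_nil, mul_one] at hp0
          have hc1 : cLet i j (0+1) = j := by simp [cLet]
          rw [hc1] at hp0
          omega
        · exact h
      -- both letters ascend at stage ks
      have hprevasc : len B h2 (w * wordProd B h2 (altList i j ks)) <
          len B h2 (w * wordProd B h2 (altList i j ks) * sigma B h2 (cLet i j ks)) := by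
        have hksm : ks - 1 + 1 = ks := by omega
        have h1 : w * wordProd B h2 (altList i j ks) * sigma B h2 (cLet i j ks)
            = w * wordProd B h2 (altList i j (ks-1)) := by
          conv_lhs => rw [← hksm, hvsucc (ks-1), hksm]
          rw [mul_assoc, sigma_invol, mul_one]
        rw [h1]
        have ha1 := hlenvk ks le_rfl
        have ha2 := hlenvk (ks-1) (by omega)
        omega
      have hkPP := hkP
      rw [hpred] at hkPP
      have hboth : len B h2 (w * wordProd B h2 (altList i j ks)) <
            len B h2 (w * wordProd B h2 (altList i j ks) * sigma B h2 i) ∧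
          len B h2 (w * wordProd B h2 (altList i j ks)) <
            len B h2 (w * wordProd B h2 (altList i j ks) * sigma B h2 j) := by
        rcases Nat.even_or_odd ks with he | ho
        · have e1 : cLet i j ks = i := by
            have hmm : ks % 2 = 0 := Nat.even_iff.mp he
            simp [cLet, hmm]
          have e2 : cLet i j (ks+1) = j := by
            have hmm : (ks+1) % 2 = 1 := by
              have := Nat.even_iff.mp he
              omega
            simp [cLet, hmm]
          rw [e1] at hprevasc
          rw [e2] at hkPP
          exact ⟨hprevasc, hkPP⟩
        · have e1 : cLet i j ks = j := by
            have hmm : ks % 2 = 1 := Nat.odd_iff.mp ho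
            simp [cLet, hmm]
          have e2 : cLet i j (ks+1) = i := by
            have hmm : ¬ ((ks+1) % 2 = 1) := by
              have := Nat.odd_iff.mp ho
              omega
            simp [cLet, hmm]
          rw [e1] at hprevasc
          rw [e2] at hkPP
          exact ⟨hkPP, hprevasc⟩
      have hlenks : len B h2 (w * wordProd B h2 (altList i j ks)) + ks = len B h2 w :=
        hlenvk ks le_rfl
      have hlenks' : len B h2 (w * wordProd B h2 (altList i j ks)) ≤ n := by omega
      have hPosI := IH (w * wordProd B h2 (altList i j ks)) (hvword ks) hlenks' i hboth.1
      have hPosJ := IH (w * wordProd B h2 (altList i j ks)) (hvword ks) hlenks' j hboth.2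
      -- final decomposition
      suffices hpq : 0 ≤ (pqSeq a b ks).1 ∧ 0 ≤ (pqSeq a b ks).2 by
        have hfactor : w = (w * wordProd B h2 (altList i j ks)) *
            (wordProd B h2 (altList i j ks))⁻¹ := by
          rw [mul_assoc, mul_inv_cancel, mul_one]
        have hdec : w (eVec i) = (pqSeq a b ks).1 • ((w * wordProd B h2 (altList i j ks)) (eVec i))
            + (pqSeq a b ks).2 • ((w * wordProd B h2 (altList i j ks)) (eVec j)) := by
          conv_lhs => rw [hfactor]
          rw [mul_apply', rec_pq B h2 hji ks, ← ha, ← hb, map_add, map_smul, map_smul]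
        rw [hdec]
        simp only [PiLp.add_apply, PiLp.smul_apply, smul_eq_mul]
        nlinarith [hpq.1, hpq.2, hPosI k, hPosJ k]
      -- nonnegativity of the coefficients
      have hij' : i ≠ j := fun h => hji h.symm
      have hBij0 : B i j ≤ 0 := hoff i j hij'
      have hBji0 : B j i ≤ 0 := hoff j i hji
      by_cases hab4 : 4 ≤ B i j * B j i
      · -- infinite dihedral case
        have hbne : B j i ≠ 0 := by intro h; rw [h] at hab4; omega
        have hane : B i j ≠ 0 := by intro h; rw [h] at hab4; omega
        have ha1 : 1 ≤ a := by
          rw [ha]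
          have h1 : B i j ≤ -1 := by omega
          have h2' : (B i j : ℝ) ≤ -1 := by exact_mod_cast h1
          linarith
        have hb1 : 1 ≤ b := by
          rw [hb]
          have h1 : B j i ≤ -1 := by omega
          have h2' : (B j i : ℝ) ≤ -1 := by exact_mod_cast h1
          linarith
        have hab : 4 ≤ a * b := by
          rw [ha, hb]
          have h1 : (4 : ℝ) ≤ (B i j : ℝ) * (B j i : ℝ) := by exact_mod_cast hab4
          nlinarith
        exact (pqSeq_nonneg a b ha1 hb1 hab ks).1
      · -- finite dihedral case
        push_neg at hab4
        obtain ⟨m, hm1, hrel, htab⟩ :=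
          dihedral_finite_package B h2 hji hBij0 hBji0 (hzero i j) hab4
        by_cases hkm : ks + 1 ≤ m
        · have := htab ks hk1 hkm
          rw [ha, hb]
          exact this
        · exfalso
          push_neg at hkm
          have hmks : m ≤ ks := by omega
          have hY : wordProd B h2 (altList i j m)
              = sigma B h2 i * wordProd B h2 (altList i j (m-1)) := by
            rw [wordProd_altList, wordProd_altList]
            exact claimY (sigma_invol B h2 i) (sigma_invol B h2 j) m hm1 hrel
          have hwm : w * sigma B h2 i
              = (w * wordProd B h2 (altList i j m)) *
                (wordProd B h2 (altList i j (m-1)))⁻¹ := by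
            rw [hY]
            group
          have hlen1 : len B h2 (w * sigma B h2 i)
              ≤ len B h2 (w * wordProd B h2 (altList i j m)) + (m-1) := by
            rw [hwm]
            have hwrd : HasWord B h2 (wordProd B h2 (altList i j (m-1))) :=
              ⟨altList i j (m-1), rfl⟩
            have h1 := len_mul_le B h2 (hvword m) (hwrd.inv B h2)
            have h2' := len_wordProd_inv_le B h2 (altList i j (m-1))
            rw [altList_length] at h2'
            omega
          have hlm := hlenvk m hmks
          omega

set_option maxHeartbeats 400000 in
/-- W-images of antidominant nonnegative vectors stay nonnegative. -/
theorem weylPos (hoff : ∀ α β, α ≠ β → B α β ≤ 0) (hzero : ∀ α β, B α β = 0 ↔ B β α = 0) :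
    ∀ n : ℕ, ∀ w : V ≃ₗ[ℝ] V, HasWord B h2 w → len B h2 w ≤ n →
      ∀ μ : V, (∀ l, 0 ≤ μ l) → (∀ l, phiB B l μ ≤ 0) → ∀ k, 0 ≤ w μ k := by
  intro n
  induction n with
  | zero =>
      intro w hw hlen μ hμ hφ k
      have hw1 : w = 1 := eq_one_of_len_zero B h2 hw (Nat.le_zero.mp hlen)
      rw [hw1, one_apply']
      exact hμ k
  | succ n IH =>
      intro w hw hlen μ hμ hφ k
      by_cases h0 : len B h2 w = 0
      · have hw1 : w = 1 := eq_one_of_len_zero B h2 hw h0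
        rw [hw1, one_apply']
        exact hμ k
      obtain ⟨L, hLlen, hLw⟩ := exists_min_word B h2 hw
      have hLne : L ≠ [] := by
        intro h; rw [h] at hLlen; simp at hLlen; omega
      set j := L.getLast hLne with hj
      have hsplit : w = wordProd B h2 L.dropLast * sigma B h2 j := by
        conv_lhs => rw [hLw, ← List.dropLast_append_getLast hLne]
        rw [wordProd_append, wordProd_singleton]
      have hw'word : HasWord B h2 (wordProd B h2 L.dropLast) := ⟨L.dropLast, rfl⟩
      have hlenw' : len B h2 (wordProd B h2 L.dropLast) + 1 = len B h2 w := by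
        have hub : len B h2 (wordProd B h2 L.dropLast) ≤ len B h2 w - 1 := by
          have h1 := len_le B h2 L.dropLast rfl
          have h2' : L.dropLast.length = len B h2 w - 1 := by
            rw [List.length_dropLast, hLlen]
          omega
        have hwsigj : w * sigma B h2 j = wordProd B h2 L.dropLast := by
          rw [hsplit, mul_assoc, sigma_invol, mul_one]
        have := len_le_mul_sigma B h2 hw j
        rw [hwsigj] at this
        omega
      have hasc : len B h2 (wordProd B h2 L.dropLast) <
          len B h2 (wordProd B h2 L.dropLast * sigma B h2 j) := by
        rw [← hsplit]
        omega
      have hlen' : len B h2 (wordProd B h2 L.dropLast) ≤ n := by omega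
      have hPos := thmR B h2 hoff hzero n (wordProd B h2 L.dropLast) hw'word hlen' j hasc
      have hIH := IH (wordProd B h2 L.dropLast) hw'word hlen' μ hμ hφ
      have hstep : w μ = (wordProd B h2 L.dropLast) μ
          + (-(phiB B j μ)) • (wordProd B h2 L.dropLast) (eVec j) := by
        rw [hsplit, mul_apply', sigma_apply]
        rw [map_sub, map_smul]
        module
      rw [hstep]
      simp only [PiLp.add_apply, PiLp.smul_apply, smul_eq_mul]
      have h1 := hIH k
      have h2' := hPos k
      have h3 := hφ j
      nlinarith

/-! ### cones -/

lemma sum_apply' (f : π → V) (k : π) : (∑ α, f α) k = ∑ α, f α k := by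
  rw [WithLp.ofLp_sum, Finset.sum_apply]

lemma cone_eq : gcmCone = {v : V | ∀ k, 0 ≤ v k} := by
  ext v
  constructor
  · rintro ⟨c, hc, rfl⟩ k
    rw [sum_apply']
    apply Finset.sum_nonneg
    intro α _
    rw [PiLp.smul_apply, smul_eq_mul]
    exact mul_nonneg (hc α) (eVec_nonneg α k)
  · intro hv
    refine ⟨fun α => v α, hv, ?_⟩
    apply PiLp.ext
    intro k
    rw [sum_apply']
    rw [Finset.sum_eq_single k]
    · simp
    · intro α _ hα
      simp [eVec_apply, Ne.symm hα]
    · intro h; exact absurd (Finset.mem_univ k) h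

@[simp] lemma inv_apply' (w : V ≃ₗ[ℝ] V) (x : V) : w⁻¹ x = w.symm x := rfl

lemma mem_image_equiv' {S : Set V} {w : V ≃ₗ[ℝ] V} {v : V} :
    v ∈ ⇑w '' S ↔ w⁻¹ v ∈ S := by
  constructor
  · rintro ⟨u, hu, rfl⟩
    rw [inv_apply', LinearEquiv.symm_apply_apply]
    exact hu
  · intro h
    refine ⟨w⁻¹ v, h, ?_⟩
    rw [inv_apply', LinearEquiv.apply_symm_apply]

lemma mem_qpp_iff {v : V} :
    v ∈ gcmQpp B ↔ ∀ w ∈ gcmWeyl B, ∀ k, 0 ≤ w v k := by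
  rw [gcmQpp]
  simp only [Set.mem_iInter]
  constructor
  · intro h w hw k
    have h1 := h w⁻¹ (Subgroup.inv_mem _ hw)
    rw [mem_image_equiv', inv_inv] at h1
    rw [cone_eq] at h1
    exact h1 k
  · intro h w hw
    rw [mem_image_equiv', cone_eq]
    exact h w⁻¹ (Subgroup.inv_mem _ hw)

include h2 in
lemma imPlus_subset_qpp {v : V} (hoff : ∀ α β, α ≠ β → B α β ≤ 0)
    (hzero : ∀ α β, B α β = 0 ↔ B β α = 0)
    (hv : v ∈ gcmImPlus B) : v ∈ gcmQpp B ∧ v ≠ 0 := by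
  rw [gcmImPlus] at hv
  simp only [Set.mem_iUnion] at hv
  obtain ⟨w, hw, μ, hμK, rfl⟩ := hv
  obtain ⟨hμQ, hμ0, _, hμB⟩ := hμK
  constructor
  · rw [mem_qpp_iff]
    intro w' hw' k
    have hmem : w' * w ∈ gcmWeyl B := Subgroup.mul_mem _ hw' hw
    have hword : HasWord B h2 (w' * w) := (mem_weyl_iff_hasWord B h2).mp hmem
    have hμpos : ∀ l, 0 ≤ μ l := by
      intro l
      obtain ⟨nn, hnn⟩ := hμQ l
      rw [hnn]
      exact Nat.cast_nonneg nn
    have hφ : ∀ l, phiB B l μ ≤ 0 := fun l => hμB l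
    have := weylPos B h2 hoff hzero (len B h2 (w' * w)) (w' * w) hword le_rfl μ hμpos hφ k
    simpa [mul_apply'] using this
  · intro h
    apply hμ0
    apply w.injective
    rw [map_zero]
    exact h

/-! ### topology of the totally positive cone -/

lemma coord_continuous (k : π) : Continuous (fun v : V => v k) := by
  have : (fun v : V => v k)
      = (fun f : π → ℝ => f k) ∘ (PiLp.continuousLinearEquiv 2 ℝ (fun _ : π => ℝ)) := rfl
  rw [this]
  exact (continuous_apply k).comp (PiLp.continuousLinearEquiv 2 ℝ _).continuous

lemma equiv_continuous (w : V ≃ₗ[ℝ] V) : Continuous w :=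
  LinearMap.continuous_of_finiteDimensional (w : V →ₗ[ℝ] V)

lemma qpp_closed : IsClosed (gcmQpp B) := by
  rw [gcmQpp]
  apply isClosed_biInter
  intro w hw
  have himg : ⇑w '' gcmCone = ⇑(w⁻¹) ⁻¹' gcmCone := by
    ext x
    rw [mem_image_equiv']
    rfl
  rw [himg, cone_eq]
  have : (⇑(w⁻¹) ⁻¹' {v : V | ∀ k, 0 ≤ v k}) = ⋂ k, {x : V | 0 ≤ (w⁻¹ x) k} := by
    ext x; simp only [Set.mem_preimage, Set.mem_setOf_eq, Set.mem_iInter]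
  rw [this]
  apply isClosed_iInter
  intro k
  exact isClosed_le continuous_const ((coord_continuous k).comp (equiv_continuous w⁻¹))

lemma qpp_convex : Convex ℝ (gcmQpp B) := by
  intro x hx y hy s t hs ht hst
  rw [mem_qpp_iff] at hx hy ⊢
  intro w hw k
  rw [map_add, map_smul, map_smul]
  simp only [PiLp.add_apply, PiLp.smul_apply, smul_eq_mul]
  have := hx w hw k
  have := hy w hw k
  nlinarith

lemma qpp_smul {v : V} {c : ℝ} (hv : v ∈ gcmQpp B) (hc : 0 ≤ c) : c • v ∈ gcmQpp B := by
  rw [mem_qpp_iff] at hv ⊢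
  intro w hw k
  rw [map_smul]
  simp only [PiLp.smul_apply, smul_eq_mul]
  exact mul_nonneg hc (hv w hw k)

lemma qpp_subset_cone {v : V} (hv : v ∈ gcmQpp B) : ∀ k, 0 ≤ v k := by
  rw [mem_qpp_iff] at hv
  have := hv 1 (Subgroup.one_mem _)
  simpa using this

/-- height of a vector -/
def htV (v : V) : ℝ := ∑ k, v k

lemma basis_decomp (v : V) (w : V ≃ₗ[ℝ] V) (k : π) :
    w v k = ∑ l, v l * (w (eVec l) k) := by
  have hv : v = ∑ l, v l • eVec l := by
    apply PiLp.ext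
    intro m
    rw [sum_apply']
    rw [Finset.sum_eq_single m]
    · simp
    · intro α _ hα
      simp [eVec_apply, Ne.symm hα]
    · intro h; exact absurd (Finset.mem_univ m) h
  conv_lhs => rw [hv]
  rw [map_sum]
  rw [sum_apply']
  congr 1
  ext l
  rw [map_smul, PiLp.smul_apply, smul_eq_mul]

include h2 in
lemma weyl_int_entries {w : V ≃ₗ[ℝ] V} (hw : w ∈ gcmWeyl B) :
    ∃ M : π → π → ℤ, ∀ k l, w (eVec l) k = (M k l : ℝ) := by
  rw [mem_weyl_iff_hasWord B h2] at hw
  obtain ⟨L, rfl⟩ := hw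
  induction L with
  | nil =>
      refine ⟨fun k l => if k = l then 1 else 0, fun k l => ?_⟩
      rw [wordProd_nil, one_apply', eVec_apply]
      by_cases hkl : k = l <;> simp [hkl]
  | cons i L ih =>
      obtain ⟨M, hM⟩ := ih
      refine ⟨fun k l => M k l - (∑ β, B i β * M β l) * (if k = i then 1 else 0),
        fun k l => ?_⟩
      rw [wordProd_cons, mul_apply', sigma_apply]
      have hphi : phiB B i (wordProd B h2 L (eVec l)) = ((∑ β, B i β * M β l : ℤ) : ℝ) := by
        rw [phiB_apply]
        push_cast
        congr 1
        ext β
        rw [hM β l]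
      rw [PiLp.sub_apply, PiLp.smul_apply, hphi, hM k l, smul_eq_mul, eVec_apply]
      push_cast
      split <;> ring

lemma norm_eVec (l : π) : ‖eVec l‖ = 1 := by
  rw [show eVec l = EuclideanSpace.single l (1:ℝ) from rfl, EuclideanSpace.norm_single]
  norm_num

lemma single_le_ht {x : V} (hx : ∀ k, 0 ≤ x k) (k : π) : x k ≤ htV x := by
  rw [htV]
  exact Finset.single_le_sum (fun l _ => hx l) (Finset.mem_univ k)

include h2 in
lemma finite_orbit (v : V) (hv : v ∈ interior (gcmQpp B)) (H : ℝ) :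
    {x : V | (∃ w ∈ gcmWeyl B, x = w v) ∧ (∀ k, 0 ≤ x k) ∧ htV x ≤ H}.Finite := by
  obtain ⟨ε, hε, hball⟩ := Metric.isOpen_iff.mp isOpen_interior v hv
  have hballQ : Metric.ball v ε ⊆ gcmQpp B := hball.trans interior_subset
  -- the bound on integer matrix entries
  by_cases hH : 0 ≤ H
  swap
  · have : {x : V | (∃ w ∈ gcmWeyl B, x = w v) ∧ (∀ k, 0 ≤ x k) ∧ htV x ≤ H} = ∅ := by
      ext x
      simp only [Set.mem_setOf_eq, Set.mem_empty_iff_false, iff_false, not_and]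
      intro _ hx hht
      have h0 : 0 ≤ htV x := Finset.sum_nonneg (fun k _ => hx k)
      linarith
    rw [this]
    exact Set.finite_empty
  set R : ℤ := ⌈2 * H / ε⌉ with hR
  have key : ∀ x : V, ((∃ w ∈ gcmWeyl B, x = w v) ∧ (∀ k, 0 ≤ x k) ∧ htV x ≤ H) →
      ∃ M : π → π → ℤ, (∀ k l, |M k l| ≤ R) ∧
        x = (WithLp.equiv 2 (π → ℝ)).symm (fun k => ∑ l, (M k l : ℝ) * v l) := by
    rintro x ⟨⟨w, hw, rfl⟩, hxpos, hxht⟩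
    obtain ⟨M, hM⟩ := weyl_int_entries B h2 hw
    refine ⟨M, ?_, ?_⟩
    · intro k l
      -- bound |M k l| using the ball
      have hmem : ∀ s : ℝ, |s| ≤ ε/2 → v + s • eVec l ∈ gcmQpp B := by
        intro s hs
        apply hballQ
        rw [Metric.mem_ball, dist_eq_norm]
        have : v + s • eVec l - v = s • eVec l := by abel
        rw [this, norm_smul, norm_eVec]
        simp only [mul_one, Real.norm_eq_abs]
        linarith
      have hcoord : ∀ s : ℝ, |s| ≤ ε/2 → 0 ≤ w v k + s * (M k l : ℝ) := by
        intro s hs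
        have h1 := (mem_qpp_iff B).mp (hmem s hs) w hw k
        rw [map_add, map_smul] at h1
        simpa [PiLp.add_apply, PiLp.smul_apply, smul_eq_mul, hM k l] using h1
      have hwvk : w v k ≤ H := le_trans (single_le_ht hxpos k) hxht
      have habs : |(M k l : ℝ)| * (ε/2) ≤ H := by
        rcases le_or_gt 0 (M k l : ℝ) with h | h
        · have := hcoord (-(ε/2)) (by rw [abs_neg, abs_of_nonneg (by linarith)])
          rw [abs_of_nonneg h]
          have h0 := hcoord 0 (by simp; linarith)
          nlinarith [hxpos k]
        · have := hcoord (ε/2) (by rw [abs_of_nonneg (by linarith)])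
          rw [abs_of_neg h]
          nlinarith
      have hq : |(M k l : ℝ)| ≤ 2 * H / ε := by
        rw [le_div_iff₀ hε]
        nlinarith
      have h3 : ((|M k l| : ℤ) : ℝ) ≤ 2 * H / ε := by
        rw [Int.cast_abs]; exact hq
      have h4 : (2*H/ε) ≤ (R : ℝ) := Int.le_ceil _
      exact_mod_cast h3.trans h4
    · apply PiLp.ext
      intro k
      rw [basis_decomp v w k]
      have : ((WithLp.equiv 2 (π → ℝ)).symm (fun k => ∑ l, (M k l : ℝ) * v l)) k
          = ∑ l, (M k l : ℝ) * v l := rfl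
      rw [this]
      congr 1
      ext l
      rw [hM k l]
      ring
  -- the set of integer matrices with bounded entries is finite
  have hMfin : {M : π → π → ℤ | ∀ k l, |M k l| ≤ R}.Finite := by
    have h1 : {M : π → π → ℤ | ∀ k l, |M k l| ≤ R} ⊆
        Set.pi Set.univ (fun _ : π => {g : π → ℤ | ∀ l, |g l| ≤ R}) := by
      intro M hM k _
      exact fun l => hM k l
    apply Set.Finite.subset _ h1
    apply Set.Finite.pi
    intro k
    have h2' : {g : π → ℤ | ∀ l, |g l| ≤ R} ⊆
        Set.pi Set.univ (fun _ : π => Set.Icc (-R) R) := by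
      intro g hg l _
      rw [Set.mem_Icc]
      constructor
      · linarith [neg_abs_le (g l), hg l]
      · linarith [le_abs_self (g l), hg l]
    apply Set.Finite.subset _ h2'
    apply Set.Finite.pi
    intro _
    exact Set.finite_Icc _ _
  apply Set.Finite.subset (hMfin.image
    (fun M => (WithLp.equiv 2 (π → ℝ)).symm (fun k => ∑ l, (M k l : ℝ) * v l)))
  intro x hx
  obtain ⟨M, hM1, hM2⟩ := key x hx
  exact ⟨M, hM1, hM2.symm⟩

include h2 in
/-- T1 in final form : the closed antidominant cone is inside `Q^{++}`. -/
lemma antidominant_mem_qpp (hoff : ∀ α β, α ≠ β → B α β ≤ 0)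
    (hzero : ∀ α β, B α β = 0 ↔ B β α = 0) {v : V}
    (hv1 : ∀ k, 0 ≤ v k) (hv2 : ∀ l, phiB B l v ≤ 0) : v ∈ gcmQpp B := by
  rw [mem_qpp_iff]
  intro w hw k
  have hword : HasWord B h2 w := (mem_weyl_iff_hasWord B h2).mp hw
  exact weylPos B h2 hoff hzero (len B h2 w) w hword le_rfl v hv1 hv2 k

include h2 in
/-- descent: every nonzero interior point of `Q^{++}` is `W`-conjugate to an
antidominant vector. -/
lemma exists_descent {v : V} (hv : v ∈ interior (gcmQpp B)) :
    ∃ w ∈ gcmWeyl B, (∀ k, 0 ≤ (w v) k) ∧ (∀ l, phiB B l (w v) ≤ 0) := by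
  classical
  have hvQ : v ∈ gcmQpp B := interior_subset hv
  set S : Set V := {x : V | (∃ w ∈ gcmWeyl B, x = w v) ∧ (∀ k, 0 ≤ x k) ∧ htV x ≤ htV v}
    with hS
  have hSfin : S.Finite := finite_orbit B h2 v hv (htV v)
  have hvS : v ∈ S := by
    refine ⟨⟨1, Subgroup.one_mem _, rfl⟩, qpp_subset_cone B hvQ, le_rfl⟩
  obtain ⟨x, hxS, hxmin⟩ := hSfin.toFinset.exists_min_image htV
    ⟨v, hSfin.mem_toFinset.mpr hvS⟩
  rw [hSfin.mem_toFinset] at hxS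
  obtain ⟨⟨w, hw, rfl⟩, hxpos, hxht⟩ := hxS
  refine ⟨w, hw, hxpos, ?_⟩
  by_contra hneg
  push_neg at hneg
  obtain ⟨l, hl⟩ := hneg
  -- reflect at l : strictly smaller height, still in the orbit ∩ C ∩ {ht ≤ htV v}
  set x' := sigma B h2 l (w v) with hx'
  have hx'orb : x' = (sigma B h2 l * w) v := rfl
  have hx'mem : sigma B h2 l * w ∈ gcmWeyl B :=
    Subgroup.mul_mem _ (sigma_mem B h2 l) hw
  have hx'pos : ∀ k, 0 ≤ x' k := by
    intro k
    rw [hx'orb]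
    exact (mem_qpp_iff B).mp hvQ _ hx'mem k
  have hx'ht : htV x' = htV (w v) - phiB B l (w v) := by
    rw [hx', sigma_apply, htV, htV]
    rw [show (∑ k, (w v - phiB B l (w v) • eVec l) k)
        = ∑ k, ((w v) k - phiB B l (w v) * eVec l k) from
      Finset.sum_congr rfl (fun k _ => by rw [PiLp.sub_apply, PiLp.smul_apply, smul_eq_mul])]
    rw [Finset.sum_sub_distrib, ← Finset.mul_sum]
    have : (∑ k, eVec l k) = 1 := by
      rw [Finset.sum_eq_single l] <;> simp_all [eVec_apply]
    rw [this, mul_one]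
  have hx'S : x' ∈ S := by
    refine ⟨⟨sigma B h2 l * w, hx'mem, hx'orb⟩, hx'pos, ?_⟩
    rw [hx'ht]
    linarith
  have := hxmin x' (hSfin.mem_toFinset.mpr hx'S)
  rw [hx'ht] at this
  linarith

/-! ### integral approximation -/

lemma exists_int_ind
    (hIND : ∃ u : π → ℝ, (∀ α, 0 < u α) ∧ ∀ α, (∑ β, (B α β : ℝ) * u β) < 0) :
    ∃ p : π → ℕ, (∀ k, 1 ≤ p k) ∧ (∀ α, (∑ β, (B α β : ℝ) * (p β : ℝ)) ≤ -1) := by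
  rcases isEmpty_or_nonempty π with hE | hNE
  · exact ⟨fun _ => 1, fun k => (IsEmpty.elim hE k), fun α => (IsEmpty.elim hE α)⟩
  obtain ⟨u, hu, hBu⟩ := hIND
  set ε : ℝ := Finset.univ.inf' Finset.univ_nonempty (fun α => -(∑ β, (B α β : ℝ) * u β))
    with hε
  have hεpos : 0 < ε := by
    rw [hε]
    apply (Finset.lt_inf'_iff _).mpr
    intro α _
    linarith [hBu α]
  have hεle : ∀ α, (∑ β, (B α β : ℝ) * u β) ≤ -ε := by
    intro α
    have h1 : ε ≤ -(∑ β, (B α β : ℝ) * u β) :=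
      Finset.inf'_le _ (Finset.mem_univ α)
    linarith
  set Rb : ℝ := (∑ α, ∑ β, |(B α β : ℝ)|) + 1 with hRb
  have hRbpos : 0 < Rb := by
    rw [hRb]
    have : 0 ≤ (∑ α, ∑ β, |(B α β : ℝ)|) :=
      Finset.sum_nonneg fun α _ => Finset.sum_nonneg fun β _ => abs_nonneg _
    linarith
  have hRbge : ∀ α, (∑ β, |(B α β : ℝ)|) ≤ Rb - 1 := by
    intro α
    rw [hRb]
    have := Finset.single_le_sum
      (f := fun α => ∑ β, |(B α β : ℝ)|)
      (fun α _ => Finset.sum_nonneg fun β _ => abs_nonneg _) (Finset.mem_univ α)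
    linarith
  obtain ⟨D, hD⟩ := exists_nat_ge ((Rb + 1) / ε)
  have hDε : Rb + 1 ≤ (D : ℝ) * ε := by
    rw [div_le_iff₀ hεpos] at hD
    linarith
  have hD1 : (1:ℝ) ≤ (D:ℝ) := by
    rcases Nat.eq_zero_or_pos D with h | h
    · exfalso; rw [h] at hDε; push_cast at hDε; linarith
    · exact_mod_cast h
  refine ⟨fun k => ⌈(D : ℝ) * u k⌉₊, fun k => ?_, fun α => ?_⟩
  · have hDu : 0 < (D : ℝ) * u k := mul_pos (by linarith) (hu k)
    exact Nat.ceil_pos.mpr hDu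
  · have hterm : ∀ β, (B α β : ℝ) * (⌈(D : ℝ) * u β⌉₊ : ℝ)
        ≤ (B α β : ℝ) * ((D:ℝ) * u β) + |(B α β : ℝ)| := by
      intro β
      have hc1 : (D:ℝ) * u β ≤ (⌈(D : ℝ) * u β⌉₊ : ℝ) := Nat.le_ceil _
      have hc2 : (⌈(D : ℝ) * u β⌉₊ : ℝ) ≤ (D:ℝ) * u β + 1 := by
        have h0 : 0 ≤ (D:ℝ) * u β := le_of_lt (mul_pos (by linarith) (hu β))
        linarith [Nat.ceil_lt_add_one h0]
      rcases le_or_gt 0 ((B α β : ℝ)) with h | h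
      · nlinarith [le_abs_self ((B α β : ℝ))]
      · nlinarith [neg_abs_le ((B α β : ℝ))]
    calc (∑ β, (B α β : ℝ) * (⌈(D : ℝ) * u β⌉₊ : ℝ))
        ≤ ∑ β, ((B α β : ℝ) * ((D:ℝ) * u β) + |(B α β : ℝ)|) :=
          Finset.sum_le_sum fun β _ => hterm β
      _ = (D:ℝ) * (∑ β, (B α β : ℝ) * u β) + ∑ β, |(B α β : ℝ)| := by
          rw [Finset.sum_add_distrib, Finset.mul_sum]
          congr 1
          exact Finset.sum_congr rfl fun β _ => by ring
      _ ≤ (D:ℝ) * (-ε) + (Rb - 1) := by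
          have h1 := hεle α
          have h2' : (0:ℝ) ≤ (D:ℝ) := Nat.cast_nonneg D
          have := mul_le_mul_of_nonneg_left h1 h2'
          linarith [hRbge α]
      _ ≤ -1 := by nlinarith

lemma approx_in_K (hNE : Nonempty π)
    (hindec : ∀ a b : π, Relation.ReflTransGen (fun x y => x ≠ y ∧ B x y ≠ 0) a b)
    (p : π → ℕ) (hp1 : ∀ k, 1 ≤ p k)
    (hp2 : ∀ α, (∑ β, (B α β : ℝ) * (p β : ℝ)) ≤ -1)
    (x : V) (hx1 : ∀ k, 0 ≤ x k) (hx2 : ∀ l, phiB B l x ≤ 0) :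
    ∃ μ : ℕ → V, (∀ N : ℕ, 1 ≤ N → μ N ∈ gcmK B) ∧
      Filter.Tendsto (fun N : ℕ => ((N:ℝ))⁻¹ • μ N) Filter.atTop (𝓝 x) := by
  classical
  set R : ℕ := (∑ α, ∑ β, (B α β).natAbs) + 1 with hR
  have hR1 : 1 ≤ R := by omega
  have hRabs : ∀ α, (∑ β, |(B α β : ℝ)|) ≤ (R:ℝ) - 1 := by
    intro α
    have h1 : (∑ β, |(B α β : ℝ)|) = ((∑ β, (B α β).natAbs : ℕ) : ℝ) := by
      push_cast
      exact Finset.sum_congr rfl fun β _ => by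
        rw [Nat.cast_natAbs]
        norm_num
    rw [h1]
    have h2' : (∑ β, (B α β).natAbs) ≤ R - 1 := by
      rw [hR]
      simp only [Nat.add_sub_cancel]
      exact Finset.single_le_sum
        (f := fun α => ∑ β, (B α β).natAbs) (fun _ _ => Nat.zero_le _) (Finset.mem_univ α)
    calc ((∑ β, (B α β).natAbs : ℕ) : ℝ) ≤ ((R - 1 : ℕ) : ℝ) := by exact_mod_cast h2'
      _ = (R:ℝ) - 1 := by
          have : (1:ℕ) ≤ R := hR1
          push_cast [this]
          ring
  set μ : ℕ → V := fun N => (WithLp.equiv 2 (π → ℝ)).symm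
    (fun k => ((⌈(N:ℝ) * x k⌉₊ + R * p k : ℕ) : ℝ)) with hμ
  have hμcoord : ∀ N k, μ N k = ((⌈(N:ℝ) * x k⌉₊ + R * p k : ℕ) : ℝ) := fun N k => rfl
  have hμpos : ∀ N k, (1:ℝ) ≤ μ N k := by
    intro N k
    rw [hμcoord]
    have h1 : 1 ≤ ⌈(N:ℝ) * x k⌉₊ + R * p k := by
      have := hp1 k
      nlinarith [hR1, hp1 k]
    exact_mod_cast h1
  refine ⟨μ, fun N hN => ?_, ?_⟩
  · refine ⟨fun k => ⟨_, hμcoord N k⟩, ?_, ?_, ?_⟩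
    · -- μ N ≠ 0
      intro h0
      obtain ⟨k⟩ := hNE
      have := hμpos N k
      rw [h0] at this
      simp at this
      linarith
    · -- connected support
      intro a _ b _
      apply Relation.ReflTransGen.mono _ a b (hindec a b)
      intro c d hcd
      refine ⟨?_, ?_, hcd.1, hcd.2⟩
      · have := hμpos N c; intro h; rw [h] at this; linarith
      · have := hμpos N d; intro h; rw [h] at this; linarith
    · -- antidominance
      intro α
      have hterm : ∀ β, (B α β : ℝ) * μ N β
          ≤ (B α β : ℝ) * ((N:ℝ) * x β) + |(B α β : ℝ)| + (B α β : ℝ) * ((R:ℝ) * p β) := by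
        intro β
        rw [hμcoord]
        push_cast
        have hc1 : (N:ℝ) * x β ≤ (⌈(N:ℝ) * x β⌉₊ : ℝ) := Nat.le_ceil _
        have hc2 : (⌈(N:ℝ) * x β⌉₊ : ℝ) ≤ (N:ℝ) * x β + 1 := by
          have h0 : 0 ≤ (N:ℝ) * x β := mul_nonneg (Nat.cast_nonneg N) (hx1 β)
          linarith [Nat.ceil_lt_add_one h0]
        rcases le_or_gt 0 ((B α β : ℝ)) with h | h
        · nlinarith [le_abs_self ((B α β : ℝ))]
        · nlinarith [neg_abs_le ((B α β : ℝ))]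
      calc (∑ β, (B α β : ℝ) * μ N β)
          ≤ ∑ β, ((B α β : ℝ) * ((N:ℝ) * x β) + |(B α β : ℝ)| + (B α β : ℝ) * ((R:ℝ) * p β)) :=
            Finset.sum_le_sum fun β _ => hterm β
        _ = (∑ β, (B α β : ℝ) * ((N:ℝ) * x β)) + (∑ β, |(B α β : ℝ)|)
            + (∑ β, (B α β : ℝ) * ((R:ℝ) * (p β : ℝ))) := by
            rw [Finset.sum_add_distrib, Finset.sum_add_distrib]
        _ = (N:ℝ) * (∑ β, (B α β : ℝ) * x β) + (∑ β, |(B α β : ℝ)|)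
            + (R:ℝ) * (∑ β, (B α β : ℝ) * (p β : ℝ)) := by
            rw [Finset.mul_sum, Finset.mul_sum]
            congr 1
            congr 1
            · exact Finset.sum_congr rfl fun β _ => by ring
            · exact Finset.sum_congr rfl fun β _ => by ring
        _ ≤ (N:ℝ) * 0 + ((R:ℝ) - 1) + (R:ℝ) * (-1) := by
            have h1 : (∑ β, (B α β : ℝ) * x β) ≤ 0 := hx2 α
            have h2' : (0:ℝ) ≤ (N:ℝ) := Nat.cast_nonneg N
            have h3 := hRabs α
            have h4 := hp2 α
            have h5 : (0:ℝ) ≤ (R:ℝ) := Nat.cast_nonneg R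
            nlinarith [mul_le_mul_of_nonneg_left h1 h2', mul_le_mul_of_nonneg_left h4 h5]
        _ ≤ 0 := by ring_nf; norm_num
  · -- convergence
    have hcoords : ∀ k, Filter.Tendsto (fun N : ℕ => (((N:ℝ))⁻¹ • μ N) k)
        Filter.atTop (𝓝 (x k)) := by
      intro k
      have hlow : ∀ᶠ N : ℕ in Filter.atTop, x k ≤ (((N:ℝ))⁻¹ • μ N) k := by
        filter_upwards [Filter.eventually_ge_atTop 1] with N hN
        have hNpos : (0:ℝ) < (N:ℝ) := by exact_mod_cast hN
        rw [PiLp.smul_apply, smul_eq_mul, hμcoord, Nat.cast_add, Nat.cast_mul]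
        have hc1 : (N:ℝ) * x k ≤ (⌈(N:ℝ) * x k⌉₊ : ℝ) := Nat.le_ceil _
        rw [← sub_nonneg]
        have expand : (N:ℝ)⁻¹ * ((⌈(N:ℝ) * x k⌉₊ : ℝ) + (R:ℝ) * (p k : ℝ)) - x k
            = (N:ℝ)⁻¹ * (((⌈(N:ℝ) * x k⌉₊ : ℝ) - (N:ℝ) * x k) + (R:ℝ) * (p k : ℝ)) := by
          field_simp
          ring
        rw [expand]
        apply mul_nonneg (by positivity)
        have : (0:ℝ) ≤ (R:ℝ) * (p k : ℝ) := by positivity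
        linarith
      have hhigh : ∀ᶠ N : ℕ in Filter.atTop,
          (((N:ℝ))⁻¹ • μ N) k ≤ x k + ((N:ℝ))⁻¹ * (1 + (R:ℝ) * (p k : ℝ)) := by
        filter_upwards [Filter.eventually_ge_atTop 1] with N hN
        have hNpos : (0:ℝ) < (N:ℝ) := by exact_mod_cast hN
        rw [PiLp.smul_apply, smul_eq_mul, hμcoord, Nat.cast_add, Nat.cast_mul]
        have h0 : 0 ≤ (N:ℝ) * x k := mul_nonneg (Nat.cast_nonneg N) (hx1 k)
        have hc2 : (⌈(N:ℝ) * x k⌉₊ : ℝ) ≤ (N:ℝ) * x k + 1 := by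
          linarith [Nat.ceil_lt_add_one h0]
        rw [← sub_nonneg]
        have expand : x k + (N:ℝ)⁻¹ * (1 + (R:ℝ) * (p k:ℝ))
            - (N:ℝ)⁻¹ * ((⌈(N:ℝ) * x k⌉₊ : ℝ) + (R:ℝ) * (p k : ℝ))
            = (N:ℝ)⁻¹ * (((N:ℝ) * x k + 1) - (⌈(N:ℝ) * x k⌉₊ : ℝ)) := by
          field_simp
          ring
        rw [expand]
        apply mul_nonneg (by positivity)
        linarith
      have hlim2 : Filter.Tendsto (fun N : ℕ => x k + ((N:ℝ))⁻¹ * (1 + (R:ℝ) * (p k : ℝ)))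
          Filter.atTop (𝓝 (x k)) := by
        have h1 : Filter.Tendsto (fun N : ℕ => ((N:ℝ))⁻¹) Filter.atTop (𝓝 0) :=
          tendsto_inv_atTop_zero.comp tendsto_natCast_atTop_atTop
        have h2' := (h1.mul_const (1 + (R:ℝ) * (p k : ℝ))).const_add (x k)
        simpa using h2'
      exact tendsto_of_tendsto_of_tendsto_of_le_of_le' tendsto_const_nhds hlim2 hlow hhigh
    -- assemble coordinatewise convergence
    have h1 : Filter.Tendsto (fun N : ℕ => (PiLp.continuousLinearEquiv 2 ℝ (fun _ : π => ℝ))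
        (((N:ℝ))⁻¹ • μ N)) Filter.atTop
        (𝓝 ((PiLp.continuousLinearEquiv 2 ℝ (fun _ : π => ℝ)) x)) := by
      rw [tendsto_pi_nhds]
      exact hcoords
    have h2' := ((PiLp.continuousLinearEquiv 2 ℝ (fun _ : π => ℝ)).symm.continuous.tendsto
      _).comp h1
    simpa [Function.comp_def] using h2'

/-! ### final assembly -/

lemma z_smul {c : ℝ} (hc : 0 < c) (μ : V) : ‖c • μ‖⁻¹ • (c • μ) = ‖μ‖⁻¹ • μ := by
  rcases eq_or_ne μ 0 with rfl | hμ
  · simp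
  · rw [norm_smul, Real.norm_eq_abs, abs_of_pos hc, smul_smul]
    congr 1
    have hn : ‖μ‖ ≠ 0 := norm_ne_zero_iff.mpr hμ
    have hc' : c ≠ 0 := hc.ne'
    field_simp

lemma tendsto_z {f : ℕ → V} {x : V} (hx : x ≠ 0) (hf : Filter.Tendsto f Filter.atTop (𝓝 x)) :
    Filter.Tendsto (fun n => ‖f n‖⁻¹ • f n) Filter.atTop (𝓝 (‖x‖⁻¹ • x)) :=
  ((hf.norm.inv₀ (norm_ne_zero_iff.mpr hx)).smul hf)

include h2 in
lemma interior_point (hoff : ∀ α β, α ≠ β → B α β ≤ 0)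
    (hzero : ∀ α β, B α β = 0 ↔ B β α = 0)
    (hIND : ∃ u : π → ℝ, (∀ α, 0 < u α) ∧ ∀ α, (∑ β, (B α β : ℝ) * u β) < 0) :
    ∃ y : V, y ∈ interior (gcmQpp B) := by
  obtain ⟨u, hu, hBu⟩ := hIND
  set U : Set V := {z : V | (∀ k, 0 < z k) ∧ (∀ l, phiB B l z < 0)} with hU
  have hUopen : IsOpen U := by
    have : U = (⋂ k, {z : V | 0 < z k}) ∩ (⋂ l, {z : V | phiB B l z < 0}) := by
      ext z
      simp [hU, Set.mem_iInter]
    rw [this]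
    apply IsOpen.inter
    · exact isOpen_iInter_of_finite fun k =>
        isOpen_lt continuous_const (coord_continuous k)
    · exact isOpen_iInter_of_finite fun l =>
        isOpen_lt ((phiB B l).continuous_of_finiteDimensional) continuous_const
  have hUsub : U ⊆ gcmQpp B := by
    rintro z ⟨hz1, hz2⟩
    exact antidominant_mem_qpp B h2 hoff hzero (fun k => le_of_lt (hz1 k))
      (fun l => le_of_lt (hz2 l))
  set y : V := (WithLp.equiv 2 (π → ℝ)).symm u with hy
  have hymem : y ∈ U := by
    constructor
    · intro k; exact hu k
    · intro l; exact hBu l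
  exact ⟨y, interior_maximal hUsub hUopen hymem⟩

lemma lhs_eq : {ν : V | ∃ μ ∈ gcmQpp B, μ ≠ 0 ∧ ν = ‖μ‖⁻¹ • μ}
    = gcmQpp B ∩ Metric.sphere 0 1 := by
  ext ν
  constructor
  · rintro ⟨μ, hμ, hμ0, rfl⟩
    constructor
    · exact qpp_smul B hμ (inv_nonneg.mpr (norm_nonneg μ))
    · rw [mem_sphere_zero_iff_norm, norm_smul, Real.norm_eq_abs, abs_inv, abs_norm]
      exact inv_mul_cancel₀ (norm_ne_zero_iff.mpr hμ0)
  · rintro ⟨hν, hsph⟩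
    rw [mem_sphere_zero_iff_norm] at hsph
    refine ⟨ν, hν, ?_, ?_⟩
    · intro h; rw [h] at hsph; simp at hsph
    · rw [hsph]; simp

include h2 in
lemma interior_z_mem_closure (hoff : ∀ α β, α ≠ β → B α β ≤ 0)
    (hzero : ∀ α β, B α β = 0 ↔ B β α = 0)
    (hindec : ∀ a b : π, Relation.ReflTransGen (fun x y => x ≠ y ∧ B x y ≠ 0) a b)
    (hIND : ∃ u : π → ℝ, (∀ α, 0 < u α) ∧ ∀ α, (∑ β, (B α β : ℝ) * u β) < 0)
    {x : V} (hxint : x ∈ interior (gcmQpp B)) (hx0 : x ≠ 0) :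
    ‖x‖⁻¹ • x ∈ closure {ν : V | ∃ α ∈ gcmImPlus B, ν = ‖α‖⁻¹ • α} := by
  have hNE : Nonempty π := by
    by_contra hne
    apply hx0
    have hE : IsEmpty π := not_nonempty_iff.mp hne
    apply PiLp.ext
    intro k
    exact (IsEmpty.elim hE k)
  obtain ⟨p, hp1, hp2⟩ := exists_int_ind B hIND
  obtain ⟨w, hw, hw1, hw2⟩ := exists_descent B h2 hxint
  have hwx0 : w x ≠ 0 := by
    intro h
    apply hx0
    apply w.injective
    rw [map_zero]
    exact h
  obtain ⟨μseq, hμK, hμlim⟩ := approx_in_K B hNE hindec p hp1 hp2 (w x) hw1 hw2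
  have hαmem : ∀ N : ℕ, 1 ≤ N → w⁻¹ (μseq N) ∈ gcmImPlus B := by
    intro N hN
    rw [gcmImPlus]
    simp only [Set.mem_iUnion]
    exact ⟨w⁻¹, Subgroup.inv_mem _ hw, μseq N, hμK N hN, rfl⟩
  have hlim2 : Filter.Tendsto (fun N : ℕ => ((N:ℝ))⁻¹ • (w⁻¹ (μseq N)))
      Filter.atTop (𝓝 x) := by
    have hc := ((equiv_continuous (w⁻¹)).tendsto (w x)).comp hμlim
    have he : (⇑(w⁻¹) ∘ fun N : ℕ => ((N:ℝ))⁻¹ • μseq N)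
        = fun N : ℕ => ((N:ℝ))⁻¹ • (w⁻¹ (μseq N)) := by
      funext N
      simp [Function.comp, map_smul]
    rw [he] at hc
    have hx' : w⁻¹ (w x) = x := by
      rw [inv_apply', LinearEquiv.symm_apply_apply]
    rw [hx'] at hc
    exact hc
  have hz := tendsto_z hx0 hlim2
  apply mem_closure_of_tendsto hz
  filter_upwards [Filter.eventually_ge_atTop 1] with N hN
  have hNpos : (0:ℝ) < ((N:ℝ))⁻¹ := by
    have : (0:ℝ) < (N:ℝ) := by exact_mod_cast hN
    positivity
  rw [z_smul hNpos]
  exact ⟨w⁻¹ (μseq N), hαmem N hN, rfl⟩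

include h2 in
theorem stmt10aux (hoff : ∀ α β, α ≠ β → B α β ≤ 0)
    (hzero : ∀ α β, B α β = 0 ↔ B β α = 0)
    (hindec : ∀ a b : π, Relation.ReflTransGen (fun x y => x ≠ y ∧ B x y ≠ 0) a b)
    (hIND : ∃ u : π → ℝ, (∀ α, 0 < u α) ∧ ∀ α, (∑ β, (B α β : ℝ) * u β) < 0) :
    {ν : V | ∃ μ ∈ gcmQpp B, μ ≠ 0 ∧ ν = ‖μ‖⁻¹ • μ} =
      closure {ν : V | ∃ α ∈ gcmImPlus B, ν = ‖α‖⁻¹ • α} := by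
  apply Set.Subset.antisymm
  · -- ⊆ : density
    rintro ν ⟨μ, hμQpp, hμ0, rfl⟩
    obtain ⟨y0, hy0⟩ := interior_point B h2 hoff hzero hIND
    set xn : ℕ → V := fun n => μ + (((n:ℝ)+1))⁻¹ • (y0 - μ) with hxn
    have hxint : ∀ n, xn n ∈ interior (gcmQpp B) := by
      intro n
      apply (qpp_convex B).add_smul_sub_mem_interior hμQpp hy0
      constructor
      · positivity
      · rw [inv_le_one_iff₀]
        right
        have : (0:ℝ) ≤ (n:ℝ) := Nat.cast_nonneg n
        linarith
    have hxlim : Filter.Tendsto xn Filter.atTop (𝓝 μ) := by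
      have h1 : Filter.Tendsto (fun n : ℕ => (((n:ℝ)+1))⁻¹) Filter.atTop (𝓝 0) := by
        apply tendsto_inv_atTop_zero.comp
        apply Filter.tendsto_atTop_add_const_right
        exact tendsto_natCast_atTop_atTop
      have h2' := (h1.smul_const (y0 - μ)).const_add μ
      simpa using h2'
    have hxn0 : ∀ᶠ n in Filter.atTop, xn n ≠ 0 := hxlim.eventually_ne hμ0
    have hzlim := tendsto_z hμ0 hxlim
    have hmem : ∀ᶠ n in Filter.atTop,
        ‖xn n‖⁻¹ • xn n ∈ closure {ν : V | ∃ α ∈ gcmImPlus B, ν = ‖α‖⁻¹ • α} := by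
      filter_upwards [hxn0] with n hn
      exact interior_z_mem_closure B h2 hoff hzero hindec hIND (hxint n) hn
    have := mem_closure_of_tendsto hzlim hmem
    rwa [closure_closure] at this
  · -- ⊇ : closedness
    have hclosed : IsClosed {ν : V | ∃ μ ∈ gcmQpp B, μ ≠ 0 ∧ ν = ‖μ‖⁻¹ • μ} := by
      rw [lhs_eq]
      exact (qpp_closed B).inter Metric.isClosed_sphere
    apply closure_minimal _ hclosed
    rintro ν ⟨α, hα, rfl⟩
    obtain ⟨hQPP, h0⟩ := imPlus_subset_qpp B h2 hoff hzero hα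
    exact ⟨α, hQPP, h0, rfl⟩

end aux

/-- For an indecomposable generalized Cartan matrix of type (IND), the set
`{z_μ : μ ∈ Q^{++}_ℝ, μ ≠ 0}` is the closure of `{z_α : α ∈ Δ^{im,+}}` in `V`. -/
theorem stmt10 (B : π → π → ℤ)
    (hdiag : ∀ α, B α α = 2)
    (hoff : ∀ α β, α ≠ β → B α β ≤ 0)
    (hzero : ∀ α β, B α β = 0 ↔ B β α = 0)
    (hindec : ∀ a b : π, Relation.ReflTransGen (fun x y => x ≠ y ∧ B x y ≠ 0) a b)
    (hIND : ∃ u : π → ℝ, (∀ α, 0 < u α) ∧ ∀ α, (∑ β, (B α β : ℝ) * u β) < 0) :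
    {ν | ∃ μ ∈ gcmQpp B, μ ≠ 0 ∧ ν = ‖μ‖⁻¹ • μ} =
      closure {ν | ∃ α ∈ gcmImPlus B, ν = ‖α‖⁻¹ • α} :=
  stmt10aux B hdiag hoff hzero hindec hIND

end
end KMS10
end

section
/- For the component Q^{+-}(m,n,t): all three x_i are reflectable at v and isotropic, the spine consists of exactly four vertices, Sp(v) = {v, v_1, v_2, v_3} where v_i := r_{x_i}(v), the set of simple roots at v_i is Sigma_{v_i} = {-beta_i} union {alpha_j : j != i}, and Sigma_pr = pi = {alpha_1, alpha_2, alpha_3}. -/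
open scoped ComplexOrder

attribute [local instance] Classical.propDecidable

namespace KMS

section Aux

variable {X : Type*} [Fintype X] {H : Type*} [AddCommGroup H] [Module ℂ H]

theorem RootDatum.ext' {v u : RootDatum X H} (ha : ∀ y, v.a y = u.a y)
    (hb : ∀ y, v.b y = u.b y) (hp : ∀ y, v.p y = u.p y) : v = u := by
  cases v; cases u
  simp only [RootDatum.mk.injEq]
  exact ⟨funext ha, funext hb, funext hp⟩

theorem iso_unique {x : X} {v u u' : RootDatum X H} (h : IsIsoReflexion x v u)
    (h' : IsIsoReflexion x v u') : u = u' := by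
  obtain ⟨-, -, ha, hb, hp, hy⟩ := h
  obtain ⟨-, -, ha', hb', hp', hy'⟩ := h'
  apply RootDatum.ext' <;> intro y <;> by_cases hyx : y = x
  · rw [hyx, ha, ha']
  · rcases eq_or_ne (cartan v x y) 0 with hc | hc
    · rw [((hy y hyx).1 hc).1, ((hy' y hyx).1 hc).1]
    · rw [((hy y hyx).2 hc).1, ((hy' y hyx).2 hc).1]
  · rw [hyx, hb, hb']
  · rcases eq_or_ne (cartan v x y) 0 with hc | hc
    · rw [((hy y hyx).1 hc).2.1, ((hy' y hyx).1 hc).2.1]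
    · rw [((hy y hyx).2 hc).2.1, ((hy' y hyx).2 hc).2.1]
  · rw [hyx, hp, hp']
  · rcases eq_or_ne (cartan v x y) 0 with hc | hc
    · rw [((hy y hyx).1 hc).2.2, ((hy' y hyx).1 hc).2.2]
    · rw [((hy y hyx).2 hc).2.2, ((hy' y hyx).2 hc).2.2]

theorem spine_sub_skeleton {v : RootDatum X H} : Spine v ⊆ Skeleton v := by
  rintro u ⟨ms, hpath⟩
  refine ⟨ms, ?_⟩
  induction hpath with
  | nil => exact IsPath.nil _
  | cons hr _ ih => exact IsPath.cons (Or.inr hr) ih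

end Aux
section Aux2
variable {H : Type*} [AddCommGroup H] [Module ℂ H]

theorem li_zero {f g : Fin 3 → H} (hf : LinearIndependent ℂ f) (s t : ℂ)
    (h0 : g 0 = -f 0) (h1 : g 1 = f 1 + s • f 0) (h2 : g 2 = f 2 + t • f 0) :
    LinearIndependent ℂ g := by
  rw [Fintype.linearIndependent_iff] at hf ⊢
  intro c hc
  rw [Fin.sum_univ_three, h0, h1, h2] at hc
  have key : ∀ i, (![-c 0 + c 1 * s + c 2 * t, c 1, c 2] : Fin 3 → ℂ) i = 0 := by
    apply hf
    rw [Fin.sum_univ_three]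
    simp only [Matrix.cons_val_zero, Matrix.cons_val_one, Matrix.head_cons,
      Matrix.cons_val_two, Matrix.tail_cons]
    rw [← hc]
    module
  have k0 := key 0; have k1 := key 1; have k2 := key 2
  simp only [Matrix.cons_val_zero, Matrix.cons_val_one, Matrix.head_cons,
    Matrix.cons_val_two, Matrix.tail_cons] at k0 k1 k2
  intro i
  fin_cases i
  · simpa [k1, k2] using k0
  · exact k1
  · exact k2

theorem li_one {f g : Fin 3 → H} (hf : LinearIndependent ℂ f) (s t : ℂ)
    (h0 : g 0 = f 0 + s • f 1) (h1 : g 1 = -f 1) (h2 : g 2 = f 2 + t • f 1) :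
    LinearIndependent ℂ g := by
  rw [Fintype.linearIndependent_iff] at hf ⊢
  intro c hc
  rw [Fin.sum_univ_three, h0, h1, h2] at hc
  have key : ∀ i, (![c 0, -c 1 + c 0 * s + c 2 * t, c 2] : Fin 3 → ℂ) i = 0 := by
    apply hf
    rw [Fin.sum_univ_three]
    simp only [Matrix.cons_val_zero, Matrix.cons_val_one, Matrix.head_cons,
      Matrix.cons_val_two, Matrix.tail_cons]
    rw [← hc]
    module
  have k0 := key 0; have k1 := key 1; have k2 := key 2
  simp only [Matrix.cons_val_zero, Matrix.cons_val_one, Matrix.head_cons,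
    Matrix.cons_val_two, Matrix.tail_cons] at k0 k1 k2
  intro i
  fin_cases i
  · exact k0
  · simpa [k0, k2] using k1
  · exact k2

theorem li_two {f g : Fin 3 → H} (hf : LinearIndependent ℂ f) (s t : ℂ)
    (h0 : g 0 = f 0 + s • f 2) (h1 : g 1 = f 1 + t • f 2) (h2 : g 2 = -f 2) :
    LinearIndependent ℂ g := by
  rw [Fintype.linearIndependent_iff] at hf ⊢
  intro c hc
  rw [Fin.sum_univ_three, h0, h1, h2] at hc
  have key : ∀ i, (![c 0, c 1, -c 2 + c 0 * s + c 1 * t] : Fin 3 → ℂ) i = 0 := by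
    apply hf
    rw [Fin.sum_univ_three]
    simp only [Matrix.cons_val_zero, Matrix.cons_val_one, Matrix.head_cons,
      Matrix.cons_val_two, Matrix.tail_cons]
    rw [← hc]
    module
  have k0 := key 0; have k1 := key 1; have k2 := key 2
  simp only [Matrix.cons_val_zero, Matrix.cons_val_one, Matrix.head_cons,
    Matrix.cons_val_two, Matrix.tail_cons] at k0 k1 k2
  intro i
  fin_cases i
  · exact k0
  · exact k1
  · simpa [k0, k1] using k2

end Aux2
section Aux3
variable {X : Type*} [Fintype X] {H : Type*} [AddCommGroup H] [Module ℂ H]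

theorem skeleton_parity (v : RootDatum X H) (hp1 : ∀ x, v.p x = 1) :
    ∀ u ∈ Skeleton v, ∀ x, ∃ k : X → ℤ,
      u.b x = ∑ i, (k i : ℂ) • v.b i ∧ u.p x = ((∑ i, k i : ℤ) : ZMod 2) := by
  set P : RootDatum X H → Prop := fun u => ∀ x, ∃ k : X → ℤ,
      u.b x = ∑ i, (k i : ℂ) • v.b i ∧ u.p x = ((∑ i, k i : ℤ) : ZMod 2) with hP
  have base : P v := by
    intro x
    refine ⟨fun i => if i = x then 1 else 0, ?_, ?_⟩
    · have e : ∀ i ∈ Finset.univ, (((if i = x then (1 : ℤ) else 0) : ℤ) : ℂ) • v.b i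
          = if i = x then v.b i else 0 := by
        intro i _; split <;> simp
      rw [Finset.sum_congr rfl e, Finset.sum_ite_eq' Finset.univ x,
        if_pos (Finset.mem_univ x)]
    · rw [Finset.sum_ite_eq' Finset.univ x, if_pos (Finset.mem_univ x), hp1]
      norm_num
  have step : ∀ (z : X) (w w' : RootDatum X H), IsReflexion z w w' → P w → P w' := by
    intro z w w' hr hw
    rcases hr with ⟨href, hzz, hpw, hA, hB⟩ | ⟨href, hzz, haz, hbz, hpz, hy⟩
    · -- anisotropic
      intro x
      obtain ⟨kz, hkzb, hkzp⟩ := hw z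
      obtain ⟨kx, hkxb, hkxp⟩ := hw x
      have main : ∀ d : ℤ, (d : ℂ) = 2 * cartan w z x / cartan w z z →
          ((d : ℤ) : ZMod 2) * ((∑ i, kz i : ℤ) : ZMod 2) = 0 →
          ∃ k : X → ℤ, w'.b x = ∑ i, (k i : ℂ) • v.b i ∧
            w'.p x = ((∑ i, k i : ℤ) : ZMod 2) := by
        intro d hd hzero
        refine ⟨fun i => kx i - d * kz i, ?_, ?_⟩
        · rw [hB x, hkxb, hkzb, ← hd]
          push_cast
          rw [Finset.smul_sum, ← Finset.sum_sub_distrib]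
          exact Finset.sum_congr rfl fun i _ => by rw [sub_smul, mul_smul]
        · have e : (∑ i, (kx i - d * kz i)) = (∑ i, kx i) - d * ∑ i, kz i := by
            rw [Finset.sum_sub_distrib, Finset.mul_sum]
          rw [hpw, hkxp, e, Int.cast_sub, Int.cast_mul, hzero, sub_zero]
      rcases href with ⟨h0, -⟩ | ⟨-, hp0, hall⟩ | ⟨-, hp1', hall⟩
      · exact absurd h0 hzz
      · have hzero : ((∑ i, kz i : ℤ) : ZMod 2) = 0 := by rw [← hkzp, hp0]
        rcases eq_or_ne x z with rfl | hxz
        · exact main 2 (by field_simp; norm_num) (by rw [hzero, mul_zero])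
        · obtain ⟨nn, hnn⟩ := hall x (Ne.symm (fun h => hxz h.symm))
          exact main (-(nn : ℤ)) (by push_cast; rw [← hnn]) (by rw [hzero, mul_zero])
      · rcases eq_or_ne x z with rfl | hxz
        · refine main 2 (by field_simp; norm_num) ?_
          rw [show ((2 : ℤ) : ZMod 2) = 0 by decide, zero_mul]
        · obtain ⟨nn, hnn⟩ := hall x (Ne.symm (fun h => hxz h.symm))
          refine main (-(2 * nn : ℤ)) ?_ ?_
          · push_cast
            rw [mul_div_assoc, hnn]
            ring
          · rw [Int.cast_neg, Int.cast_mul, show ((2 : ℤ) : ZMod 2) = 0 by decide,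
              zero_mul, neg_zero, zero_mul]
    · -- isotropic
      have hpz1 : w.p z = 1 := by
        rcases href with ⟨-, h⟩ | ⟨h, -⟩ | ⟨h, -⟩
        · exact h
        · exact absurd hzz h
        · exact absurd hzz h
      obtain ⟨kz, hkzb, hkzp⟩ := hw z
      have hkz1 : ((∑ i, kz i : ℤ) : ZMod 2) = 1 := by rw [← hkzp, hpz1]
      intro x
      rcases eq_or_ne x z with rfl | hxz
      · refine ⟨fun i => -kz i, ?_, ?_⟩
        · rw [hbz, hkzb]
          push_cast
          rw [← Finset.sum_neg_distrib]
          exact Finset.sum_congr rfl fun i _ => by rw [neg_smul]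
        · rw [hpz, hkzp, Finset.sum_neg_distrib, Int.cast_neg, hkz1]
          decide
      · obtain ⟨kx, hkxb, hkxp⟩ := hw x
        have hxz' : x ≠ z := hxz
        rcases eq_or_ne (cartan w z x) 0 with hc | hc
        · obtain ⟨-, hBx, hPx⟩ := (hy x hxz').1 hc
          exact ⟨kx, by rw [hBx, hkxb], by rw [hPx, hkxp]⟩
        · obtain ⟨-, hBx, hPx⟩ := (hy x hxz').2 hc
          refine ⟨fun i => kx i + kz i, ?_, ?_⟩
          · rw [hBx, hkxb, hkzb]
            push_cast
            rw [← Finset.sum_add_distrib]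
            exact Finset.sum_congr rfl fun i _ => by rw [add_smul]
          · rw [hPx, hkxp, Finset.sum_add_distrib, Int.cast_add, hkz1]
  have main : ∀ (w : RootDatum X H) (ms : List X) (u : RootDatum X H),
      IsPath w ms u → P w → P u := by
    intro w ms u h
    induction h with
    | nil => exact id
    | cons hr _ ih => exact fun hw => ih (step _ _ _ hr hw)
  rintro u ⟨ms, hpath⟩
  exact main v ms u hpath base
end Aux3
/-- For the component `Q^±(m,n,t)`: all three `x_i` are reflectable at `v`
and isotropic, the spine consists of exactly four vertices `{v, v₁, v₂, v₃}` with
`v_i = r_{x_i}(v)`, `Σ_{v_i} = {-β_i} ∪ {α_j : j ≠ i}`, and `Σ_pr = π = {α_1, α_2, α_3}`. -/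
theorem stmt11 {H : Type*} [AddCommGroup H] [Module ℂ H] [FiniteDimensional ℂ H]
    (m n t : ℕ) (hm : 0 < m) (hn : 0 < n) (ht : 0 < t) (hmnt : 1 < m * n * t)
    (a b c : ℂ) (ha : a ≠ 0) (hb : b ≠ 0) (hc : c ≠ 0)
    (hra : 1 + a + 1 / c = -(m : ℂ)) (hrb : 1 + b + 1 / a = -(n : ℂ))
    (hrc : 1 + c + 1 / b = -(t : ℂ))
    (v : RootDatum (Fin 3) H) (hdim : Module.finrank ℂ H = 3)
    (hp : ∀ i, v.p i = 1)
    (h00 : cartan v 0 0 = 0) (h01 : cartan v 0 1 = a) (h02 : cartan v 0 2 = 1)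
    (h10 : cartan v 1 0 = 1) (h11 : cartan v 1 1 = 0) (h12 : cartan v 1 2 = b)
    (h20 : cartan v 2 0 = c) (h21 : cartan v 2 1 = 1) (h22 : cartan v 2 2 = 0) :
    (∀ i, Reflectable v i ∧ cartan v i i = 0) ∧
    ∃ v₁ v₂ v₃ : RootDatum (Fin 3) H,
      IsIsoReflexion 0 v v₁ ∧ IsIsoReflexion 1 v v₂ ∧ IsIsoReflexion 2 v v₃ ∧
      Spine v = {v, v₁, v₂, v₃} ∧ (Spine v).ncard = 4 ∧
      Set.range v₁.b =
        {-v.b 0, (v.b 0 + v.b 1 + v.b 2) - v.b 1, (v.b 0 + v.b 1 + v.b 2) - v.b 2} ∧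
      Set.range v₂.b =
        {-v.b 1, (v.b 0 + v.b 1 + v.b 2) - v.b 0, (v.b 0 + v.b 1 + v.b 2) - v.b 2} ∧
      Set.range v₃.b =
        {-v.b 2, (v.b 0 + v.b 1 + v.b 2) - v.b 0, (v.b 0 + v.b 1 + v.b 2) - v.b 1} ∧
      SigmaPr v = {(v.b 0 + v.b 1 + v.b 2) - v.b 0, (v.b 0 + v.b 1 + v.b 2) - v.b 1,
                   (v.b 0 + v.b 1 + v.b 2) - v.b 2} ∧
      piSet v = {(v.b 0 + v.b 1 + v.b 2) - v.b 0, (v.b 0 + v.b 1 + v.b 2) - v.b 1,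
                 (v.b 0 + v.b 1 + v.b 2) - v.b 2} := by
  -- base evaluation facts
  have hb00 : v.b 0 (v.a 0) = 0 := h00
  have hb01 : v.b 1 (v.a 0) = a := h01
  have hb02 : v.b 2 (v.a 0) = 1 := h02
  have hb10 : v.b 0 (v.a 1) = 1 := h10
  have hb11 : v.b 1 (v.a 1) = 0 := h11
  have hb12 : v.b 2 (v.a 1) = b := h12
  have hb20 : v.b 0 (v.a 2) = c := h20
  have hb21 : v.b 1 (v.a 2) = 1 := h21
  have hb22 : v.b 2 (v.a 2) = 0 := h22
  obtain ⟨v₁, a1_0, a1_1, a1_2, b1_0, b1_1, b1_2, p1⟩ :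
      ∃ v₁ : RootDatum (Fin 3) H, v₁.a 0 = -v.a 0 ∧ v₁.a 1 = v.a 1 + a⁻¹ • v.a 0 ∧
        v₁.a 2 = v.a 2 + c • v.a 0 ∧ v₁.b 0 = -v.b 0 ∧ v₁.b 1 = v.b 1 + v.b 0 ∧
        v₁.b 2 = v.b 2 + v.b 0 ∧ v₁.p = ![1, 0, 0] :=
    ⟨⟨![-v.a 0, v.a 1 + a⁻¹ • v.a 0, v.a 2 + c • v.a 0],
      ![-v.b 0, v.b 1 + v.b 0, v.b 2 + v.b 0], ![1, 0, 0],
      li_zero v.lin_indep_a a⁻¹ c rfl rfl rfl,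
      li_zero v.lin_indep_b 1 1 rfl (by simp) (by simp)⟩,
      rfl, rfl, rfl, rfl, rfl, rfl, rfl⟩
  obtain ⟨v₂, a2_0, a2_1, a2_2, b2_0, b2_1, b2_2, p2⟩ :
      ∃ v₂ : RootDatum (Fin 3) H, v₂.a 0 = v.a 0 + a • v.a 1 ∧ v₂.a 1 = -v.a 1 ∧
        v₂.a 2 = v.a 2 + b⁻¹ • v.a 1 ∧ v₂.b 0 = v.b 0 + v.b 1 ∧ v₂.b 1 = -v.b 1 ∧
        v₂.b 2 = v.b 2 + v.b 1 ∧ v₂.p = ![0, 1, 0] :=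
    ⟨⟨![v.a 0 + a • v.a 1, -v.a 1, v.a 2 + b⁻¹ • v.a 1],
      ![v.b 0 + v.b 1, -v.b 1, v.b 2 + v.b 1], ![0, 1, 0],
      li_one v.lin_indep_a a b⁻¹ rfl rfl rfl,
      li_one v.lin_indep_b 1 1 (by simp) rfl (by simp)⟩,
      rfl, rfl, rfl, rfl, rfl, rfl, rfl⟩
  obtain ⟨v₃, a3_0, a3_1, a3_2, b3_0, b3_1, b3_2, p3⟩ :
      ∃ v₃ : RootDatum (Fin 3) H, v₃.a 0 = v.a 0 + c⁻¹ • v.a 2 ∧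
        v₃.a 1 = v.a 1 + b • v.a 2 ∧ v₃.a 2 = -v.a 2 ∧ v₃.b 0 = v.b 0 + v.b 2 ∧
        v₃.b 1 = v.b 1 + v.b 2 ∧ v₃.b 2 = -v.b 2 ∧ v₃.p = ![0, 0, 1] :=
    ⟨⟨![v.a 0 + c⁻¹ • v.a 2, v.a 1 + b • v.a 2, -v.a 2],
      ![v.b 0 + v.b 2, v.b 1 + v.b 2, -v.b 2], ![0, 0, 1],
      li_two v.lin_indep_a c⁻¹ b rfl rfl rfl,
      li_two v.lin_indep_b 1 1 (by simp) (by simp) rfl⟩,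
      rfl, rfl, rfl, rfl, rfl, rfl, rfl⟩
  -- relation preprocessing
  have hra0 : a + c⁻¹ + 1 = -(m : ℂ) := by rw [← hra, one_div]; ring
  have hrb0 : b + a⁻¹ + 1 = -(n : ℂ) := by rw [← hrb, one_div]; ring
  have hrc0 : c + b⁻¹ + 1 = -(t : ℂ) := by rw [← hrc, one_div]; ring
  have hra1 : 1 + c + c * a = -(m : ℂ) * c := by
    rw [← hra0]; field_simp; ring
  have hrb1 : 1 + a + a * b = -(n : ℂ) * a := by
    rw [← hrb0]; field_simp; ring
  have hrc1 : 1 + b + b * c = -(t : ℂ) * b := by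
    rw [← hrc0]; field_simp; ring
  -- cartan tables
  have c100 : cartan v₁ 0 0 = 0 := by
    simp only [cartan, a1_0, b1_0, map_neg, LinearMap.neg_apply, hb00]; ring
  have c101 : cartan v₁ 0 1 = -a := by
    simp only [cartan, a1_0, b1_1, map_neg, LinearMap.add_apply, hb00, hb01]; ring
  have c102 : cartan v₁ 0 2 = -1 := by
    simp only [cartan, a1_0, b1_2, map_neg, LinearMap.add_apply, hb00, hb02]; ring
  have c110 : cartan v₁ 1 0 = -1 := by
    simp only [cartan, a1_1, b1_0, map_add, map_smul, LinearMap.neg_apply, smul_eq_mul,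
      hb10, hb00]; ring
  have c111 : cartan v₁ 1 1 = 2 := by
    simp only [cartan, a1_1, b1_1, map_add, map_smul, LinearMap.add_apply, smul_eq_mul,
      hb10, hb11, hb00, hb01]
    field_simp
    ring
  have c112 : cartan v₁ 1 2 = -(n : ℂ) := by
    simp only [cartan, a1_1, b1_2, map_add, map_smul, LinearMap.add_apply, smul_eq_mul,
      hb12, hb02, hb10, hb00]
    rw [← hrb0]; ring
  have c120 : cartan v₁ 2 0 = -c := by
    simp only [cartan, a1_2, b1_0, map_add, map_smul, LinearMap.neg_apply, smul_eq_mul,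
      hb20, hb00]; ring
  have c121 : cartan v₁ 2 1 = -(m : ℂ) * c := by
    simp only [cartan, a1_2, b1_1, map_add, map_smul, LinearMap.add_apply, smul_eq_mul,
      hb21, hb01, hb20, hb00]
    rw [← hra1]; ring
  have c122 : cartan v₁ 2 2 = 2 * c := by
    simp only [cartan, a1_2, b1_2, map_add, map_smul, LinearMap.add_apply, smul_eq_mul,
      hb22, hb02, hb20, hb00]; ring
  have c200 : cartan v₂ 0 0 = 2 * a := by
    simp only [cartan, a2_0, b2_0, map_add, map_smul, LinearMap.add_apply, smul_eq_mul,
      hb00, hb01, hb10, hb11]; ring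
  have c201 : cartan v₂ 0 1 = -a := by
    simp only [cartan, a2_0, b2_1, map_add, map_smul, LinearMap.neg_apply, smul_eq_mul,
      hb01, hb11]; ring
  have c202 : cartan v₂ 0 2 = -(n : ℂ) * a := by
    simp only [cartan, a2_0, b2_2, map_add, map_smul, LinearMap.add_apply, smul_eq_mul,
      hb02, hb12, hb01, hb11]
    rw [← hrb1]; ring
  have c210 : cartan v₂ 1 0 = -1 := by
    simp only [cartan, a2_1, b2_0, map_neg, LinearMap.add_apply, hb10, hb11]; ring
  have c211 : cartan v₂ 1 1 = 0 := by
    simp only [cartan, a2_1, b2_1, map_neg, LinearMap.neg_apply, hb11]; ring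
  have c212 : cartan v₂ 1 2 = -b := by
    simp only [cartan, a2_1, b2_2, map_neg, LinearMap.add_apply, hb12, hb11]; ring
  have c220 : cartan v₂ 2 0 = -(t : ℂ) := by
    simp only [cartan, a2_2, b2_0, map_add, map_smul, LinearMap.add_apply, smul_eq_mul,
      hb20, hb21, hb10, hb11]
    rw [← hrc0]; field_simp; ring
  have c221 : cartan v₂ 2 1 = -1 := by
    simp only [cartan, a2_2, b2_1, map_add, map_smul, LinearMap.neg_apply, smul_eq_mul,
      hb21, hb11]; ring
  have c222 : cartan v₂ 2 2 = 2 := by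
    simp only [cartan, a2_2, b2_2, map_add, map_smul, LinearMap.add_apply, smul_eq_mul,
      hb22, hb21, hb12, hb11]
    field_simp
    ring
  have c300 : cartan v₃ 0 0 = 2 := by
    simp only [cartan, a3_0, b3_0, map_add, map_smul, LinearMap.add_apply, smul_eq_mul,
      hb00, hb02, hb20, hb22]
    field_simp
    ring
  have c301 : cartan v₃ 0 1 = -(m : ℂ) := by
    simp only [cartan, a3_0, b3_1, map_add, map_smul, LinearMap.add_apply, smul_eq_mul,
      hb01, hb02, hb21, hb22]
    rw [← hra0]; ring
  have c302 : cartan v₃ 0 2 = -1 := by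
    simp only [cartan, a3_0, b3_2, map_add, map_smul, LinearMap.neg_apply, smul_eq_mul,
      hb02, hb22]; ring
  have c310 : cartan v₃ 1 0 = -(t : ℂ) * b := by
    simp only [cartan, a3_1, b3_0, map_add, map_smul, LinearMap.add_apply, smul_eq_mul,
      hb10, hb12, hb20, hb22]
    rw [← hrc1]; ring
  have c311 : cartan v₃ 1 1 = 2 * b := by
    simp only [cartan, a3_1, b3_1, map_add, map_smul, LinearMap.add_apply, smul_eq_mul,
      hb11, hb12, hb21, hb22]; ring
  have c312 : cartan v₃ 1 2 = -b := by
    simp only [cartan, a3_1, b3_2, map_add, map_smul, LinearMap.neg_apply, smul_eq_mul,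
      hb12, hb22]; ring
  have c320 : cartan v₃ 2 0 = -c := by
    simp only [cartan, a3_2, b3_0, map_neg, LinearMap.add_apply, hb20, hb22]; ring
  have c321 : cartan v₃ 2 1 = -1 := by
    simp only [cartan, a3_2, b3_1, map_neg, LinearMap.add_apply, hb21, hb22]; ring
  have c322 : cartan v₃ 2 2 = 0 := by
    simp only [cartan, a3_2, b3_2, map_neg, LinearMap.neg_apply, hb22]; ring
  have two_ne : (2 : ℂ) ≠ 0 := two_ne_zero
  -- parity values
  have p1_0 : v₁.p 0 = 1 := by rw [p1]; rfl
  have p1_1 : v₁.p 1 = 0 := by rw [p1]; rfl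
  have p1_2 : v₁.p 2 = 0 := by rw [p1]; rfl
  have p2_0 : v₂.p 0 = 0 := by rw [p2]; rfl
  have p2_1 : v₂.p 1 = 1 := by rw [p2]; rfl
  have p2_2 : v₂.p 2 = 0 := by rw [p2]; rfl
  have p3_0 : v₃.p 0 = 0 := by rw [p3]; rfl
  have p3_1 : v₃.p 1 = 0 := by rw [p3]; rfl
  have p3_2 : v₃.p 2 = 1 := by rw [p3]; rfl
  -- reflectable facts
  have Rv : ∀ i, Reflectable v i ∧ cartan v i i = 0 := by
    intro i
    fin_cases i
    · exact ⟨Or.inl ⟨h00, hp 0⟩, h00⟩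
    · exact ⟨Or.inl ⟨h11, hp 1⟩, h11⟩
    · exact ⟨Or.inl ⟨h22, hp 2⟩, h22⟩
  have R1_1 : Reflectable v₁ 1 := by
    refine Or.inr (Or.inl ⟨by rw [c111]; exact two_ne, p1_1, ?_⟩)
    intro y hy
    fin_cases y <;> simp only [Fin.isValue, Fin.zero_eta, Fin.mk_one, Fin.reduceFinMk]
    · exact ⟨1, by rw [c110, c111]; norm_num⟩
    · exact absurd rfl hy
    · exact ⟨n, by rw [c111, c112]; field_simp⟩
  have R1_2 : Reflectable v₁ 2 := by
    refine Or.inr (Or.inl ⟨by rw [c122]; exact mul_ne_zero two_ne hc, p1_2, ?_⟩)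
    intro y hy
    fin_cases y <;> simp only [Fin.isValue, Fin.zero_eta, Fin.mk_one, Fin.reduceFinMk]
    · refine ⟨1, by rw [c122, c120]; field_simp; norm_num⟩
    · refine ⟨m, by rw [c122, c121]; field_simp⟩
    · exact absurd rfl hy
  have R2_2 : Reflectable v₂ 2 := by
    refine Or.inr (Or.inl ⟨by rw [c222]; exact two_ne, p2_2, ?_⟩)
    intro y hy
    fin_cases y <;> simp only [Fin.isValue, Fin.zero_eta, Fin.mk_one, Fin.reduceFinMk]
    · exact ⟨t, by rw [c222, c220]; field_simp⟩
    · exact ⟨1, by rw [c222, c221]; norm_num⟩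
    · exact absurd rfl hy
  -- the six isotropic reflexions
  have E01 : IsIsoReflexion 0 v v₁ := by
    refine ⟨(Rv 0).1, h00, a1_0, b1_0, by rw [p1_0, hp], ?_⟩
    intro y hy
    fin_cases y <;> simp only [Fin.isValue, Fin.zero_eta, Fin.mk_one, Fin.reduceFinMk]
    · exact absurd rfl hy
    · refine ⟨fun h => absurd (h01 ▸ h) ha, fun _ => ⟨?_, b1_1, ?_⟩⟩
      · rw [a1_1, h10, h01, one_div]
      · rw [p1_1, hp]; decide
    · refine ⟨fun h => by rw [h02] at h; exact absurd h one_ne_zero, fun _ => ⟨?_, b1_2, ?_⟩⟩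
      · rw [a1_2, h20, h02, div_one]
      · rw [p1_2, hp]; decide
  have E12 : IsIsoReflexion 1 v v₂ := by
    refine ⟨(Rv 1).1, h11, a2_1, b2_1, by rw [p2_1, hp], ?_⟩
    intro y hy
    fin_cases y <;> simp only [Fin.isValue, Fin.zero_eta, Fin.mk_one, Fin.reduceFinMk]
    · refine ⟨fun h => by rw [h10] at h; exact absurd h one_ne_zero, fun _ => ⟨?_, b2_0, ?_⟩⟩
      · rw [a2_0, h01, h10, div_one]
      · rw [p2_0, hp]; decide
    · exact absurd rfl hy
    · refine ⟨fun h => absurd (h12 ▸ h) hb, fun _ => ⟨?_, b2_2, ?_⟩⟩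
      · rw [a2_2, h21, h12, one_div]
      · rw [p2_2, hp]; decide
  have E23 : IsIsoReflexion 2 v v₃ := by
    refine ⟨(Rv 2).1, h22, a3_2, b3_2, by rw [p3_2, hp], ?_⟩
    intro y hy
    fin_cases y <;> simp only [Fin.isValue, Fin.zero_eta, Fin.mk_one, Fin.reduceFinMk]
    · refine ⟨fun h => absurd (h20 ▸ h) hc, fun _ => ⟨?_, b3_0, ?_⟩⟩
      · rw [a3_0, h02, h20, one_div]
      · rw [p3_0, hp]; decide
    · refine ⟨fun h => by rw [h21] at h; exact absurd h one_ne_zero, fun _ => ⟨?_, b3_1, ?_⟩⟩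
      · rw [a3_1, h12, h21, div_one]
      · rw [p3_1, hp]; decide
    · exact absurd rfl hy
  have E10 : IsIsoReflexion 0 v₁ v := by
    refine ⟨Or.inl ⟨c100, p1_0⟩, c100, by rw [a1_0, neg_neg], by rw [b1_0, neg_neg],
      by rw [p1_0, hp], ?_⟩
    intro y hy
    fin_cases y <;> simp only [Fin.isValue, Fin.zero_eta, Fin.mk_one, Fin.reduceFinMk]
    · exact absurd rfl hy
    · refine ⟨fun h => by rw [c101, neg_eq_zero] at h; exact absurd h ha, fun _ => ⟨?_, ?_, ?_⟩⟩
      · rw [a1_1, a1_0, c110, c101, neg_div_neg_eq, one_div]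
        module
      · rw [b1_1, b1_0]; abel
      · rw [p1_1, hp]; decide
    · refine ⟨fun h => by rw [c102] at h; norm_num at h, fun _ => ⟨?_, ?_, ?_⟩⟩
      · rw [a1_2, a1_0, c120, c102, neg_div_neg_eq, div_one]
        module
      · rw [b1_2, b1_0]; abel
      · rw [p1_2, hp]; decide
  have E21 : IsIsoReflexion 1 v₂ v := by
    refine ⟨Or.inl ⟨c211, p2_1⟩, c211, by rw [a2_1, neg_neg], by rw [b2_1, neg_neg],
      by rw [p2_1, hp], ?_⟩
    intro y hy
    fin_cases y <;> simp only [Fin.isValue, Fin.zero_eta, Fin.mk_one, Fin.reduceFinMk]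
    · refine ⟨fun h => by rw [c210] at h; norm_num at h, fun _ => ⟨?_, ?_, ?_⟩⟩
      · rw [a2_0, a2_1, c201, c210, neg_div_neg_eq, div_one]
        module
      · rw [b2_0, b2_1]; abel
      · rw [p2_0, hp]; decide
    · exact absurd rfl hy
    · refine ⟨fun h => by rw [c212, neg_eq_zero] at h; exact absurd h hb, fun _ => ⟨?_, ?_, ?_⟩⟩
      · rw [a2_2, a2_1, c221, c212, neg_div_neg_eq, one_div]
        module
      · rw [b2_2, b2_1]; abel
      · rw [p2_2, hp]; decide
  have E32 : IsIsoReflexion 2 v₃ v := by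
    refine ⟨Or.inl ⟨c322, p3_2⟩, c322, by rw [a3_2, neg_neg], by rw [b3_2, neg_neg],
      by rw [p3_2, hp], ?_⟩
    intro y hy
    fin_cases y <;> simp only [Fin.isValue, Fin.zero_eta, Fin.mk_one, Fin.reduceFinMk]
    · refine ⟨fun h => by rw [c320, neg_eq_zero] at h; exact absurd h hc, fun _ => ⟨?_, ?_, ?_⟩⟩
      · rw [a3_0, a3_2, c302, c320, neg_div_neg_eq, one_div]
        module
      · rw [b3_0, b3_2]; abel
      · rw [p3_0, hp]; decide
    · refine ⟨fun h => by rw [c321] at h; norm_num at h, fun _ => ⟨?_, ?_, ?_⟩⟩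
      · rw [a3_1, a3_2, c312, c321, neg_div_neg_eq, div_one]
        module
      · rw [b3_1, b3_2]; abel
      · rw [p3_1, hp]; decide
    · exact absurd rfl hy
  have hS : Spine v = {v, v₁, v₂, v₃} := by
    apply Set.Subset.antisymm
    · rintro u ⟨ms, hpath⟩
      have main : ∀ (w : RootDatum (Fin 3) H) (l : List (Fin 3)) (u' : RootDatum (Fin 3) H),
          IsIsoPath w l u' → w ∈ ({v, v₁, v₂, v₃} : Set (RootDatum (Fin 3) H)) →
          u' ∈ ({v, v₁, v₂, v₃} : Set (RootDatum (Fin 3) H)) := by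
        intro w l u' hpath
        induction hpath with
        | nil => exact id
        | @cons w w' u'' x l hr _ ih =>
          intro hw
          apply ih
          simp only [Set.mem_insert_iff, Set.mem_singleton_iff] at hw ⊢
          rcases hw with rfl | rfl | rfl | rfl
          · fin_cases x
            · exact Or.inr (Or.inl (iso_unique hr E01))
            · exact Or.inr (Or.inr (Or.inl (iso_unique hr E12)))
            · exact Or.inr (Or.inr (Or.inr (iso_unique hr E23)))
          · fin_cases x
            · exact Or.inl (iso_unique hr E10)
            · have hzz : cartan w 1 1 = 0 := hr.2.1
              rw [c111] at hzz; exact absurd hzz two_ne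
            · have hzz : cartan w 2 2 = 0 := hr.2.1
              rw [c122] at hzz; exact absurd hzz (mul_ne_zero two_ne hc)
          · fin_cases x
            · have hzz : cartan w 0 0 = 0 := hr.2.1
              rw [c200] at hzz; exact absurd hzz (mul_ne_zero two_ne ha)
            · exact Or.inl (iso_unique hr E21)
            · have hzz : cartan w 2 2 = 0 := hr.2.1
              rw [c222] at hzz; exact absurd hzz two_ne
          · fin_cases x
            · have hzz : cartan w 0 0 = 0 := hr.2.1
              rw [c300] at hzz; exact absurd hzz two_ne
            · have hzz : cartan w 1 1 = 0 := hr.2.1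
              rw [c311] at hzz; exact absurd hzz (mul_ne_zero two_ne hb)
            · exact Or.inl (iso_unique hr E32)
      exact main v ms u hpath (Or.inl rfl)
    · rintro u hu
      simp only [Set.mem_insert_iff, Set.mem_singleton_iff] at hu
      rcases hu with rfl | rfl | rfl | rfl
      · exact ⟨[], IsIsoPath.nil _⟩
      · exact ⟨[0], IsIsoPath.cons E01 (IsIsoPath.nil _)⟩
      · exact ⟨[1], IsIsoPath.cons E12 (IsIsoPath.nil _)⟩
      · exact ⟨[2], IsIsoPath.cons E23 (IsIsoPath.nil _)⟩
  have pdiff : ∀ (w w' : RootDatum (Fin 3) H) (i : Fin 3), w.p i ≠ w'.p i → w ≠ w' :=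
    fun w w' i hne heq => hne (by rw [heq])
  have d01 : v ≠ v₁ := pdiff _ _ 1 (by rw [hp, p1_1]; decide)
  have d02 : v ≠ v₂ := pdiff _ _ 0 (by rw [hp, p2_0]; decide)
  have d03 : v ≠ v₃ := pdiff _ _ 0 (by rw [hp, p3_0]; decide)
  have d12 : v₁ ≠ v₂ := pdiff _ _ 0 (by rw [p1_0, p2_0]; decide)
  have d13 : v₁ ≠ v₃ := pdiff _ _ 0 (by rw [p1_0, p3_0]; decide)
  have d23 : v₂ ≠ v₃ := pdiff _ _ 1 (by rw [p2_1, p3_1]; decide)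
  have hcard : (Spine v).ncard = 4 := by
    rw [hS, Set.ncard_insert_of_notMem (by simp [d01, d02, d03]),
      Set.ncard_insert_of_notMem (by simp [d12, d13]),
      Set.ncard_insert_of_notMem (by simp [d23]), Set.ncard_singleton]
  have range1 : Set.range v₁.b =
      {-v.b 0, (v.b 0 + v.b 1 + v.b 2) - v.b 1, (v.b 0 + v.b 1 + v.b 2) - v.b 2} := by
    apply Set.Subset.antisymm
    · rintro μ ⟨i, rfl⟩
      simp only [Set.mem_insert_iff, Set.mem_singleton_iff]
      fin_cases i <;> simp only [Fin.isValue, Fin.zero_eta, Fin.mk_one, Fin.reduceFinMk]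
      · exact Or.inl b1_0
      · exact Or.inr (Or.inr (by rw [b1_1]; abel))
      · exact Or.inr (Or.inl (by rw [b1_2]; abel))
    · rintro μ hμ
      simp only [Set.mem_insert_iff, Set.mem_singleton_iff] at hμ
      rcases hμ with rfl | rfl | rfl
      · exact ⟨0, b1_0⟩
      · exact ⟨2, by rw [b1_2]; abel⟩
      · exact ⟨1, by rw [b1_1]; abel⟩
  have range2 : Set.range v₂.b =
      {-v.b 1, (v.b 0 + v.b 1 + v.b 2) - v.b 0, (v.b 0 + v.b 1 + v.b 2) - v.b 2} := by
    apply Set.Subset.antisymm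
    · rintro μ ⟨i, rfl⟩
      simp only [Set.mem_insert_iff, Set.mem_singleton_iff]
      fin_cases i <;> simp only [Fin.isValue, Fin.zero_eta, Fin.mk_one, Fin.reduceFinMk]
      · exact Or.inr (Or.inr (by rw [b2_0]; abel))
      · exact Or.inl b2_1
      · exact Or.inr (Or.inl (by rw [b2_2]; abel))
    · rintro μ hμ
      simp only [Set.mem_insert_iff, Set.mem_singleton_iff] at hμ
      rcases hμ with rfl | rfl | rfl
      · exact ⟨1, b2_1⟩
      · exact ⟨2, by rw [b2_2]; abel⟩
      · exact ⟨0, by rw [b2_0]; abel⟩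
  have range3 : Set.range v₃.b =
      {-v.b 2, (v.b 0 + v.b 1 + v.b 2) - v.b 0, (v.b 0 + v.b 1 + v.b 2) - v.b 1} := by
    apply Set.Subset.antisymm
    · rintro μ ⟨i, rfl⟩
      simp only [Set.mem_insert_iff, Set.mem_singleton_iff]
      fin_cases i <;> simp only [Fin.isValue, Fin.zero_eta, Fin.mk_one, Fin.reduceFinMk]
      · exact Or.inr (Or.inr (by rw [b3_0]; abel))
      · exact Or.inr (Or.inl (by rw [b3_1]; abel))
      · exact Or.inl b3_2
    · rintro μ hμ
      simp only [Set.mem_insert_iff, Set.mem_singleton_iff] at hμ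
      rcases hμ with rfl | rfl | rfl
      · exact ⟨2, b3_2⟩
      · exact ⟨1, by rw [b3_1]; abel⟩
      · exact ⟨0, by rw [b3_0]; abel⟩
  have m1 : v₁ ∈ Spine v := ⟨[0], IsIsoPath.cons E01 (IsIsoPath.nil _)⟩
  have m2 : v₂ ∈ Spine v := ⟨[1], IsIsoPath.cons E12 (IsIsoPath.nil _)⟩
  have hSig : SigmaPr v = {(v.b 0 + v.b 1 + v.b 2) - v.b 0, (v.b 0 + v.b 1 + v.b 2) - v.b 1,
      (v.b 0 + v.b 1 + v.b 2) - v.b 2} := by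
    apply Set.Subset.antisymm
    · rintro μ ⟨u, x, hu, hrefl, hne, rfl⟩
      rw [hS] at hu
      simp only [Set.mem_insert_iff, Set.mem_singleton_iff] at hu ⊢
      rcases hu with h | h | h | h <;> rw [h] at hne ⊢
      · fin_cases x
        · exact absurd h00 hne
        · exact absurd h11 hne
        · exact absurd h22 hne
      · fin_cases x <;> simp only [Fin.isValue, Fin.zero_eta, Fin.mk_one, Fin.reduceFinMk]
        · exact absurd c100 hne
        · exact Or.inr (Or.inr (by rw [b1_1]; abel))
        · exact Or.inr (Or.inl (by rw [b1_2]; abel))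
      · fin_cases x <;> simp only [Fin.isValue, Fin.zero_eta, Fin.mk_one, Fin.reduceFinMk]
        · exact Or.inr (Or.inr (by rw [b2_0]; abel))
        · exact absurd c211 hne
        · exact Or.inl (by rw [b2_2]; abel)
      · fin_cases x <;> simp only [Fin.isValue, Fin.zero_eta, Fin.mk_one, Fin.reduceFinMk]
        · exact Or.inr (Or.inl (by rw [b3_0]; abel))
        · exact Or.inl (by rw [b3_1]; abel)
        · exact absurd c322 hne
    · rintro μ hμ
      simp only [Set.mem_insert_iff, Set.mem_singleton_iff] at hμ
      rcases hμ with rfl | rfl | rfl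
      · exact ⟨v₂, 2, m2, R2_2, by rw [c222]; exact two_ne, by rw [b2_2]; abel⟩
      · exact ⟨v₁, 2, m1, R1_2, by rw [c122]; exact mul_ne_zero two_ne hc,
          by rw [b1_2]; abel⟩
      · exact ⟨v₁, 1, m1, R1_1, by rw [c111]; exact two_ne, by rw [b1_1]; abel⟩
  have key : ∀ (μ : Module.Dual ℂ H) (e : Fin 3 → ℤ),
      μ = ∑ i, (e i : ℂ) • v.b i →
      ((∑ i, e i : ℤ) : ZMod 2) = 0 →
      (∃ u x, u ∈ Skeleton v ∧ Reflectable u x ∧ cartan u x x ≠ 0 ∧ u.b x = μ) →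
      rootParity v μ = 0 := by
    intro μ e hμ he hex
    obtain ⟨hu, hrefl, hne, hbx⟩ := hex.choose_spec.choose_spec
    obtain ⟨k, hk, hkp⟩ := skeleton_parity v hp _ hu hex.choose_spec.choose
    have h0 : ∀ i, ((k i : ℂ) - (e i : ℂ)) = 0 := by
      apply Fintype.linearIndependent_iff.mp v.lin_indep_b
      simp only [sub_smul, Finset.sum_sub_distrib]
      rw [← hk, ← hμ, hbx, sub_self]
    have hkeq : ∀ i, k i = e i := by
      intro i
      have := sub_eq_zero.mp (h0 i)
      exact_mod_cast this
    have hsum : (∑ i, k i) = ∑ i, e i := Finset.sum_congr rfl fun i _ => hkeq i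
    unfold rootParity
    rw [dif_pos hex, hkp, hsum, he]
  have hpar0 : rootParity v ((v.b 0 + v.b 1 + v.b 2) - v.b 0) = 0 := by
    refine key _ ![0, 1, 1] ?_ (by decide)
      ⟨v₂, 2, spine_sub_skeleton m2, R2_2, by rw [c222]; exact two_ne, by rw [b2_2]; abel⟩
    rw [Fin.sum_univ_three]
    simp only [Matrix.cons_val_zero, Matrix.cons_val_one, Matrix.head_cons,
      Matrix.cons_val_two, Matrix.tail_cons, Int.cast_zero, Int.cast_one, zero_smul,
      one_smul, zero_add]
    abel
  have hpar1 : rootParity v ((v.b 0 + v.b 1 + v.b 2) - v.b 1) = 0 := by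
    refine key _ ![1, 0, 1] ?_ (by decide)
      ⟨v₁, 2, spine_sub_skeleton m1, R1_2, by rw [c122]; exact mul_ne_zero two_ne hc,
        by rw [b1_2]; abel⟩
    rw [Fin.sum_univ_three]
    simp only [Matrix.cons_val_zero, Matrix.cons_val_one, Matrix.head_cons,
      Matrix.cons_val_two, Matrix.tail_cons, Int.cast_zero, Int.cast_one, zero_smul,
      one_smul, add_zero]
    abel
  have hpar2 : rootParity v ((v.b 0 + v.b 1 + v.b 2) - v.b 2) = 0 := by
    refine key _ ![1, 1, 0] ?_ (by decide)
      ⟨v₁, 1, spine_sub_skeleton m1, R1_1, by rw [c111]; exact two_ne,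
        by rw [b1_1]; abel⟩
    rw [Fin.sum_univ_three]
    simp only [Matrix.cons_val_zero, Matrix.cons_val_one, Matrix.head_cons,
      Matrix.cons_val_two, Matrix.tail_cons, Int.cast_zero, Int.cast_one, zero_smul,
      one_smul, add_zero]
    abel
  have hpi : piSet v = {(v.b 0 + v.b 1 + v.b 2) - v.b 0, (v.b 0 + v.b 1 + v.b 2) - v.b 1,
      (v.b 0 + v.b 1 + v.b 2) - v.b 2} := by
    apply Set.Subset.antisymm
    · rintro μ hμ
      simp only [piSet, Set.mem_union, Set.mem_setOf_eq] at hμ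
      rcases hμ with ⟨h1, -⟩ | ⟨α, hα, hαp, rfl⟩
      · rw [← hSig]; exact h1
      · exfalso
        rw [hSig] at hα
        simp only [Set.mem_insert_iff, Set.mem_singleton_iff] at hα
        rcases hα with rfl | rfl | rfl
        · rw [hpar0] at hαp; exact absurd hαp (by decide)
        · rw [hpar1] at hαp; exact absurd hαp (by decide)
        · rw [hpar2] at hαp; exact absurd hαp (by decide)
    · intro μ hμ
      have hμ' : μ ∈ SigmaPr v := by rw [hSig]; exact hμ
      simp only [Set.mem_insert_iff, Set.mem_singleton_iff] at hμ
      refine Set.mem_union_left _ ?_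
      refine ⟨hμ', ?_⟩
      rcases hμ with rfl | rfl | rfl
      exacts [hpar0, hpar1, hpar2]
  exact ⟨Rv, v₁, v₂, v₃, E01, E12, E23, hS, hcard, range1, range2, range3, hSig, hpi⟩
end KMS
end
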